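/- arXiv:1206.3094 — 13 statements merged into one kernel-verified Lean document; each statement's English description precedes it below -/
import Mathlib

section
/- Let f ∈ L²(ℝ) and Δ > 0, and define F_Δ(u) = Σ_{j∈ℤ} |f(u + jΔ)| for u ∈ [0,Δ]. Then Σ_{h∈ℤ} ∫_ℝ |f(-s)| |f(hΔ - s)| ds = ∫_0^Δ F_Δ(u)² du (as an identity in [0,∞]). In particular, if F_Δ ∈ L²([0,Δ]), then the autocovariance function γ_f(h) = σ² ∫_ℝ f(-s) f(h-s) ds (σ² > 0 a fixed constant) satisfies Σ_{h∈ℤ} |γ_f(hΔ)| < ∞. -/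
open MeasureTheory
open scoped ENNReal

/-- The autocovariance function of a moving average process with kernel `f`
and driving Lévy process of variance `σ2`. -/
noncomputable def autocov (f : ℝ → ℝ) (σ2 : ℝ) (h : ℝ) : ℝ :=
  σ2 * ∫ s : ℝ, f (-s) * f (h - s)

/-- For `f ∈ L²(ℝ)` and `Δ > 0`, with `F_Δ(u) = ∑_{j∈ℤ} |f(u+jΔ)|`,
one has `∑_{h∈ℤ} ∫ |f(-s)||f(hΔ-s)| ds = ∫₀^Δ F_Δ(u)² du` as an identity in `[0,∞]`;
and if `F_Δ ∈ L²([0,Δ])`, then `∑_{h∈ℤ} |γ_f(hΔ)| < ∞`. -/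
theorem statement0 (f : ℝ → ℝ) (hf_meas : Measurable f) (hf : MemLp f 2 volume)
    (Δ : ℝ) (hΔ : 0 < Δ) (σ2 : ℝ) (hσ2 : 0 < σ2) :
    (∑' h : ℤ, ∫⁻ s : ℝ, ENNReal.ofReal (|f (-s)| * |f ((h : ℝ) * Δ - s)|))
      = ∫⁻ u in Set.Ioc (0 : ℝ) Δ,
          (∑' j : ℤ, ENNReal.ofReal |f (u + (j : ℝ) * Δ)|) ^ 2
    ∧ ((∫⁻ u in Set.Ioc (0 : ℝ) Δ,
          (∑' j : ℤ, ENNReal.ofReal |f (u + (j : ℝ) * Δ)|) ^ 2) < ∞ →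
        Summable (fun h : ℤ => |autocov f σ2 ((h : ℝ) * Δ)|)) := by
  have hG : Measurable fun t : ℝ => ENNReal.ofReal |f t| :=
    ENNReal.measurable_ofReal.comp hf_meas.abs
  have hmeas : ∀ c : ℝ, Measurable fun u : ℝ => ENNReal.ofReal |f (u + c)| :=
    fun c => hG.comp (measurable_id.add_const c)
  -- the equivalence between ℤ and zmultiples Δ
  have inj : Function.Injective (fun n : ℤ => n • Δ) := (zsmul_left_strictMono hΔ).injective
  have hbij : Function.Bijective
      (Set.codRestrict (fun n : ℤ => n • Δ) (AddSubgroup.zmultiples Δ)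
        (fun n => AddSubgroup.zsmul_mem_zmultiples Δ n)) := by
    constructor
    · exact fun a b hab => inj (congrArg Subtype.val hab)
    · rintro ⟨x, hx⟩
      obtain ⟨k, hk⟩ := AddSubgroup.mem_zmultiples_iff.mp hx
      exact ⟨k, Subtype.ext hk⟩
  let e : ℤ ≃ AddSubgroup.zmultiples Δ := Equiv.ofBijective _ hbij
  have key : ∀ h : ℤ,
      (∫⁻ s : ℝ, ENNReal.ofReal (|f (-s)| * |f ((h : ℝ) * Δ - s)|))
        = ∑' j : ℤ, ∫⁻ u in Set.Ioc (0:ℝ) Δ,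
            ENNReal.ofReal |f (u + (j : ℝ) * Δ)| *
              ENNReal.ofReal |f (u + ((j : ℝ) + (h : ℝ)) * Δ)| := by
    intro h
    have hφ : Measurable fun t : ℝ =>
        ENNReal.ofReal |f t| * ENNReal.ofReal |f ((h : ℝ) * Δ + t)| :=
      hG.mul (hG.comp (measurable_const.add measurable_id))
    have h1 : (∫⁻ s : ℝ, ENNReal.ofReal (|f (-s)| * |f ((h : ℝ) * Δ - s)|))
        = ∫⁻ t : ℝ, ENNReal.ofReal |f t| * ENNReal.ofReal |f ((h : ℝ) * Δ + t)| := by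
      rw [← (Measure.measurePreserving_neg (volume : Measure ℝ)).lintegral_comp hφ]
      refine lintegral_congr fun s => ?_
      rw [ENNReal.ofReal_mul (abs_nonneg _), sub_eq_add_neg]
    have h2 := (isAddFundamentalDomain_Ioc hΔ 0 volume).lintegral_eq_tsum''
        (fun t => ENNReal.ofReal |f t| * ENNReal.ofReal |f ((h : ℝ) * Δ + t)|)
    rw [h1, h2, ← e.tsum_eq]
    refine tsum_congr fun j => ?_
    have hco : ((e j : ℝ)) = j • Δ := rfl
    rw [zero_add]
    refine setLIntegral_congr_fun measurableSet_Ioc (fun u hu => ?_)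
    have hv : (e j) +ᵥ u = (j : ℝ) * Δ + u := by
      rw [AddSubmonoid.vadd_def, hco, vadd_eq_add, zsmul_eq_mul]
    rw [hv, show (j : ℝ) * Δ + u = u + (j : ℝ) * Δ by ring,
      show (h : ℝ) * Δ + (u + (j : ℝ) * Δ) = u + ((j : ℝ) + (h : ℝ)) * Δ by ring]
  have EQ : (∑' h : ℤ, ∫⁻ s : ℝ, ENNReal.ofReal (|f (-s)| * |f ((h : ℝ) * Δ - s)|))
      = ∫⁻ u in Set.Ioc (0 : ℝ) Δ,
          (∑' j : ℤ, ENNReal.ofReal |f (u + (j : ℝ) * Δ)|) ^ 2 := by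
    calc (∑' h : ℤ, ∫⁻ s : ℝ, ENNReal.ofReal (|f (-s)| * |f ((h : ℝ) * Δ - s)|))
        = ∑' h : ℤ, ∑' j : ℤ, ∫⁻ u in Set.Ioc (0:ℝ) Δ,
            ENNReal.ofReal |f (u + (j : ℝ) * Δ)| *
              ENNReal.ofReal |f (u + ((j : ℝ) + (h : ℝ)) * Δ)| := tsum_congr key
      _ = ∑' h : ℤ, ∫⁻ u in Set.Ioc (0:ℝ) Δ, ∑' j : ℤ,
            ENNReal.ofReal |f (u + (j : ℝ) * Δ)| *
              ENNReal.ofReal |f (u + ((j : ℝ) + (h : ℝ)) * Δ)| :=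
          tsum_congr fun h => (lintegral_tsum fun j =>
            ((hmeas _).mul (hmeas _)).aemeasurable).symm
      _ = ∫⁻ u in Set.Ioc (0:ℝ) Δ, ∑' h : ℤ, ∑' j : ℤ,
            ENNReal.ofReal |f (u + (j : ℝ) * Δ)| *
              ENNReal.ofReal |f (u + ((j : ℝ) + (h : ℝ)) * Δ)| :=
          (lintegral_tsum fun h => (Measurable.ennreal_tsum fun j =>
            (hmeas _).mul (hmeas _)).aemeasurable).symm
      _ = ∫⁻ u in Set.Ioc (0 : ℝ) Δ,
            (∑' j : ℤ, ENNReal.ofReal |f (u + (j : ℝ) * Δ)|) ^ 2 := by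
          refine lintegral_congr fun u => ?_
          set A : ℤ → ℝ≥0∞ := fun k => ENNReal.ofReal |f (u + (k : ℝ) * Δ)| with hA
          have hAc : ∀ j h : ℤ,
              ENNReal.ofReal |f (u + ((j : ℝ) + (h : ℝ)) * Δ)| = A (j + h) := by
            intro j h; simp only [hA]; push_cast; ring_nf
          calc (∑' h : ℤ, ∑' j : ℤ,
                ENNReal.ofReal |f (u + (j : ℝ) * Δ)| *
                  ENNReal.ofReal |f (u + ((j : ℝ) + (h : ℝ)) * Δ)|)
              = ∑' j : ℤ, ∑' h : ℤ, A j * A (j + h) := by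
                rw [ENNReal.tsum_comm]
                exact tsum_congr fun j => tsum_congr fun h => by rw [hAc]
            _ = ∑' j : ℤ, A j * ∑' h : ℤ, A (j + h) :=
                tsum_congr fun j => ENNReal.tsum_mul_left
            _ = ∑' j : ℤ, A j * ∑' k : ℤ, A k := tsum_congr fun j => by
                congr 1
                simpa using (Equiv.addLeft j).tsum_eq A
            _ = (∑' k : ℤ, A k) ^ 2 := by rw [ENNReal.tsum_mul_right, sq]
  refine ⟨EQ, fun hfin => ?_⟩
  have hsum : (∑' h : ℤ, ∫⁻ s : ℝ, ENNReal.ofReal (|f (-s)| * |f ((h : ℝ) * Δ - s)|)) ≠ ∞ := by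
    rw [EQ]; exact hfin.ne
  have h1 : Summable fun h : ℤ =>
      (∫⁻ s : ℝ, ENNReal.ofReal (|f (-s)| * |f ((h : ℝ) * Δ - s)|)).toReal :=
    ENNReal.summable_toReal hsum
  refine Summable.of_nonneg_of_le (fun h => abs_nonneg _) (fun h => ?_) (h1.mul_left σ2)
  rw [autocov, abs_mul, abs_of_pos hσ2]
  refine mul_le_mul_of_nonneg_left ?_ hσ2.le
  calc |∫ s : ℝ, f (-s) * f ((h : ℝ) * Δ - s)|
      ≤ (∫⁻ s : ℝ, ENNReal.ofReal ‖f (-s) * f ((h : ℝ) * Δ - s)‖).toReal := by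
        simpa [Real.norm_eq_abs] using
          norm_integral_le_lintegral_norm (μ := volume)
            (fun s : ℝ => f (-s) * f ((h : ℝ) * Δ - s))
    _ = (∫⁻ s : ℝ, ENNReal.ofReal (|f (-s)| * |f ((h : ℝ) * Δ - s)|)).toReal := by
        simp [Real.norm_eq_abs, abs_mul]
end

section
/- Let f ∈ L²(ℝ), Δ > 0 and σ² > 0, and suppose that F_Δ(u) = Σ_{j∈ℤ} |f(u + jΔ)| belongs to L²([0,Δ]). Then Σ_{j∈ℤ} γ_f(jΔ) converges absolutely and Σ_{j∈ℤ} γ_f(jΔ) = σ² ∫_0^Δ ( Σ_{j∈ℤ} f(u + jΔ) )² du. -/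
open MeasureTheory
open scoped ENNReal

lemma shift_setIntegral (g : ℝ → ℝ) (c a b : ℝ) :
    ∫ x in Set.Ioc a b, g (x + c) = ∫ x in Set.Ioc (a + c) (b + c), g x := by
  have hpre : (· + c) ⁻¹' Set.Ioc (a + c) (b + c) = Set.Ioc a b := by
    rw [Set.preimage_add_const_Ioc]
    simp
  have h := (measurePreserving_add_right volume c).setIntegral_preimage_emb
      (measurableEmbedding_addRight c) g (Set.Ioc (a + c) (b + c))
  rw [hpre] at h
  exact h

lemma autocov_eq (f : ℝ → ℝ) (σ2 h : ℝ) :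
    autocov f σ2 h = σ2 * ∫ t : ℝ, f t * f (t + h) := by
  unfold autocov
  congr 1
  have key := integral_neg_eq_self (fun s : ℝ => f s * f (h + s)) (volume : Measure ℝ)
  calc ∫ s : ℝ, f (-s) * f (h - s) = ∫ s : ℝ, f (-s) * f (h + -s) := by
        simp [sub_eq_add_neg]
    _ = ∫ s : ℝ, f s * f (h + s) := key
    _ = ∫ t : ℝ, f t * f (t + h) := by simp [add_comm]

lemma integrable_mul_shift {f : ℝ → ℝ} (hf_meas : Measurable f)
    (hf : MemLp f 2 volume) (c : ℝ) :
    Integrable (fun t : ℝ => f t * f (t + c)) volume := by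
  have h2 : MemLp (fun t : ℝ => f (t + c)) 2 volume :=
    hf.comp_measurePreserving (measurePreserving_add_right volume c)
  have hbound : Integrable (fun t : ℝ => (f t ^ 2 + f (t + c) ^ 2) / 2) volume :=
    (hf.integrable_sq.add h2.integrable_sq).div_const 2
  apply hbound.mono
    ((hf_meas.mul (hf_meas.comp (measurable_add_const c))).aestronglyMeasurable)
  filter_upwards with t
  rw [Real.norm_eq_abs, Real.norm_eq_abs]
  have h1 : |f t * f (t + c)| ≤ (f t ^ 2 + f (t + c) ^ 2) / 2 := by
    rw [abs_mul]
    nlinarith [sq_nonneg (|f t| - |f (t + c)|), sq_abs (f t), sq_abs (f (t + c))]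
  exact h1.trans (le_abs_self _)

/-- if `f ∈ L²(ℝ)`, `Δ > 0`, `σ² > 0` and the periodization
`F_Δ(u) = ∑_{j∈ℤ} |f(u+jΔ)|` is in `L²([0,Δ])`, then `∑_{j∈ℤ} γ_f(jΔ)` converges
absolutely and equals `σ² ∫₀^Δ (∑_{j∈ℤ} f(u+jΔ))² du`. -/
theorem statement1 (f : ℝ → ℝ) (hf_meas : Measurable f) (hf : MemLp f 2 volume)
    (Δ : ℝ) (hΔ : 0 < Δ) (σ2 : ℝ) (hσ2 : 0 < σ2)
    (hF : (∫⁻ u in Set.Ioc (0 : ℝ) Δ,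
        (∑' j : ℤ, ENNReal.ofReal |f (u + (j : ℝ) * Δ)|) ^ 2) < ∞) :
    Summable (fun j : ℤ => |autocov f σ2 ((j : ℝ) * Δ)|)
    ∧ (∑' j : ℤ, autocov f σ2 ((j : ℝ) * Δ))
        = σ2 * ∫ u in Set.Ioc (0 : ℝ) Δ, (∑' j : ℤ, f (u + (j : ℝ) * Δ)) ^ 2 := by
  have hm : ∀ k : ℤ, Measurable (fun u : ℝ => f (u + (k : ℝ) * Δ)) :=
    fun k => hf_meas.comp (measurable_add_const _)
  set Φ : ℝ → ℝ≥0∞ := fun u => ∑' j : ℤ, ENNReal.ofReal |f (u + (j : ℝ) * Δ)| with hΦdef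
  set G : ℤ × ℤ → ℝ≥0∞ := fun p => ∫⁻ u in Set.Ioc (0 : ℝ) Δ,
      ENNReal.ofReal |f (u + (p.1 : ℝ) * Δ)| * ENNReal.ofReal |f (u + (p.2 : ℝ) * Δ)| with hGdef
  have hGm : ∀ p : ℤ × ℤ, Measurable (fun u : ℝ =>
      ENNReal.ofReal |f (u + (p.1 : ℝ) * Δ)| * ENNReal.ofReal |f (u + (p.2 : ℝ) * Δ)|) :=
    fun p => (ENNReal.measurable_ofReal.comp ((hm p.1).abs)).mul
      (ENNReal.measurable_ofReal.comp ((hm p.2).abs))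
  have hGsum : ∑' p : ℤ × ℤ, G p = ∫⁻ u in Set.Ioc (0 : ℝ) Δ, (Φ u) ^ 2 := by
    rw [← lintegral_tsum (fun p => (hGm p).aemeasurable)]
    apply lintegral_congr
    intro u
    rw [ENNReal.tsum_prod (f := fun (k : ℤ) (m : ℤ) =>
      ENNReal.ofReal |f (u + (k : ℝ) * Δ)| * ENNReal.ofReal |f (u + (m : ℝ) * Δ)|)]
    simp_rw [ENNReal.tsum_mul_left, ENNReal.tsum_mul_right]
    rw [sq]
  have hGfin : ∑' p : ℤ × ℤ, G p ≠ ∞ := by rw [hGsum]; exact hF.ne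
  have hGp_fin : ∀ p : ℤ × ℤ, G p < ∞ :=
    fun p => lt_of_le_of_lt (ENNReal.le_tsum p) (lt_top_iff_ne_top.2 hGfin)
  -- nnorm of product equals G integrand
  have hnn : ∀ (p : ℤ × ℤ) (u : ℝ),
      (‖f (u + (p.1 : ℝ) * Δ) * f (u + (p.2 : ℝ) * Δ)‖₊ : ℝ≥0∞)
        = ENNReal.ofReal |f (u + (p.1 : ℝ) * Δ)| * ENNReal.ofReal |f (u + (p.2 : ℝ) * Δ)| := by
    intro p u
    rw [← enorm_eq_nnnorm, Real.enorm_eq_ofReal_abs, abs_mul, ENNReal.ofReal_mul (abs_nonneg _)]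
  have hint : ∀ p : ℤ × ℤ, IntegrableOn
      (fun u : ℝ => f (u + (p.1 : ℝ) * Δ) * f (u + (p.2 : ℝ) * Δ)) (Set.Ioc 0 Δ) volume := by
    intro p
    refine ⟨((hm p.1).mul (hm p.2)).aestronglyMeasurable, ?_⟩
    have : HasFiniteIntegral (fun u : ℝ => f (u + (p.1 : ℝ) * Δ) * f (u + (p.2 : ℝ) * Δ))
        (volume.restrict (Set.Ioc 0 Δ)) := by
      rw [hasFiniteIntegral_def]
      calc ∫⁻ u in Set.Ioc (0:ℝ) Δ, (‖f (u + (p.1 : ℝ) * Δ) * f (u + (p.2 : ℝ) * Δ)‖₊ : ℝ≥0∞)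
          = G p := by apply lintegral_congr; intro u; exact hnn p u
        _ < ∞ := hGp_fin p
    exact this
  set A : ℤ × ℤ → ℝ := fun p => ∫ u in Set.Ioc (0 : ℝ) Δ,
      |f (u + (p.1 : ℝ) * Δ)| * |f (u + (p.2 : ℝ) * Δ)| with hAdef
  have hA_eq : ∀ p : ℤ × ℤ, A p = (G p).toReal := by
    intro p
    simp only [hAdef]
    rw [integral_eq_lintegral_of_nonneg_ae
      (Filter.Eventually.of_forall fun u => mul_nonneg (abs_nonneg _) (abs_nonneg _))
      (((hm p.1).abs.mul (hm p.2).abs).aestronglyMeasurable)]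
    congr 1
    apply lintegral_congr
    intro u
    rw [ENNReal.ofReal_mul (abs_nonneg _)]
  have hAsum : Summable A := by
    refine (ENNReal.summable_toReal hGfin).congr fun p => ?_
    exact (hA_eq p).symm
  have hAnonneg : ∀ p : ℤ × ℤ, 0 ≤ A p := fun p =>
    integral_nonneg fun u => mul_nonneg (abs_nonneg _) (abs_nonneg _)
  set g : ℤ × ℤ → ℝ := fun p => ∫ u in Set.Ioc (0 : ℝ) Δ,
      f (u + (p.1 : ℝ) * Δ) * f (u + (p.2 : ℝ) * Δ) with hgdef
  have habs_g : ∀ p : ℤ × ℤ, |g p| ≤ A p := by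
    intro p
    have h1 := norm_integral_le_integral_norm (μ := volume.restrict (Set.Ioc (0:ℝ) Δ))
      (f := fun u : ℝ => f (u + (p.1 : ℝ) * Δ) * f (u + (p.2 : ℝ) * Δ))
    simpa [Real.norm_eq_abs, abs_mul, hgdef, hAdef] using h1
  have hgsum : Summable g :=
    Summable.of_norm_bounded hAsum fun p => by
      rw [Real.norm_eq_abs]; exact habs_g p
  -- the shear equivalence
  set e : ℤ × ℤ ≃ ℤ × ℤ :=
    (Equiv.prodComm ℤ ℤ).trans (Equiv.prodShear (Equiv.refl ℤ) fun k => Equiv.addLeft k) with hedef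
  have he : ∀ j k : ℤ, e (j, k) = (k, k + j) := fun j k => rfl
  -- partition of ℝ
  set sset : ℤ → Set ℝ := fun k => Set.Ioc ((k : ℝ) * Δ) ((k : ℝ) * Δ + Δ) with hsdef
  have hunion : (⋃ k : ℤ, sset k) = Set.univ := by
    have h := iUnion_Ioc_add_zsmul hΔ (0 : ℝ)
    simp only [zero_add, zsmul_eq_mul] at h
    rw [← h]
    apply Set.iUnion_congr
    intro k
    rw [hsdef]
    congr 1
    push_cast
    ring
  have hdisj : Pairwise (Function.onFun Disjoint sset) := by
    have h := Set.pairwise_disjoint_Ioc_add_zsmul (0 : ℝ) Δ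
    simp only [zero_add, zsmul_eq_mul] at h
    have heq : sset = fun n : ℤ => Set.Ioc ((n : ℝ) * Δ) (((n : ℤ) + 1 : ℝ) * Δ) := by
      funext n
      rw [hsdef]
      congr 1
      push_cast
      ring
    rw [heq]
    convert h using 3 with m n
    push_cast
    ring
  have hIint : ∀ j : ℤ, Integrable (fun t : ℝ => f t * f (t + (j : ℝ) * Δ)) volume :=
    fun j => integrable_mul_shift hf_meas hf _
  have hdecomp : ∀ j : ℤ, HasSum (fun k : ℤ => g (k, k + j))
      (∫ t : ℝ, f t * f (t + (j : ℝ) * Δ)) := by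
    intro j
    have h1 : HasSum (fun k : ℤ => ∫ t in sset k, f t * f (t + (j : ℝ) * Δ))
        (∫ t in ⋃ k : ℤ, sset k, f t * f (t + (j : ℝ) * Δ)) :=
      hasSum_integral_iUnion (fun k => measurableSet_Ioc) hdisj
        (by rw [hunion]; exact (hIint j).integrableOn)
    rw [hunion] at h1
    rw [Measure.restrict_univ] at h1
    convert h1 using 2 with k
    have hshift := shift_setIntegral (fun t => f t * f (t + (j : ℝ) * Δ)) ((k : ℝ) * Δ) 0 Δ
    have harg : ∀ u : ℝ, f (u + ((k + j : ℤ) : ℝ) * Δ) = f ((u + (k : ℝ) * Δ) + (j : ℝ) * Δ) := by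
      intro u; congr 1; push_cast; ring
    calc g (k, k + j)
        = ∫ u in Set.Ioc (0 : ℝ) Δ, f (u + (k : ℝ) * Δ) * f ((u + (k : ℝ) * Δ) + (j : ℝ) * Δ) := by
          rw [hgdef]; simp only [harg]
      _ = ∫ t in Set.Ioc (0 + (k : ℝ) * Δ) (Δ + (k : ℝ) * Δ), f t * f (t + (j : ℝ) * Δ) := hshift
      _ = ∫ t in sset k, f t * f (t + (j : ℝ) * Δ) := by rw [hsdef, zero_add, add_comm Δ]
  -- summability of fibers
  have hfib_inj : ∀ j : ℤ, Function.Injective (fun k : ℤ => ((k, k + j) : ℤ × ℤ)) := by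
    intro j a b hab
    simpa using congrArg Prod.fst hab
  have hMk : ∀ j : ℤ, Summable (fun k : ℤ => A (k, k + j)) :=
    fun j => hAsum.comp_injective (hfib_inj j)
  set M : ℤ → ℝ := fun j => ∑' k : ℤ, A (k, k + j) with hMdef
  have hAe : HasSum (A ∘ e) (∑' p, A p) := (e.hasSum_iff).2 hAsum.hasSum
  have hMsum : HasSum M (∑' p, A p) :=
    HasSum.prod_fiberwise hAe fun j => (hMk j).hasSum
  have hge : HasSum (g ∘ e) (∑' p, g p) := (e.hasSum_iff).2 hgsum.hasSum
  have hIsum : HasSum (fun j : ℤ => ∫ t : ℝ, f t * f (t + (j : ℝ) * Δ)) (∑' p, g p) :=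
    HasSum.prod_fiberwise hge fun j => hdecomp j
  -- bound |I j| ≤ M j
  have hgabs_sum : ∀ j : ℤ, Summable (fun k : ℤ => |g (k, k + j)|) := fun j =>
    Summable.of_nonneg_of_le (fun k => abs_nonneg _) (fun k => habs_g _) (hMk j)
  have hI_le : ∀ j : ℤ, |∫ t : ℝ, f t * f (t + (j : ℝ) * Δ)| ≤ M j := by
    intro j
    rw [← (hdecomp j).tsum_eq]
    calc |∑' k : ℤ, g (k, k + j)| ≤ ∑' k : ℤ, |g (k, k + j)| := by
          simpa [Real.norm_eq_abs] using
            norm_tsum_le_tsum_norm (f := fun k : ℤ => g (k, k + j))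
              (by simpa [Real.norm_eq_abs] using hgabs_sum j)
      _ ≤ M j := Summable.tsum_le_tsum (fun k => habs_g _) (hgabs_sum j) (hMk j)
  have hsummable : Summable (fun j : ℤ => |autocov f σ2 ((j : ℝ) * Δ)|) := by
    refine Summable.of_nonneg_of_le (fun j => abs_nonneg _) (fun j => ?_)
      (hMsum.summable.mul_left σ2)
    rw [autocov_eq, abs_mul, abs_of_pos hσ2]
    exact mul_le_mul_of_nonneg_left (hI_le j) hσ2.le
  refine ⟨hsummable, ?_⟩
  -- second part
  have htsum_eq : (∑' j : ℤ, autocov f σ2 ((j : ℝ) * Δ)) = σ2 * ∑' p : ℤ × ℤ, g p := by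
    calc (∑' j : ℤ, autocov f σ2 ((j : ℝ) * Δ))
        = ∑' j : ℤ, σ2 * ∫ t : ℝ, f t * f (t + (j : ℝ) * Δ) := by
          apply tsum_congr; intro j; exact autocov_eq f σ2 _
      _ = σ2 * ∑' j : ℤ, ∫ t : ℝ, f t * f (t + (j : ℝ) * Δ) := tsum_mul_left
      _ = σ2 * ∑' p : ℤ × ℤ, g p := by rw [hIsum.tsum_eq]
  rw [htsum_eq]
  congr 1
  -- ∑' p, g p = ∫ (∑' j f(u+jΔ))²
  have hswap : ∫ u in Set.Ioc (0 : ℝ) Δ,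
      (∑' p : ℤ × ℤ, f (u + (p.1 : ℝ) * Δ) * f (u + (p.2 : ℝ) * Δ)) = ∑' p : ℤ × ℤ, g p := by
    apply integral_tsum
    · exact fun p => ((hm p.1).mul (hm p.2)).aestronglyMeasurable
    · rw [show (fun p : ℤ × ℤ => ∫⁻ u in Set.Ioc (0:ℝ) Δ,
          ‖f (u + (p.1 : ℝ) * Δ) * f (u + (p.2 : ℝ) * Δ)‖ₑ) = G from ?_]
      · exact hGfin
      · funext p
        apply lintegral_congr
        intro u
        exact hnn p u
  have hae : ∀ᵐ u ∂(volume.restrict (Set.Ioc (0 : ℝ) Δ)),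
      Summable (fun k : ℤ => ‖f (u + (k : ℝ) * Δ)‖) := by
    have hΦm : Measurable fun u : ℝ => (Φ u) ^ 2 := by
      apply Measurable.pow_const
      exact Measurable.ennreal_tsum fun k => ENNReal.measurable_ofReal.comp (hm k).abs
    have h1 : ∀ᵐ u ∂(volume.restrict (Set.Ioc (0 : ℝ) Δ)), (Φ u) ^ 2 < ∞ :=
      ae_lt_top hΦm hF.ne
    filter_upwards [h1] with u hu
    have hΦu : Φ u ≠ ∞ := by
      intro hc
      rw [hc, ENNReal.top_pow (by norm_num)] at hu
      exact lt_irrefl _ hu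
    have hsum := ENNReal.summable_toReal hΦu
    refine hsum.congr fun k => ?_
    rw [ENNReal.toReal_ofReal (abs_nonneg _), Real.norm_eq_abs]
  have hptwise : (fun u : ℝ => ∑' p : ℤ × ℤ, f (u + (p.1 : ℝ) * Δ) * f (u + (p.2 : ℝ) * Δ))
      =ᵐ[volume.restrict (Set.Ioc (0 : ℝ) Δ)]
      (fun u : ℝ => (∑' j : ℤ, f (u + (j : ℝ) * Δ)) ^ 2) := by
    filter_upwards [hae] with u hu
    rw [sq, tsum_mul_tsum_of_summable_norm hu hu]
  rw [← hswap, integral_congr_ae hptwise]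
end

section
/- Define f : ℝ → ℝ by f(u) = 0 for u ≤ 0, f(u) = 1 for u ∈ [0,1), and f(u) = (1·3···(2j-1))/(2^j j!) · (u-j)^j for u ∈ [j, j+1), j ≥ 1. Then f ∈ L¹(ℝ) ∩ L²(ℝ), for every u ∈ [0,1) one has F_1(u) = Σ_{j∈ℤ} |f(u+j)| = (1-u)^{-1/2}, and F_1 ∈ L¹([0,1]) but F_1 ∉ L²([0,1]). -/
open MeasureTheory
open scoped ENNReal

/-- The kernel `f` of Remark 2.4: `f(u) = 0` for `u < 0`, and
`f(u) = (1·3···(2j-1))/(2^j j!) (u-j)^j` for `u ∈ [j, j+1)`, `j ∈ ℕ`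
(the coefficient being `(2j choose j)/4^j`, the `j`-th binomial coefficient of
`(1-x)^{-1/2}`). -/
noncomputable def remarkKernel (u : ℝ) : ℝ :=
  if u < 0 then 0
  else ((Nat.centralBinom ⌊u⌋₊ : ℝ) / 4 ^ ⌊u⌋₊) * (u - ⌊u⌋₊) ^ ⌊u⌋₊

noncomputable def rkC (j : ℕ) : ℝ := (Nat.centralBinom j : ℝ) / 4 ^ j

lemma rkC_pos (j : ℕ) : 0 < rkC j := by
  have := j.centralBinom_pos
  unfold rkC
  positivity

lemma rkC_zero : rkC 0 = 1 := by simp [rkC, Nat.centralBinom]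

lemma rkC_rec (j : ℕ) : (2 * (j : ℝ) + 2) * rkC (j + 1) = (2 * j + 1) * rkC j := by
  have h := Nat.succ_mul_centralBinom_succ j
  have h' : ((j : ℝ) + 1) * (Nat.centralBinom (j + 1) : ℝ)
      = 2 * (2 * j + 1) * (Nat.centralBinom j : ℝ) := by exact_mod_cast h
  unfold rkC
  have h4 : (4 : ℝ) ^ (j + 1) = 4 * 4 ^ j := by ring
  rw [h4]
  have h4j : (0:ℝ) < 4 ^ j := by positivity
  field_simp
  nlinarith [h', h4j]

lemma rkC_succ_le (j : ℕ) : rkC (j + 1) ≤ rkC j := by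
  have h := rkC_rec j
  have hp := (rkC_pos (j + 1)).le
  nlinarith [rkC_pos j, rkC_pos (j+1)]

lemma rkC_le_one (j : ℕ) : rkC j ≤ 1 := by
  induction j with
  | zero => simp [rkC_zero]
  | succ n ih => exact (rkC_succ_le n).trans ih

lemma summable_n_geo {r : ℝ} (h0 : 0 < r) (h1 : r < 1) :
    Summable (fun n : ℕ => (n : ℝ) * r ^ (n - 1)) := by
  have h : Summable (fun n : ℕ => ((n : ℝ) ^ 1 * r ^ n) * r⁻¹) := by
    exact (summable_pow_mul_geometric_of_norm_lt_one (R := ℝ) 1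
      (by rwa [Real.norm_eq_abs, abs_of_pos h0])).mul_right _
  refine h.congr fun n => ?_
  cases n with
  | zero => simp
  | succ m =>
    have : r ^ (m + 1) = r ^ m * r := by ring
    field_simp
    rw [Nat.add_sub_cancel]
    ring

lemma summable_rk {x : ℝ} (hx : |x| < 1) (a : ℕ → ℝ) (ha : ∀ n, |a n| ≤ 2 * n + 2) :
    Summable (fun n : ℕ => a n * rkC n * x ^ n) := by
  have hgeo : Summable (fun n : ℕ => (2 * (n : ℝ) + 2) * |x| ^ n) := by
    have h1 : Summable (fun n : ℕ => ((n : ℝ) ^ 1 * |x| ^ n) * 2) :=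
      (summable_pow_mul_geometric_of_norm_lt_one (R := ℝ) 1
        (by rwa [Real.norm_eq_abs, abs_abs])).mul_right _
    have h2 : Summable (fun n : ℕ => |x| ^ n * 2) :=
      (summable_geometric_of_lt_one (abs_nonneg x) hx).mul_right _
    exact (h1.add h2).congr fun n => by ring
  refine Summable.of_norm (hgeo.of_nonneg_of_le (fun n => norm_nonneg _) fun n => ?_)
  rw [norm_mul, norm_mul, Real.norm_eq_abs, Real.norm_eq_abs, Real.norm_eq_abs,
    abs_pow, abs_of_pos (rkC_pos n)]
  calc |a n| * rkC n * |x| ^ n ≤ (2 * n + 2) * 1 * |x| ^ n := by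
        apply mul_le_mul_of_nonneg_right _ (pow_nonneg (abs_nonneg x) n)
        exact mul_le_mul (ha n) (rkC_le_one n) (rkC_pos n).le (by positivity)
    _ = (2 * n + 2) * |x| ^ n := by ring

noncomputable def rkG (y : ℝ) : ℝ := ∑' n : ℕ, rkC n * y ^ n
noncomputable def rkD (y : ℝ) : ℝ := ∑' n : ℕ, rkC n * ((n : ℝ) * y ^ (n - 1))

lemma summable_rkG {x : ℝ} (hx : |x| < 1) : Summable (fun n : ℕ => rkC n * x ^ n) := by
  have := summable_rk hx (fun _ => 1) (fun n => by rw [abs_one]; have : (0:ℝ) ≤ n := Nat.cast_nonneg n; linarith)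
  exact this.congr fun n => by ring

lemma summable_rkD {x : ℝ} (hx : |x| < 1) :
    Summable (fun n : ℕ => rkC n * ((n : ℝ) * x ^ (n - 1))) := by
  set r : ℝ := (|x| + 1) / 2 with hr
  have hxr : |x| < r := by rw [hr]; linarith
  have hr0 : 0 < r := lt_of_le_of_lt (abs_nonneg x) hxr
  have hr1 : r < 1 := by rw [hr]; linarith
  refine Summable.of_norm ((summable_n_geo hr0 hr1).of_nonneg_of_le
    (fun n => norm_nonneg _) fun n => ?_)
  rw [norm_mul, norm_mul, Real.norm_eq_abs, Real.norm_eq_abs, Real.norm_eq_abs,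
    abs_pow, abs_of_pos (rkC_pos n), Nat.abs_cast]
  calc rkC n * ((n : ℝ) * |x| ^ (n - 1)) ≤ 1 * ((n : ℝ) * r ^ (n - 1)) := by
        apply mul_le_mul (rkC_le_one n) _ (by positivity) zero_le_one
        exact mul_le_mul_of_nonneg_left
          (pow_le_pow_left₀ (abs_nonneg x) hxr.le _) (Nat.cast_nonneg n)
    _ = (n : ℝ) * r ^ (n - 1) := by ring

lemma hasDerivAt_rkG {x : ℝ} (hx : |x| < 1) : HasDerivAt rkG (rkD x) x := by
  set r : ℝ := (|x| + 1) / 2 with hr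
  have hxr : |x| < r := by rw [hr]; linarith
  have hr0 : 0 < r := lt_of_le_of_lt (abs_nonneg x) hxr
  have hr1 : r < 1 := by rw [hr]; linarith
  have h := hasDerivAt_tsum_of_isPreconnected (summable_n_geo hr0 hr1)
    (Metric.isOpen_ball (x := (0:ℝ)) (ε := r))
    ((convex_ball (0:ℝ) r).isPreconnected)
    (g := fun n y => rkC n * y ^ n)
    (g' := fun n y => rkC n * ((n : ℝ) * y ^ (n - 1)))
    (fun n y _ => (hasDerivAt_pow n y).const_mul (rkC n))
    (fun n y hy => ?_) (y₀ := 0) (by simpa using hr0) ?_ (by simpa using hxr)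
  · exact h
  · rw [norm_mul, norm_mul, Real.norm_eq_abs, Real.norm_eq_abs, Real.norm_eq_abs,
      abs_pow, abs_of_pos (rkC_pos n), Nat.abs_cast]
    have hyr : |y| ≤ r := by
      have := mem_ball_iff_norm.mp hy
      simpa [Real.norm_eq_abs] using this.le
    calc rkC n * ((n : ℝ) * |y| ^ (n - 1)) ≤ 1 * ((n : ℝ) * r ^ (n - 1)) := by
          apply mul_le_mul (rkC_le_one n) _ (by positivity) zero_le_one
          exact mul_le_mul_of_nonneg_left
            (pow_le_pow_left₀ (abs_nonneg y) hyr _) (Nat.cast_nonneg n)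
      _ = (n : ℝ) * r ^ (n - 1) := by ring
  · exact summable_rkG (by norm_num)

lemma rkG_ode {x : ℝ} (hx : |x| < 1) : 2 * (1 - x) * rkD x = rkG x := by
  have hSd := summable_rkD hx
  have hA : Summable (fun n : ℕ => 2 * (rkC n * ((n : ℝ) * x ^ (n - 1)))) := hSd.mul_left 2
  have hB : Summable (fun n : ℕ => 2 * (n : ℝ) * rkC n * x ^ n) := by
    have := summable_rk hx (fun n => 2 * n) (fun n => by
      show |2 * (n:ℝ)| ≤ 2 * n + 2
      rw [abs_of_nonneg (by positivity)]
      have : (0:ℝ) ≤ n := Nat.cast_nonneg n; linarith)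
    exact this
  have hS2 : Summable (fun j : ℕ => (2 * (j : ℝ) + 1) * rkC j * x ^ j) := by
    refine summable_rk hx (fun n => 2 * n + 1) (fun n => by
      show |2 * (n:ℝ) + 1| ≤ 2 * n + 2
      rw [abs_of_nonneg (by positivity)]
      have : (0:ℝ) ≤ n := Nat.cast_nonneg n; linarith)
  have hshift : ∑' n : ℕ, 2 * (rkC n * ((n : ℝ) * x ^ (n - 1)))
      = ∑' j : ℕ, (2 * (j : ℝ) + 1) * rkC j * x ^ j := by
    rw [← Function.Injective.tsum_eq (Nat.succ_injective)
      (f := fun n : ℕ => 2 * (rkC n * ((n : ℝ) * x ^ (n - 1))))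
      (by
        intro n hn
        rcases n with _ | m
        · simp at hn
        · exact ⟨m, rfl⟩)]
    refine tsum_congr fun j => ?_
    have hr := rkC_rec j
    simp only [Nat.succ_eq_add_one, Nat.add_sub_cancel]
    push_cast
    linear_combination x ^ j * hr
  calc 2 * (1 - x) * rkD x
      = ∑' n : ℕ, (2 * (1 - x)) * (rkC n * ((n : ℝ) * x ^ (n - 1))) := by
        rw [tsum_mul_left]; rfl
    _ = ∑' n : ℕ, (2 * (rkC n * ((n : ℝ) * x ^ (n - 1))) - 2 * (n : ℝ) * rkC n * x ^ n) := by
        refine tsum_congr fun n => ?_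
        rcases n with _ | m
        · simp
        · have h1 : ((m:ℕ) + 1) - 1 = m := rfl
          rw [h1]
          push_cast
          have : x ^ (m + 1) = x ^ m * x := by ring
          rw [this]
          ring
    _ = (∑' n : ℕ, 2 * (rkC n * ((n : ℝ) * x ^ (n - 1))))
        - ∑' n : ℕ, 2 * (n : ℝ) * rkC n * x ^ n := Summable.tsum_sub hA hB
    _ = (∑' j : ℕ, (2 * (j : ℝ) + 1) * rkC j * x ^ j)
        - ∑' j : ℕ, 2 * (j : ℝ) * rkC j * x ^ j := by rw [hshift]
    _ = ∑' j : ℕ, ((2 * (j : ℝ) + 1) * rkC j * x ^ j - 2 * (j : ℝ) * rkC j * x ^ j) :=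
        (Summable.tsum_sub hS2 hB).symm
    _ = ∑' j : ℕ, rkC j * x ^ j := tsum_congr fun j => by ring
    _ = rkG x := rfl

lemma rkG_zero : rkG 0 = 1 := by
  unfold rkG
  rw [tsum_eq_single 0 (fun n hn => by simp [zero_pow hn])]
  simp [rkC_zero]

lemma rkG_sq {x : ℝ} (hx : |x| < 1) : rkG x ^ 2 * (1 - x) = 1 := by
  set s : Set ℝ := Set.Ioo (-1 : ℝ) 1 with hs
  have hder : ∀ y ∈ s, HasDerivWithinAt (fun y => rkG y ^ 2 * (1 - y)) 0 s y := by
    intro y hy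
    have hy' : |y| < 1 := abs_lt.mpr ⟨hy.1, hy.2⟩
    have d1 : HasDerivAt (fun y => rkG y ^ 2) ((2 : ℕ) * rkG y ^ (2 - 1) * rkD y) y :=
      (hasDerivAt_rkG hy').pow 2
    have d2 : HasDerivAt (fun y : ℝ => 1 - y) (-1) y := (hasDerivAt_id y).const_sub 1
    have d := d1.mul d2
    have e : (2 : ℕ) * rkG y ^ (2 - 1) * rkD y * (1 - y) + rkG y ^ 2 * (-1) = 0 := by
      push_cast
      linear_combination rkG y * rkG_ode hy'
    rw [e] at d
    exact d.hasDerivWithinAt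
  have hx1 : x ∈ s := Set.mem_Ioo.mpr ⟨(abs_lt.mp hx).1, (abs_lt.mp hx).2⟩
  have h01 : (0 : ℝ) ∈ s := by constructor <;> norm_num
  have hb := (convex_Ioo (-1 : ℝ) 1).norm_image_sub_le_of_norm_hasDerivWithin_le
    (f' := fun _ => (0 : ℝ)) (C := 0) hder (fun y _ => by simp) h01 hx1
  simp only [norm_zero, zero_mul, norm_le_zero_iff, sub_eq_zero] at hb
  rw [hb, rkG_zero]
  ring

lemma hasSum_rkC {u : ℝ} (h0 : 0 ≤ u) (h1 : u < 1) :
    HasSum (fun j : ℕ => rkC j * u ^ j) ((1 - u) ^ (-(1 / 2 : ℝ))) := by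
  have hu : |u| < 1 := by rwa [abs_of_nonneg h0]
  have hsum := summable_rkG hu
  rw [hsum.hasSum_iff]
  show rkG u = _
  have hsq := rkG_sq hu
  have ht : 0 < 1 - u := by linarith
  have hGnn : 0 ≤ rkG u :=
    tsum_nonneg fun n => mul_nonneg (rkC_pos n).le (pow_nonneg h0 n)
  have hrnn : 0 ≤ (1 - u) ^ (-(1 / 2 : ℝ)) := Real.rpow_nonneg ht.le _
  have key : rkG u ^ 2 = ((1 - u) ^ (-(1 / 2 : ℝ))) ^ 2 := by
    have h2 : ((1 - u) ^ (-(1 / 2 : ℝ))) ^ 2 = (1 - u) ^ (-1 : ℝ) := by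
      rw [← Real.rpow_natCast ((1 - u) ^ (-(1 / 2 : ℝ))) 2, ← Real.rpow_mul ht.le]
      norm_num
    rw [h2, Real.rpow_neg_one]
    field_simp
    linarith [hsq]
  exact (sq_eq_sq₀ hGnn hrnn).mp key

lemma kernel_neg {u : ℝ} (h : u < 0) : remarkKernel u = 0 := if_pos h

lemma kernel_floor {u : ℝ} (h : ¬ u < 0) :
    remarkKernel u = rkC ⌊u⌋₊ * (u - ⌊u⌋₊) ^ ⌊u⌋₊ := if_neg h

lemma kernel_nonneg (u : ℝ) : 0 ≤ remarkKernel u := by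
  by_cases h : u < 0
  · rw [kernel_neg h]
  · rw [kernel_floor h]
    push_neg at h
    exact mul_nonneg (rkC_pos _).le (pow_nonneg (sub_nonneg.mpr (Nat.floor_le h)) _)

lemma kernel_le_one (u : ℝ) : remarkKernel u ≤ 1 := by
  by_cases h : u < 0
  · rw [kernel_neg h]; norm_num
  · rw [kernel_floor h]
    push_neg at h
    have h1 : 0 ≤ u - ⌊u⌋₊ := sub_nonneg.mpr (Nat.floor_le h)
    have h2 : u - ⌊u⌋₊ ≤ 1 := by
      have := Nat.lt_floor_add_one u
      linarith
    calc rkC ⌊u⌋₊ * (u - ⌊u⌋₊) ^ ⌊u⌋₊ ≤ 1 * 1 :=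
          mul_le_mul (rkC_le_one _) (pow_le_one₀ h1 h2) (by positivity) zero_le_one
      _ = 1 := by norm_num

lemma kernel_on_piece {k : ℕ} {x : ℝ} (h1 : (k : ℝ) ≤ x) (h2 : x < k + 1) :
    remarkKernel x = rkC k * (x - k) ^ k := by
  have hx0 : (0 : ℝ) ≤ x := le_trans (by positivity) h1
  have hfl : ⌊x⌋₊ = k := by
    rw [Nat.floor_eq_iff hx0]
    exact ⟨h1, by exact_mod_cast h2⟩
  rw [kernel_floor (not_lt.mpr hx0), hfl]

lemma kernel_apply (n : ℕ) {u : ℝ} (h0 : 0 ≤ u) (h1 : u < 1) :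
    remarkKernel (u + n) = rkC n * u ^ n := by
  have := kernel_on_piece (k := n) (x := u + n) (by linarith) (by linarith)
  simpa using this

lemma measurable_kernel : Measurable remarkKernel := by
  have h : Measurable fun p : ℝ × ℕ =>
      (if p.1 < 0 then 0 else rkC p.2 * (p.1 - p.2) ^ p.2 : ℝ) := by
    apply measurable_from_prod_countable_left
    intro n
    show Measurable fun x : ℝ => (if x < 0 then 0 else rkC n * (x - (n:ℝ)) ^ n : ℝ)
    exact Measurable.ite (measurableSet_lt measurable_id measurable_const) measurable_const
      (measurable_const.mul ((measurable_id.sub measurable_const).pow_const n))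
  have h2 : Measurable fun u : ℝ => (u, ⌊u⌋₊) := measurable_id.prodMk Nat.measurable_floor
  have : remarkKernel = fun u => (fun p : ℝ × ℕ =>
      (if p.1 < 0 then 0 else rkC p.2 * (p.1 - p.2) ^ p.2 : ℝ)) (u, ⌊u⌋₊) := by
    funext u
    by_cases hu : u < 0
    · simp [kernel_neg hu, hu]
    · simp [kernel_floor hu, hu]
  rw [this]
  exact h.comp h2

lemma piece_integral (k : ℕ) (a : ℝ) :
    ∫ x in Set.Ico a (a + 1), rkC k * (x - a) ^ k = rkC k / (k + 1) := by
  rw [show (volume : Measure ℝ).restrict (Set.Ico a (a+1))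
        = (volume : Measure ℝ).restrict (Set.Ioc a (a+1)) from
      restrict_Ico_eq_restrict_Ioc,
    ← intervalIntegral.integral_of_le (by linarith : a ≤ a + 1),
    intervalIntegral.integral_const_mul]
  have h := intervalIntegral.integral_comp_sub_right (a := a) (b := a + 1)
    (fun x => x ^ k) a
  simp only [sub_self, add_sub_cancel_left] at h
  rw [h, integral_pow]
  simp
  ring

lemma piece_integrable (k : ℕ) (a : ℝ) :
    IntegrableOn (fun x => rkC k * (x - a) ^ k) (Set.Ico a (a + 1)) volume := by
  have : Continuous fun x : ℝ => rkC k * (x - a) ^ k :=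
    continuous_const.mul ((continuous_id.sub continuous_const).pow k)
  exact this.integrableOn_Icc.mono_set Set.Ico_subset_Icc_self

lemma piece_lintegral (k : ℕ) (a : ℝ) :
    ∫⁻ x in Set.Ico a (a + 1), ENNReal.ofReal (rkC k * (x - a) ^ k)
      = ENNReal.ofReal (rkC k / (k + 1)) := by
  rw [← ofReal_integral_eq_lintegral_ofReal (piece_integrable k a) ?_, piece_integral]
  rw [Filter.EventuallyLE, ae_restrict_iff' measurableSet_Ico]
  filter_upwards with x hx
  exact mul_nonneg (rkC_pos k).le (pow_nonneg (by linarith [hx.1]) k)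

lemma lint_kernel :
    ∫⁻ x, ENNReal.ofReal (remarkKernel x)
      = ∑' k : ℕ, ENNReal.ofReal (rkC k / (k + 1)) := by
  have hcover : (⋃ n : ℤ, Set.Ico (n : ℝ) (n + 1)) = Set.univ :=
    iUnion_Ico_intCast ℝ
  rw [← setLIntegral_univ, ← hcover,
    lintegral_iUnion (fun n => measurableSet_Ico) (Set.pairwise_disjoint_Ico_intCast ℝ)]
  rw [← Function.Injective.tsum_eq (g := ((↑) : ℕ → ℤ)) (fun a b h => by exact_mod_cast h : Function.Injective ((↑) : ℕ → ℤ)) ?_]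
  · refine tsum_congr fun k => ?_
    rw [← piece_lintegral k (k : ℝ)]
    refine setLIntegral_congr_fun measurableSet_Ico ?_
    intro x hx
    push_cast at hx
    beta_reduce
    rw [kernel_on_piece hx.1 hx.2]
  · intro n hn
    rcases Int.lt_or_le n 0 with h | h
    · exfalso
      apply hn
      have : ∀ x ∈ Set.Ico ((n : ℝ)) ((n : ℝ) + 1), ENNReal.ofReal (remarkKernel x) = 0 := by
        intro x hx
        have hx1 : x < 0 := by
          have : (n : ℝ) + 1 ≤ 0 := by exact_mod_cast Int.add_one_le_of_lt h
          linarith [hx.2]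
        rw [kernel_neg hx1]
        simp
      show ∫⁻ a in Set.Ico ((n:ℝ)) ((n:ℝ) + 1), ENNReal.ofReal (remarkKernel a) = 0
      rw [setLIntegral_congr_fun measurableSet_Ico this]
      simp
    · exact ⟨n.toNat, by simp [Int.toNat_of_nonneg h]⟩

lemma integrableOn_rpow_half :
    IntegrableOn (fun u : ℝ => (1 - u) ^ (-(1 / 2 : ℝ))) (Set.Icc 0 1) volume := by
  have h : IntervalIntegrable (fun x : ℝ => x ^ (-(1 / 2 : ℝ))) volume 0 1 :=
    intervalIntegral.intervalIntegrable_rpow' (by norm_num)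
  have h2 := (h.comp_sub_left 1).symm
  simp only [sub_zero, sub_self] at h2
  exact (intervalIntegrable_iff_integrableOn_Icc_of_le zero_le_one).mp h2

lemma tsum_rk_eq :
    ∑' k : ℕ, ENNReal.ofReal (rkC k / (k + 1))
      = ∫⁻ u in Set.Ico (0 : ℝ) 1, ENNReal.ofReal ((1 - u) ^ (-(1 / 2 : ℝ))) := by
  have hpt : ∀ u ∈ Set.Ico (0 : ℝ) 1,
      ENNReal.ofReal ((1 - u) ^ (-(1 / 2 : ℝ)))
        = ∑' k : ℕ, ENNReal.ofReal (rkC k * u ^ k) := by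
    intro u hu
    have hh := hasSum_rkC hu.1 hu.2
    rw [← hh.tsum_eq]
    exact ENNReal.ofReal_tsum_of_nonneg
      (fun k => mul_nonneg (rkC_pos k).le (pow_nonneg hu.1 k)) hh.summable
  rw [setLIntegral_congr_fun measurableSet_Ico hpt,
    lintegral_tsum (f := fun k (x : ℝ) => ENNReal.ofReal (rkC k * x ^ k)) (fun k =>
      ((measurable_const.mul (measurable_id'.pow_const k)).ennreal_ofReal).aemeasurable)]
  refine tsum_congr fun k => ?_
  have := piece_lintegral k 0
  simp only [zero_add, sub_zero] at this
  rw [← this]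

lemma lint_finite : ∫⁻ x, ENNReal.ofReal (remarkKernel x) < ∞ := by
  rw [lint_kernel, tsum_rk_eq]
  have hInt : IntegrableOn (fun u : ℝ => (1 - u) ^ (-(1 / 2 : ℝ))) (Set.Ico 0 1) volume :=
    integrableOn_rpow_half.mono_set Set.Ico_subset_Icc_self
  exact hInt.lintegral_lt_top

lemma lint_nnnorm_kernel : ∫⁻ x, (‖remarkKernel x‖₊ : ℝ≥0∞) < ∞ := by
  have : ∀ x, (‖remarkKernel x‖₊ : ℝ≥0∞) = ENNReal.ofReal (remarkKernel x) := fun x =>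
    Real.enorm_eq_ofReal (kernel_nonneg x)
  rw [lintegral_congr this]
  exact lint_finite

lemma integrable_kernel : Integrable remarkKernel volume :=
  ⟨measurable_kernel.aestronglyMeasurable, lint_nnnorm_kernel⟩

lemma memLp_two_kernel : MemLp remarkKernel 2 volume := by
  refine ⟨measurable_kernel.aestronglyMeasurable, ?_⟩
  rw [eLpNorm_eq_lintegral_rpow_enorm_toReal two_ne_zero ENNReal.ofNat_ne_top]
  refine ENNReal.rpow_lt_top_of_nonneg (by positivity) ?_
  refine ne_of_lt (lt_of_le_of_lt ?_ lint_nnnorm_kernel)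
  refine lintegral_mono fun x => ?_
  have hle : (‖remarkKernel x‖₊ : ℝ≥0∞) ≤ 1 := by
    have h1 : ‖remarkKernel x‖ ≤ 1 := by
      rw [Real.norm_eq_abs, abs_of_nonneg (kernel_nonneg x)]
      exact kernel_le_one x
    exact_mod_cast h1
  calc (‖remarkKernel x‖₊ : ℝ≥0∞) ^ (2 : ℝ≥0∞).toReal
      ≤ (‖remarkKernel x‖₊ : ℝ≥0∞) ^ (1 : ℝ) := by
        apply ENNReal.rpow_le_rpow_of_exponent_ge hle
        simp
    _ = (‖remarkKernel x‖₊ : ℝ≥0∞) := ENNReal.rpow_one _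

lemma tsum_kernel_eq {u : ℝ} (h0 : 0 ≤ u) (h1 : u < 1) :
    (∑' j : ℤ, |remarkKernel (u + (j : ℝ))|) = (1 - u) ^ (-(1 / 2 : ℝ)) := by
  have hinj : Function.Injective ((↑) : ℕ → ℤ) := fun a b h => by exact_mod_cast h
  have hsupp : Function.support (fun j : ℤ => |remarkKernel (u + (j : ℝ))|)
      ⊆ Set.range ((↑) : ℕ → ℤ) := by
    intro j hj
    rcases Int.lt_or_le j 0 with h | h
    · exfalso
      apply hj
      have : u + (j : ℝ) < 0 := by
        have : (j : ℝ) + 1 ≤ 0 := by exact_mod_cast Int.add_one_le_of_lt h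
        linarith
      simp [kernel_neg this]
    · exact ⟨j.toNat, by simp [Int.toNat_of_nonneg h]⟩
  rw [← Function.Injective.tsum_eq hinj hsupp]
  have : ∀ n : ℕ, |remarkKernel (u + ((n : ℤ) : ℝ))| = rkC n * u ^ n := by
    intro n
    have hc : ((n : ℤ) : ℝ) = (n : ℝ) := by push_cast; rfl
    rw [hc, kernel_apply n h0 h1,
      abs_of_nonneg (mul_nonneg (rkC_pos n).le (pow_nonneg h0 n))]
  calc (∑' n : ℕ, |remarkKernel (u + ((n : ℤ) : ℝ))|)
      = ∑' n : ℕ, rkC n * u ^ n := tsum_congr this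
    _ = (1 - u) ^ (-(1 / 2 : ℝ)) := (hasSum_rkC h0 h1).tsum_eq

lemma ae_eq_on_Icc :
    (fun u : ℝ => ∑' j : ℤ, |remarkKernel (u + (j : ℝ))|)
      =ᵐ[volume.restrict (Set.Icc 0 1)] fun u : ℝ => (1 - u) ^ (-(1 / 2 : ℝ)) := by
  have h1 : ∀ᵐ u ∂volume.restrict (Set.Icc (0:ℝ) 1), u ∈ Set.Icc (0:ℝ) 1 :=
    ae_restrict_mem measurableSet_Icc
  have hz : volume.restrict (Set.Icc (0:ℝ) 1) {(1 : ℝ)} = 0 :=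
    le_antisymm (le_trans (Measure.restrict_apply_le _ _) (by simp)) zero_le
  have h2 : ∀ᵐ u ∂volume.restrict (Set.Icc (0:ℝ) 1), u ≠ 1 := by
    rw [ae_iff]
    convert hz using 2
    ext x; simp
  filter_upwards [h1, h2] with u hu hne
  exact tsum_kernel_eq hu.1 (lt_of_le_of_ne hu.2 hne)

lemma integrableOn_periodization :
    IntegrableOn (fun u : ℝ => ∑' j : ℤ, |remarkKernel (u + (j : ℝ))|)
      (Set.Icc (0 : ℝ) 1) volume :=
  integrableOn_rpow_half.congr ae_eq_on_Icc.symm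

lemma not_memLp_periodization :
    ¬ MemLp (fun u : ℝ => ∑' j : ℤ, |remarkKernel (u + (j : ℝ))|) 2
      (volume.restrict (Set.Icc (0 : ℝ) 1)) := by
  intro hmem
  have hmem' : MemLp (fun u : ℝ => (1 - u) ^ (-(1 / 2 : ℝ))) 2
      (volume.restrict (Set.Icc (0:ℝ) 1)) := hmem.ae_eq ae_eq_on_Icc
  have hlt := hmem'.2
  rw [eLpNorm_eq_lintegral_rpow_enorm_toReal two_ne_zero ENNReal.ofNat_ne_top] at hlt
  have hfin : ∫⁻ u in Set.Icc (0:ℝ) 1,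
      ((‖(1 - u) ^ (-(1 / 2 : ℝ))‖₊ : ℝ≥0∞)) ^ (2 : ℝ≥0∞).toReal ≠ ∞ := by
    intro htop
    erw [htop] at hlt
    simp [ENNReal.top_rpow_of_pos] at hlt
  apply hfin
  rw [eq_top_iff]
  have hIoo : ∫⁻ u in Set.Ioo (0:ℝ) 1, ENNReal.ofReal ((1 - u) ^ (-1 : ℝ)) = ∞ := by
    by_contra htop
    have hint : IntegrableOn (fun u : ℝ => (1 - u) ^ (-1 : ℝ)) (Set.Ioo 0 1) volume := by
      constructor
      · refine (ContinuousOn.rpow_const ?_ ?_).aestronglyMeasurable measurableSet_Ioo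
        · exact (continuous_const.sub continuous_id).continuousOn
        · intro x hx
          left
          have := hx.2
          intro h
          simp only [sub_eq_zero] at h
          exact absurd h.symm (ne_of_lt this)
      · rw [hasFiniteIntegral_def]
        have : ∀ᵐ u ∂volume.restrict (Set.Ioo (0:ℝ) 1),
            (‖(1 - u) ^ (-1 : ℝ)‖₊ : ℝ≥0∞) = ENNReal.ofReal ((1 - u) ^ (-1 : ℝ)) := by
          filter_upwards [ae_restrict_mem measurableSet_Ioo] with u hu
          exact Real.enorm_eq_ofReal (Real.rpow_nonneg (by linarith [hu.2]) _)
        erw [lintegral_congr_ae this]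
        exact lt_top_iff_ne_top.mpr htop
    have hII : IntervalIntegrable (fun u : ℝ => (1 - u) ^ (-1 : ℝ)) volume 0 1 := by
      rw [intervalIntegrable_iff_integrableOn_Ioo_of_le zero_le_one]
      exact hint
    have hII2 := (hII.comp_sub_left 1).symm
    simp only [sub_sub_cancel, sub_zero, sub_self] at hII2
    rw [intervalIntegrable_iff_integrableOn_Ioo_of_le zero_le_one,
      intervalIntegral.integrableOn_Ioo_rpow_iff zero_lt_one] at hII2
    norm_num at hII2
  calc (⊤ : ℝ≥0∞) = ∫⁻ u in Set.Ioo (0:ℝ) 1, ENNReal.ofReal ((1 - u) ^ (-1 : ℝ)) := hIoo.symm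
    _ = ∫⁻ u in Set.Ioo (0:ℝ) 1,
        ((‖(1 - u) ^ (-(1 / 2 : ℝ))‖₊ : ℝ≥0∞)) ^ (2 : ℝ≥0∞).toReal := by
        refine setLIntegral_congr_fun measurableSet_Ioo ?_
        intro u hu
        have ht : (0:ℝ) < 1 - u := by linarith [hu.2]
        beta_reduce
        rw [show ((‖(1 - u) ^ (-(1 / 2 : ℝ))‖₊ : ℝ≥0∞)) = ENNReal.ofReal ((1 - u) ^ (-(1 / 2 : ℝ))) from Real.enorm_eq_ofReal (Real.rpow_nonneg ht.le _)]
        have h2 : ((2:ℝ≥0∞)).toReal = (2:ℝ) := by simp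
        rw [h2, ENNReal.ofReal_rpow_of_nonneg (Real.rpow_nonneg ht.le _)
          (by norm_num : (0:ℝ) ≤ 2), ← Real.rpow_mul ht.le]
        norm_num
    _ ≤ _ := lintegral_mono_set Set.Ioo_subset_Icc_self

/-- the kernel above is in `L¹(ℝ) ∩ L²(ℝ)`, its periodization satisfies
`F₁(u) = ∑_{j∈ℤ} |f(u+j)| = (1-u)^{-1/2}` for `u ∈ [0,1)`, and `F₁ ∈ L¹([0,1])`
while `F₁ ∉ L²([0,1])`. -/
theorem statement3 :
    Integrable remarkKernel volume
    ∧ MemLp remarkKernel 2 volume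
    ∧ (∀ u ∈ Set.Ico (0 : ℝ) 1,
        (∑' j : ℤ, |remarkKernel (u + (j : ℝ))|) = (1 - u) ^ (-(1 / 2 : ℝ)))
    ∧ IntegrableOn (fun u : ℝ => ∑' j : ℤ, |remarkKernel (u + (j : ℝ))|)
        (Set.Icc (0 : ℝ) 1) volume
    ∧ ¬ MemLp (fun u : ℝ => ∑' j : ℤ, |remarkKernel (u + (j : ℝ))|) 2
        (volume.restrict (Set.Icc (0 : ℝ) 1)) :=
  ⟨integrable_kernel, memLp_two_kernel, fun _ hu => tsum_kernel_eq hu.1 hu.2,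
    integrableOn_periodization, not_memLp_periodization⟩
end

section
/- Let f ∈ L²(ℝ) be nonnegative, Δ > 0 and σ² > 0. Then Σ_{h∈ℤ} |γ_f(hΔ)| < ∞ if and only if the function F_Δ(u) = Σ_{j∈ℤ} f(u + jΔ) belongs to L²([0,Δ]). -/
open MeasureTheory Set
open scoped ENNReal

/-- for a nonnegative `f ∈ L²(ℝ)`, `Δ > 0` and `σ² > 0`,
the autocovariances are absolutely summable, `∑_{h∈ℤ} |γ_f(hΔ)| < ∞`, if and only
if the periodization `F_Δ(u) = ∑_{j∈ℤ} f(u+jΔ)` belongs to `L²([0,Δ])`. -/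
theorem statement4 (f : ℝ → ℝ) (hf_meas : Measurable f) (hf_nonneg : ∀ x, 0 ≤ f x)
    (hf : MemLp f 2 volume) (Δ : ℝ) (hΔ : 0 < Δ) (σ2 : ℝ) (hσ2 : 0 < σ2) :
    Summable (fun h : ℤ => |autocov f σ2 ((h : ℝ) * Δ)|)
      ↔ (∫⁻ u in Set.Ioc (0 : ℝ) Δ,
          (∑' j : ℤ, ENNReal.ofReal (f (u + (j : ℝ) * Δ))) ^ 2) < ∞ := by
  classical
  set F : ℝ → ℝ≥0∞ := fun x => ENNReal.ofReal (f x) with hFdef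
  have hFmeas : Measurable F := ENNReal.measurable_ofReal.comp hf_meas
  -- finiteness of the squared integral
  have hI : (∫⁻ x, F x ^ (2:ℝ)) ≠ ∞ := by
    intro htop
    have h2 := hf.2.ne
    rw [eLpNorm_eq_lintegral_rpow_enorm_toReal two_ne_zero ENNReal.ofNat_ne_top] at h2
    apply h2
    have heq : (fun x => (‖f x‖ₑ : ℝ≥0∞) ^ ((2:ℝ≥0∞).toReal)) = fun x => F x ^ (2:ℝ) := by
      funext x
      simp [hFdef, Real.enorm_eq_ofReal (hf_nonneg x)]
    rw [heq, htop]
    rw [ENNReal.top_rpow_of_pos (by norm_num)]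
  -- the shifted covariance integrals are finite
  have hG_lt : ∀ c : ℝ, (∫⁻ s, F (-s) * F (c - s)) < ∞ := by
    intro c
    have hm1 : Measurable fun s : ℝ => F (-s) := hFmeas.comp measurable_neg
    have hm2 : Measurable fun s : ℝ => F (c - s) :=
      hFmeas.comp (measurable_const.sub measurable_id)
    have h1 : (∫⁻ s, F (-s) ^ (2:ℝ)) = ∫⁻ x, F x ^ (2:ℝ) :=
      (Measure.measurePreserving_neg (volume : Measure ℝ)).lintegral_comp
        (hFmeas.pow_const (2:ℝ))
    have h2 : (∫⁻ s, F (c - s) ^ (2:ℝ)) = ∫⁻ x, F x ^ (2:ℝ) :=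
      (Measure.measurePreserving_sub_left (volume : Measure ℝ) c).lintegral_comp
        (hFmeas.pow_const (2:ℝ))
    have hholder := ENNReal.lintegral_mul_le_Lp_mul_Lq (volume : Measure ℝ)
      (Real.HolderConjugate.two_two : Real.HolderConjugate 2 2) hm1.aemeasurable hm2.aemeasurable
    calc (∫⁻ s, F (-s) * F (c - s))
        ≤ (∫⁻ s, F (-s) ^ (2:ℝ)) ^ (1/(2:ℝ)) * (∫⁻ s, F (c - s) ^ (2:ℝ)) ^ (1/(2:ℝ)) := hholder
      _ = (∫⁻ x, F x ^ (2:ℝ)) ^ (1/(2:ℝ)) * (∫⁻ x, F x ^ (2:ℝ)) ^ (1/(2:ℝ)) := by rw [h1, h2]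
      _ < ∞ := by
          have : (∫⁻ x, F x ^ (2:ℝ)) ^ (1/(2:ℝ)) < ∞ :=
            ENNReal.rpow_lt_top_of_nonneg (by norm_num) hI
          exact ENNReal.mul_lt_top this this
  -- change of variables s ↦ -s
  have hneg : ∀ c : ℝ, (∫⁻ s, F (-s) * F (c - s)) = ∫⁻ s, F s * F (s + c) := by
    intro c
    have hm : Measurable fun s : ℝ => F s * F (s + c) :=
      hFmeas.mul (hFmeas.comp (measurable_id.add_const c))
    have := (Measure.measurePreserving_neg (volume : Measure ℝ)).lintegral_comp hm
    rw [← this]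
    refine lintegral_congr fun s => ?_
    rw [sub_eq_neg_add]
  -- express the autocovariance via the lintegral
  set G : ℤ → ℝ≥0∞ := fun h => ∫⁻ s, F (-s) * F ((h:ℝ) * Δ - s) with hGdef
  have hauto : ∀ h : ℤ, autocov f σ2 ((h:ℝ) * Δ) = σ2 * (G h).toReal := by
    intro h
    unfold autocov
    congr 1
    rw [integral_eq_lintegral_of_nonneg_ae
      (ae_of_all _ fun s => mul_nonneg (hf_nonneg _) (hf_nonneg _))
      ((by fun_prop : Measurable fun s : ℝ =>
        f (-s) * f ((h:ℝ) * Δ - s)).aestronglyMeasurable)]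
    congr 1
    refine lintegral_congr fun s => ?_
    rw [ENNReal.ofReal_mul (hf_nonneg _)]
  -- periodization
  set P : ℝ → ℝ≥0∞ := fun u => ∑' j : ℤ, F (u + (j:ℝ) * Δ) with hPdef
  have hPmeas : Measurable P :=
    Measurable.ennreal_tsum fun j => hFmeas.comp (measurable_id.add_const _)
  have hPper : ∀ (u : ℝ) (j : ℤ), P (u + (j:ℝ) * Δ) = P u := by
    intro u j
    have h1 : ∀ h : ℤ, F (u + (j:ℝ)*Δ + (h:ℝ)*Δ) = F (u + ((j + h : ℤ):ℝ)*Δ) := by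
      intro h; congr 1; push_cast; ring
    calc P (u + (j:ℝ)*Δ) = ∑' h : ℤ, F (u + ((j + h : ℤ):ℝ)*Δ) := tsum_congr h1
      _ = ∑' h : ℤ, F (u + (h:ℝ)*Δ) := (Equiv.addLeft j).tsum_eq fun h => F (u + (h:ℝ)*Δ)
  -- splitting ℝ into translates of (0, Δ]
  have hsplit : ∀ (K : ℝ → ℝ≥0∞), Measurable K →
      (∫⁻ x, K x) = ∑' j : ℤ, ∫⁻ u in Ioc (0:ℝ) Δ, K (u + (j:ℝ) * Δ) := by
    intro K hK
    have hU : ⋃ n : ℤ, Ioc ((0:ℝ) + n • Δ) (0 + (n+1) • Δ) = univ := iUnion_Ioc_add_zsmul hΔ 0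
    have hmeas : ∀ n : ℤ, MeasurableSet (Ioc ((0:ℝ) + n • Δ) (0 + (n+1) • Δ)) :=
      fun n => measurableSet_Ioc
    have hd : Pairwise (Function.onFun Disjoint fun n : ℤ => Ioc ((0:ℝ) + n • Δ) (0 + (n+1) • Δ)) :=
      pairwise_disjoint_Ioc_add_zsmul 0 Δ
    rw [← setLIntegral_univ, ← hU, lintegral_iUnion hmeas hd]
    refine tsum_congr fun j => ?_
    have hshift := (measurePreserving_add_right (volume : Measure ℝ)
        ((j:ℝ)*Δ)).setLIntegral_comp_preimage_emb
      (measurableEmbedding_addRight ((j:ℝ)*Δ)) K (Ioc ((0:ℝ) + j • Δ) (0 + (j+1) • Δ))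
    rw [← hshift]
    have hpre : (fun u : ℝ => u + (j:ℝ)*Δ) ⁻¹' Ioc ((0:ℝ) + j • Δ) (0 + (j+1) • Δ)
        = Ioc (0:ℝ) Δ := by
      rw [preimage_add_const_Ioc]
      push_cast [zsmul_eq_mul]
      have e1 : (0:ℝ) + (j:ℝ) * Δ - (j:ℝ) * Δ = 0 := by ring
      have e2 : (0:ℝ) + ((j:ℝ) + 1) * Δ - (j:ℝ) * Δ = Δ := by ring
      rw [e1, e2]
    rw [hpre]
  -- the core identity
  have hcore : ∑' h : ℤ, G h = ∫⁻ u in Ioc (0:ℝ) Δ, P u ^ 2 := by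
    have hm : ∀ h : ℤ, Measurable fun s : ℝ => F s * F (s + (h:ℝ)*Δ) :=
      fun h => hFmeas.mul (hFmeas.comp (measurable_id.add_const _))
    calc ∑' h : ℤ, G h = ∑' h : ℤ, ∫⁻ s, F s * F (s + (h:ℝ)*Δ) := tsum_congr fun h => hneg _
      _ = ∫⁻ s, ∑' h : ℤ, F s * F (s + (h:ℝ)*Δ) :=
          (lintegral_tsum fun h => (hm h).aemeasurable).symm
      _ = ∫⁻ s, F s * P s := by
          refine lintegral_congr fun s => ?_
          rw [ENNReal.tsum_mul_left]
      _ = ∑' j : ℤ, ∫⁻ u in Ioc (0:ℝ) Δ, F (u + (j:ℝ)*Δ) * P (u + (j:ℝ)*Δ) :=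
          hsplit _ (hFmeas.mul hPmeas)
      _ = ∑' j : ℤ, ∫⁻ u in Ioc (0:ℝ) Δ, F (u + (j:ℝ)*Δ) * P u := by
          refine tsum_congr fun j => lintegral_congr fun u => ?_
          rw [hPper]
      _ = ∫⁻ u in Ioc (0:ℝ) Δ, ∑' j : ℤ, F (u + (j:ℝ)*Δ) * P u := by
          rw [lintegral_tsum]
          exact fun j => ((hFmeas.comp (measurable_id.add_const _)).mul hPmeas).aemeasurable
      _ = ∫⁻ u in Ioc (0:ℝ) Δ, P u * P u := by
          refine lintegral_congr fun u => ?_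
          rw [ENNReal.tsum_mul_right]
      _ = ∫⁻ u in Ioc (0:ℝ) Δ, P u ^ 2 := by
          refine lintegral_congr fun u => (sq (P u)).symm
  -- conclude
  have hG_ne : ∀ h : ℤ, G h ≠ ∞ := fun h => (hG_lt _).ne
  have habs : (fun h : ℤ => |autocov f σ2 ((h:ℝ) * Δ)|)
      = fun h : ℤ => σ2 * (G h).toReal := by
    funext h
    rw [hauto h, abs_of_nonneg (mul_nonneg hσ2.le ENNReal.toReal_nonneg)]
  rw [habs, ← hcore]
  rw [summable_mul_left_iff hσ2.ne']
  constructor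
  · intro hs
    have h1 : (fun h : ℤ => (G h).toReal) = fun h : ℤ => ((G h).toNNReal : ℝ) := rfl
    rw [h1, NNReal.summable_coe] at hs
    have h2 : ∑' h : ℤ, G h = ∑' h : ℤ, ((G h).toNNReal : ℝ≥0∞) :=
      tsum_congr fun h => (ENNReal.coe_toNNReal (hG_ne h)).symm
    rw [h2]
    exact lt_top_iff_ne_top.mpr (ENNReal.tsum_coe_ne_top_iff_summable.mpr hs)
  · intro hlt
    exact ENNReal.summable_toReal hlt.ne
end

section
/- Let Δ > 0 and let f ∈ L²(ℝ) ∩ L⁴(ℝ) be such that the function u ↦ Σ_{k∈ℤ} f(u + kΔ)² belongs to L²([0,Δ]). For r ∈ ℤ define G_r(u) = Σ_{k∈ℤ} |f(u + kΔ) f(u + (k+r)Δ)| for u ∈ [0,Δ]. Then for all p, q ∈ ℕ, Σ_{k∈ℤ} | ∫_ℝ f(u) f(u + pΔ) f(u + kΔ) f(u + (q+k)Δ) du | ≤ ∫_0^Δ G_p(u) G_q(u) du < ∞. -/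
open MeasureTheory
open scoped ENNReal

/-- `G_r(u) = ∑_{k∈ℤ} |f(u + kΔ) f(u + (k+r)Δ)|`, as a `[0,∞]`-valued function. -/
noncomputable def Gabs (f : ℝ → ℝ) (Δ : ℝ) (r : ℤ) (u : ℝ) : ℝ≥0∞ :=
  ∑' k : ℤ, ENNReal.ofReal |f (u + (k : ℝ) * Δ) * f (u + ((k + r : ℤ) : ℝ) * Δ)|

section Aux

lemma ennreal_mul_le_sq_add_sq (a b : ℝ≥0∞) : a * b ≤ a ^ 2 + b ^ 2 := by
  rcases le_total a b with h | h
  · calc a * b ≤ b * b := mul_le_mul_left h b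
      _ = b ^ 2 := (sq b).symm
      _ ≤ a ^ 2 + b ^ 2 := le_add_self
  · calc a * b ≤ a * a := mul_le_mul_right h a
      _ = a ^ 2 := (sq a).symm
      _ ≤ a ^ 2 + b ^ 2 := le_self_add

/-- Periodization of a Lebesgue integral over ℝ into translates of `Ioc 0 Δ`. -/
lemma lintegral_eq_tsum_shift (g : ℝ → ℝ≥0∞) {Δ : ℝ} (hΔ : 0 < Δ) :
    ∫⁻ u, g u = ∑' k : ℤ, ∫⁻ u in Set.Ioc (0 : ℝ) Δ, g (u + (k : ℝ) * Δ) := by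
  have hshift : ∀ k : ℤ, (∫⁻ u in Set.Ioc (0 : ℝ) Δ, g (u + (k : ℝ) * Δ))
      = ∫⁻ u in Set.Ioc ((k : ℝ) * Δ) ((k : ℝ) * Δ + Δ), g u := by
    intro k
    have := (measurePreserving_add_right volume ((k : ℝ) * Δ)).setLIntegral_comp_preimage_emb
      (measurableEmbedding_addRight ((k : ℝ) * Δ)) g
      (Set.Ioc ((k : ℝ) * Δ) ((k : ℝ) * Δ + Δ))
    rw [← this, Set.preimage_add_const_Ioc]
    norm_num
  rw [funext hshift]
  have hunion : (⋃ k : ℤ, Set.Ioc ((k : ℝ) * Δ) ((k : ℝ) * Δ + Δ)) = Set.univ := by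
    have := iUnion_Ioc_zsmul hΔ
    simpa only [zsmul_eq_mul, Int.cast_add, Int.cast_one, add_mul, one_mul] using this
  have hdisj : Pairwise (Function.onFun Disjoint fun k : ℤ => Set.Ioc ((k : ℝ) * Δ) ((k : ℝ) * Δ + Δ)) := by
    have := Set.pairwise_disjoint_Ioc_add_zsmul (0:ℝ) Δ
    simpa only [zero_add, zsmul_eq_mul, Int.cast_add, Int.cast_one, add_mul, one_mul] using this
  rw [← lintegral_iUnion (fun k => measurableSet_Ioc) hdisj, hunion,
    Measure.restrict_univ]

/-- `ℝ≥0∞`-valued absolute value of `f`. -/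
noncomputable def Fe (f : ℝ → ℝ) (x : ℝ) : ℝ≥0∞ := ENNReal.ofReal |f x|

lemma Fe_measurable {f : ℝ → ℝ} (hf : Measurable f) : Measurable (Fe f) :=
  ENNReal.measurable_ofReal.comp hf.abs

lemma Gabs_eq (f : ℝ → ℝ) (Δ : ℝ) (r : ℤ) (u : ℝ) :
    Gabs f Δ r u = ∑' k : ℤ, Fe f (u + (k : ℝ) * Δ) * Fe f (u + ((k + r : ℤ) : ℝ) * Δ) := by
  refine tsum_congr fun k => ?_
  rw [Fe, Fe, abs_mul, ENNReal.ofReal_mul (abs_nonneg _)]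

/-- `Gabs` is `ℤΔ`-periodic. -/
lemma Gabs_shift (f : ℝ → ℝ) (Δ : ℝ) (r j : ℤ) (u : ℝ) :
    Gabs f Δ r (u + (j : ℝ) * Δ) = Gabs f Δ r u := by
  rw [Gabs_eq, Gabs_eq]
  calc (∑' k : ℤ, Fe f (u + (j:ℝ)*Δ + (k : ℝ) * Δ) * Fe f (u + (j:ℝ)*Δ + ((k + r : ℤ) : ℝ) * Δ))
      = ∑' k : ℤ, (fun m : ℤ => Fe f (u + (m : ℝ) * Δ) * Fe f (u + ((m + r : ℤ) : ℝ) * Δ))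
          (k + j) := by
        refine tsum_congr fun k => ?_
        simp only
        rw [show u + (j:ℝ)*Δ + (k:ℝ)*Δ = u + ((k + j : ℤ) : ℝ) * Δ by push_cast; ring,
          show u + (j:ℝ)*Δ + ((k + r : ℤ):ℝ)*Δ = u + ((k + j + r : ℤ) : ℝ) * Δ by
            push_cast; ring]
    _ = ∑' k : ℤ, Fe f (u + (k : ℝ) * Δ) * Fe f (u + ((k + r : ℤ) : ℝ) * Δ) := by
        have := (Equiv.addRight j).tsum_eq
          (fun m : ℤ => Fe f (u + (m : ℝ) * Δ) * Fe f (u + ((m + r : ℤ) : ℝ) * Δ))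
        simpa [Equiv.coe_addRight] using this

end Aux

/-- if `f ∈ L²(ℝ) ∩ L⁴(ℝ)` and `u ↦ ∑_{k∈ℤ} f(u+kΔ)²` is in `L²([0,Δ])`,
then for all `p, q ∈ ℕ`,
`∑_{k∈ℤ} |∫ f(u) f(u+pΔ) f(u+kΔ) f(u+(q+k)Δ) du| ≤ ∫₀^Δ G_p(u) G_q(u) du < ∞`. -/
theorem statement5 (f : ℝ → ℝ) (hf_meas : Measurable f)
    (hf2 : MemLp f 2 volume) (hf4 : MemLp f 4 volume) (Δ : ℝ) (hΔ : 0 < Δ)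
    (hsq : (∫⁻ u in Set.Ioc (0 : ℝ) Δ,
        (∑' k : ℤ, ENNReal.ofReal (f (u + (k : ℝ) * Δ) ^ 2)) ^ 2) < ∞) :
    ∀ p q : ℕ,
      (∑' k : ℤ, ENNReal.ofReal
          |∫ u : ℝ, f u * f (u + (p : ℝ) * Δ) * f (u + (k : ℝ) * Δ)
              * f (u + (((q : ℤ) + k : ℤ) : ℝ) * Δ)|)
        ≤ ∫⁻ u in Set.Ioc (0 : ℝ) Δ, Gabs f Δ (p : ℤ) u * Gabs f Δ (q : ℤ) u
      ∧ (∫⁻ u in Set.Ioc (0 : ℝ) Δ, Gabs f Δ (p : ℤ) u * Gabs f Δ (q : ℤ) u) < ∞ := by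
  intro p q
  have hF : Measurable (Fe f) := Fe_measurable hf_meas
  have hFc : ∀ c : ℝ, Measurable fun u => Fe f (u + c) :=
    fun c => hF.comp (measurable_add_const c)
  -- the four-fold product
  set Fp : ℤ → ℝ → ℝ≥0∞ := fun k u =>
    Fe f u * Fe f (u + (p : ℝ) * Δ) * Fe f (u + (k : ℝ) * Δ)
      * Fe f (u + (((q : ℤ) + k : ℤ) : ℝ) * Δ) with hFp_def
  have hFpm : ∀ k : ℤ, Measurable (Fp k) := fun k =>
    ((hF.mul (hFc _)).mul (hFc _)).mul (hFc _)
  -- Step 1: bound each integral term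
  have h1 : ∀ k : ℤ, ENNReal.ofReal
      |∫ u : ℝ, f u * f (u + (p : ℝ) * Δ) * f (u + (k : ℝ) * Δ)
          * f (u + (((q : ℤ) + k : ℤ) : ℝ) * Δ)| ≤ ∫⁻ u, Fp k u := by
    intro k
    rw [← Real.enorm_eq_ofReal_abs]
    refine (enorm_integral_le_lintegral_enorm _).trans (le_of_eq ?_)
    refine lintegral_congr fun u => ?_
    rw [Real.enorm_eq_ofReal_abs, abs_mul, abs_mul, abs_mul,
      ENNReal.ofReal_mul (by positivity), ENNReal.ofReal_mul (by positivity),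
      ENNReal.ofReal_mul (by positivity)]
    rfl
  -- pointwise identity: the double sum equals `G_p * G_q`
  have hpoint : ∀ u : ℝ, (∑' k : ℤ, ∑' j : ℤ, Fp k (u + (j : ℝ) * Δ))
      = Gabs f Δ (p : ℤ) u * Gabs f Δ (q : ℤ) u := by
    intro u
    rw [ENNReal.tsum_comm]
    have hinner : ∀ j : ℤ, (∑' k : ℤ, Fp k (u + (j : ℝ) * Δ))
        = (Fe f (u + (j : ℝ) * Δ) * Fe f (u + (j : ℝ) * Δ + (p : ℝ) * Δ))
          * Gabs f Δ (q : ℤ) u := by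
      intro j
      rw [← Gabs_shift f Δ (q : ℤ) j u, Gabs_eq, ← ENNReal.tsum_mul_left]
      refine tsum_congr fun k => ?_
      rw [hFp_def]
      simp only
      rw [show u + (j:ℝ)*Δ + (((q : ℤ) + k : ℤ) : ℝ) * Δ
          = u + (j:ℝ)*Δ + ((k + (q:ℤ) : ℤ) : ℝ) * Δ by push_cast; ring]
      ring
    calc (∑' j : ℤ, ∑' k : ℤ, Fp k (u + (j : ℝ) * Δ))
        = ∑' j : ℤ, (Fe f (u + (j : ℝ) * Δ) * Fe f (u + (j : ℝ) * Δ + (p : ℝ) * Δ))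
            * Gabs f Δ (q : ℤ) u := tsum_congr hinner
      _ = (∑' j : ℤ, Fe f (u + (j : ℝ) * Δ) * Fe f (u + (j : ℝ) * Δ + (p : ℝ) * Δ))
            * Gabs f Δ (q : ℤ) u := ENNReal.tsum_mul_right
      _ = Gabs f Δ (p : ℤ) u * Gabs f Δ (q : ℤ) u := by
          rw [Gabs_eq f Δ (p : ℤ) u]
          congr 1
          refine tsum_congr fun j => ?_
          rw [show u + (j:ℝ)*Δ + (p:ℝ)*Δ = u + ((j + (p:ℤ) : ℤ) : ℝ) * Δ by push_cast; ring]
  -- the main inequality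
  have hmain : (∑' k : ℤ, ENNReal.ofReal
      |∫ u : ℝ, f u * f (u + (p : ℝ) * Δ) * f (u + (k : ℝ) * Δ)
          * f (u + (((q : ℤ) + k : ℤ) : ℝ) * Δ)|)
      ≤ ∫⁻ u in Set.Ioc (0 : ℝ) Δ, Gabs f Δ (p : ℤ) u * Gabs f Δ (q : ℤ) u := by
    calc (∑' k : ℤ, ENNReal.ofReal
        |∫ u : ℝ, f u * f (u + (p : ℝ) * Δ) * f (u + (k : ℝ) * Δ)
            * f (u + (((q : ℤ) + k : ℤ) : ℝ) * Δ)|)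
        ≤ ∑' k : ℤ, ∫⁻ u, Fp k u := ENNReal.tsum_le_tsum h1
      _ = ∑' k : ℤ, ∑' j : ℤ, ∫⁻ u in Set.Ioc (0 : ℝ) Δ, Fp k (u + (j : ℝ) * Δ) :=
          tsum_congr fun k => lintegral_eq_tsum_shift (Fp k) hΔ
      _ = ∑' k : ℤ, ∫⁻ u in Set.Ioc (0 : ℝ) Δ, ∑' j : ℤ, Fp k (u + (j : ℝ) * Δ) :=
          tsum_congr fun k => (lintegral_tsum fun j =>
            ((hFpm k).comp (measurable_add_const _)).aemeasurable).symm
      _ = ∫⁻ u in Set.Ioc (0 : ℝ) Δ, ∑' k : ℤ, ∑' j : ℤ, Fp k (u + (j : ℝ) * Δ) :=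
          (lintegral_tsum fun k => (Measurable.ennreal_tsum fun j =>
            (hFpm k).comp (measurable_add_const _)).aemeasurable).symm
      _ = ∫⁻ u in Set.Ioc (0 : ℝ) Δ, Gabs f Δ (p : ℤ) u * Gabs f Δ (q : ℤ) u :=
          lintegral_congr hpoint
  refine ⟨hmain, ?_⟩
  -- finiteness
  set S : ℝ → ℝ≥0∞ := fun u => ∑' k : ℤ, ENNReal.ofReal (f (u + (k : ℝ) * Δ) ^ 2) with hS_def
  have hS_eq : ∀ u : ℝ, S u = ∑' k : ℤ, Fe f (u + (k : ℝ) * Δ) ^ 2 := by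
    intro u
    refine tsum_congr fun k => ?_
    rw [Fe, ← ENNReal.ofReal_pow (abs_nonneg _), sq_abs]
  have hGS : ∀ (r : ℤ) (u : ℝ), Gabs f Δ r u ≤ 2 * S u := by
    intro r u
    rw [Gabs_eq]
    calc (∑' k : ℤ, Fe f (u + (k : ℝ) * Δ) * Fe f (u + ((k + r : ℤ) : ℝ) * Δ))
        ≤ ∑' k : ℤ, (Fe f (u + (k : ℝ) * Δ) ^ 2 + Fe f (u + ((k + r : ℤ) : ℝ) * Δ) ^ 2) :=
          ENNReal.tsum_le_tsum fun k => ennreal_mul_le_sq_add_sq _ _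
      _ = (∑' k : ℤ, Fe f (u + (k : ℝ) * Δ) ^ 2)
            + ∑' k : ℤ, Fe f (u + ((k + r : ℤ) : ℝ) * Δ) ^ 2 := ENNReal.tsum_add
      _ = S u + S u := by
          rw [hS_eq]
          congr 1
          have := (Equiv.addRight r).tsum_eq (fun m : ℤ => Fe f (u + (m : ℝ) * Δ) ^ 2)
          simpa [Equiv.coe_addRight] using this
      _ = 2 * S u := (two_mul _).symm
  have hbound : ∀ u : ℝ, Gabs f Δ (p : ℤ) u * Gabs f Δ (q : ℤ) u ≤ 4 * (S u) ^ 2 := by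
    intro u
    calc Gabs f Δ (p : ℤ) u * Gabs f Δ (q : ℤ) u
        ≤ (2 * S u) * (2 * S u) := mul_le_mul' (hGS _ u) (hGS _ u)
      _ = 4 * (S u) ^ 2 := by ring
  calc (∫⁻ u in Set.Ioc (0 : ℝ) Δ, Gabs f Δ (p : ℤ) u * Gabs f Δ (q : ℤ) u)
      ≤ ∫⁻ u in Set.Ioc (0 : ℝ) Δ, 4 * (S u) ^ 2 := lintegral_mono hbound
    _ = 4 * ∫⁻ u in Set.Ioc (0 : ℝ) Δ, (S u) ^ 2 := lintegral_const_mul' _ _ (by norm_num)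
    _ < ∞ := ENNReal.mul_lt_top (by norm_num) hsq
end

section
/- Let Δ > 0 and let f ∈ L²(ℝ) ∩ L⁴(ℝ) be such that the function u ↦ Σ_{k∈ℤ} f(u + kΔ)² belongs to L²([0,Δ]). For q ∈ ℤ define g_{q;Δ}(u) = Σ_{k∈ℤ} f(u + kΔ) f(u + (k+q)Δ) for u ∈ [0,Δ]. Then for all p, q ∈ ℕ the series Σ_{k∈ℤ} ∫_ℝ f(u) f(u + pΔ) f(u + kΔ) f(u + (q+k)Δ) du converges absolutely and equals ∫_0^Δ g_{p;Δ}(u) g_{q;Δ}(u) du. -/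
open MeasureTheory
set_option maxHeartbeats 1000000
open scoped ENNReal

/-- `g_{q;Δ}(u) = ∑_{k∈ℤ} f(u + kΔ) f(u + (k+q)Δ)`. -/
noncomputable def gper (f : ℝ → ℝ) (Δ : ℝ) (q : ℤ) (u : ℝ) : ℝ :=
  ∑' k : ℤ, f (u + (k : ℝ) * Δ) * f (u + ((k + q : ℤ) : ℝ) * Δ)

noncomputable def Sfn (f : ℝ → ℝ) (Δ : ℝ) (u : ℝ) : ℝ≥0∞ :=
  ∑' k : ℤ, ENNReal.ofReal (f (u + (k : ℝ) * Δ) ^ 2)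

noncomputable def xfn (f : ℝ → ℝ) (Δ : ℝ) (a : ℤ) (j : ℤ) (u : ℝ) : ℝ :=
  f (u + (j : ℝ) * Δ) * f (u + ((j + a : ℤ) : ℝ) * Δ)

noncomputable def Tfn (f : ℝ → ℝ) (Δ : ℝ) (P Q : ℤ) (jm : ℤ × ℤ) (u : ℝ) : ℝ :=
  xfn f Δ P jm.1 u * xfn f Δ Q jm.2 u

noncomputable def Afn (f : ℝ → ℝ) (Δ : ℝ) (P Q : ℤ) (jm : ℤ × ℤ) : ℝ≥0∞ :=
  ∫⁻ u in Set.Ioc (0 : ℝ) Δ, ENNReal.ofReal |Tfn f Δ P Q jm u|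

noncomputable def Ifn (f : ℝ → ℝ) (Δ : ℝ) (P Q : ℤ) (jm : ℤ × ℤ) : ℝ :=
  ∫ u in Set.Ioc (0 : ℝ) Δ, Tfn f Δ P Q jm u

noncomputable def Ffn (f : ℝ → ℝ) (Δ : ℝ) (p q : ℕ) (k : ℤ) (u : ℝ) : ℝ :=
  f u * f (u + (p : ℝ) * Δ) * f (u + (k : ℝ) * Δ) * f (u + (((q : ℤ) + k : ℤ) : ℝ) * Δ)

lemma gper_eq_tsum_xfn (f : ℝ → ℝ) (Δ : ℝ) (a : ℤ) (u : ℝ) :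
    gper f Δ a u = ∑' j : ℤ, xfn f Δ a j u := rfl

lemma Sfn_meas {f : ℝ → ℝ} (hf : Measurable f) (Δ : ℝ) : Measurable (Sfn f Δ) :=
  Measurable.ennreal_tsum fun k =>
    ((hf.comp (measurable_add_const _)).pow_const 2).ennreal_ofReal

lemma Sfn_shift (f : ℝ → ℝ) (Δ : ℝ) (a : ℤ) (u : ℝ) :
    ∑' k : ℤ, ENNReal.ofReal (f (u + ((k + a : ℤ) : ℝ) * Δ) ^ 2) = Sfn f Δ u := by
  rw [Sfn, ← (Equiv.addRight a).tsum_eq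
    (fun k : ℤ => ENNReal.ofReal (f (u + (k : ℝ) * Δ) ^ 2))]
  simp [Equiv.coe_addRight]

lemma xfn_meas {f : ℝ → ℝ} (hf : Measurable f) (Δ : ℝ) (a j : ℤ) :
    Measurable (xfn f Δ a j) :=
  (hf.comp (measurable_add_const _)).mul (hf.comp (measurable_add_const _))

lemma Tfn_meas {f : ℝ → ℝ} (hf : Measurable f) (Δ : ℝ) (P Q : ℤ) (jm : ℤ × ℤ) :
    Measurable (Tfn f Δ P Q jm) :=
  (xfn_meas hf Δ P jm.1).mul (xfn_meas hf Δ Q jm.2)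

lemma Ffn_meas {f : ℝ → ℝ} (hf : Measurable f) (Δ : ℝ) (p q : ℕ) (k : ℤ) :
    Measurable (Ffn f Δ p q k) :=
  ((hf.mul (hf.comp (measurable_add_const _))).mul
    (hf.comp (measurable_add_const _))).mul (hf.comp (measurable_add_const _))

lemma W_le (f : ℝ → ℝ) (Δ : ℝ) (a : ℤ) (u : ℝ) :
    ∑' j : ℤ, ENNReal.ofReal |xfn f Δ a j u| ≤ 2 * Sfn f Δ u := by
  calc ∑' j : ℤ, ENNReal.ofReal |xfn f Δ a j u|
      ≤ ∑' j : ℤ, (ENNReal.ofReal (f (u + (j : ℝ) * Δ) ^ 2)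
          + ENNReal.ofReal (f (u + ((j + a : ℤ) : ℝ) * Δ) ^ 2)) := by
        refine ENNReal.tsum_le_tsum fun j => ?_
        rw [← ENNReal.ofReal_add (sq_nonneg _) (sq_nonneg _)]
        refine ENNReal.ofReal_le_ofReal ?_
        rw [xfn, abs_mul]
        nlinarith [sq_nonneg (|f (u + (j : ℝ) * Δ)| - |f (u + ((j + a : ℤ) : ℝ) * Δ)|),
          sq_abs (f (u + (j : ℝ) * Δ)), sq_abs (f (u + ((j + a : ℤ) : ℝ) * Δ)),
          abs_nonneg (f (u + (j : ℝ) * Δ)), abs_nonneg (f (u + ((j + a : ℤ) : ℝ) * Δ))]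
    _ = Sfn f Δ u + Sfn f Δ u := by rw [ENNReal.tsum_add, Sfn_shift]; rfl
    _ = 2 * Sfn f Δ u := (two_mul _).symm

lemma lint_shift (g : ℝ → ℝ≥0∞) (hg : Measurable g) (c Δ : ℝ) :
    ∫⁻ u in Set.Ioc c (c + Δ), g u = ∫⁻ u in Set.Ioc 0 Δ, g (u + c) := by
  conv_lhs => rw [← map_add_right_eq_self volume c]
  rw [setLIntegral_map measurableSet_Ioc hg (measurable_add_const c),
    Set.preimage_add_const_Ioc, sub_self, add_sub_cancel_left]

lemma int_shift (g : ℝ → ℝ) (hg : Measurable g) (c Δ : ℝ) :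
    ∫ u in Set.Ioc c (c + Δ), g u = ∫ u in Set.Ioc 0 Δ, g (u + c) := by
  conv_lhs => rw [← map_add_right_eq_self volume c]
  rw [setIntegral_map measurableSet_Ioc
      (by rw [map_add_right_eq_self volume c]; exact hg.aestronglyMeasurable)
      (measurable_add_const c).aemeasurable,
    Set.preimage_add_const_Ioc, sub_self, add_sub_cancel_left]

lemma cover_univ {Δ : ℝ} (hΔ : 0 < Δ) :
    (⋃ j : ℤ, Set.Ioc ((j : ℝ) * Δ) ((j : ℝ) * Δ + Δ)) = Set.univ := by
  have h := iUnion_Ioc_add_zsmul hΔ 0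
  simpa [zsmul_eq_mul, add_mul, add_assoc] using h

lemma cover_disj (Δ : ℝ) :
    Pairwise (Function.onFun Disjoint fun j : ℤ => Set.Ioc ((j : ℝ) * Δ) ((j : ℝ) * Δ + Δ)) := by
  have h := Set.pairwise_disjoint_Ioc_add_zsmul (0 : ℝ) Δ
  simpa [zsmul_eq_mul, add_mul, add_assoc] using h

/-- reindexing equivalence on `ℤ × ℤ`. -/
def eIdx : ℤ × ℤ ≃ ℤ × ℤ where
  toFun kj := (kj.2, kj.2 + kj.1)
  invFun jm := (jm.2 - jm.1, jm.1)
  left_inv := fun ⟨k, j⟩ => by simp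
  right_inv := fun ⟨j, m⟩ => by simp

lemma hpt (f : ℝ → ℝ) (Δ : ℝ) (P Q : ℤ) (u : ℝ) :
    (∑' jm : ℤ × ℤ, ENNReal.ofReal |Tfn f Δ P Q jm u|)
      ≤ (2 * Sfn f Δ u) * (2 * Sfn f Δ u) := by
  have h1 : (∑' jm : ℤ × ℤ, ENNReal.ofReal |Tfn f Δ P Q jm u|)
      = (∑' j : ℤ, ENNReal.ofReal |xfn f Δ P j u|)
        * (∑' m : ℤ, ENNReal.ofReal |xfn f Δ Q m u|) := by
    rw [ENNReal.tsum_prod']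
    have h0 : ∀ j m : ℤ, ENNReal.ofReal |Tfn f Δ P Q (j, m) u|
        = ENNReal.ofReal |xfn f Δ P j u| * ENNReal.ofReal |xfn f Δ Q m u| := by
      intro j m
      rw [Tfn, abs_mul, ENNReal.ofReal_mul (abs_nonneg _)]
    simp_rw [h0, ENNReal.tsum_mul_left, ENNReal.tsum_mul_right]
  rw [h1]
  exact mul_le_mul' (W_le f Δ P u) (W_le f Δ Q u)

lemma htot {f : ℝ → ℝ} (hf : Measurable f) {Δ : ℝ}
    (hsq : (∫⁻ u in Set.Ioc (0 : ℝ) Δ, Sfn f Δ u ^ 2) < ∞) (P Q : ℤ) :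
    (∑' jm : ℤ × ℤ, Afn f Δ P Q jm) ≠ ∞ := by
  have hbound : (∫⁻ u in Set.Ioc (0 : ℝ) Δ, (2 * Sfn f Δ u) * (2 * Sfn f Δ u)) < ∞ := by
    have heq : ∀ u : ℝ, (2 * Sfn f Δ u) * (2 * Sfn f Δ u) = 4 * Sfn f Δ u ^ 2 := by
      intro u; ring
    calc (∫⁻ u in Set.Ioc (0 : ℝ) Δ, (2 * Sfn f Δ u) * (2 * Sfn f Δ u))
        = ∫⁻ u in Set.Ioc (0 : ℝ) Δ, 4 * Sfn f Δ u ^ 2 := by simp_rw [heq]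
      _ = 4 * ∫⁻ u in Set.Ioc (0 : ℝ) Δ, Sfn f Δ u ^ 2 :=
          lintegral_const_mul 4 ((Sfn_meas hf Δ).pow_const 2)
      _ < ∞ := ENNReal.mul_lt_top (by norm_num) hsq
  have hswap : (∑' jm : ℤ × ℤ, Afn f Δ P Q jm)
      = ∫⁻ u in Set.Ioc (0 : ℝ) Δ, ∑' jm : ℤ × ℤ, ENNReal.ofReal |Tfn f Δ P Q jm u| :=
    (lintegral_tsum fun jm => ((Tfn_meas hf Δ P Q jm).abs.ennreal_ofReal).aemeasurable).symm
  rw [hswap]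
  exact ((lintegral_mono fun u => hpt f Δ P Q u).trans_lt hbound).ne

lemma hsumx (f : ℝ → ℝ) (Δ : ℝ) (a : ℤ) (u : ℝ) (hu : Sfn f Δ u < ∞) :
    Summable fun j : ℤ => |xfn f Δ a j u| := by
  have h1 : (∑' j : ℤ, ENNReal.ofReal |xfn f Δ a j u|) ≠ ∞ :=
    ((W_le f Δ a u).trans_lt (ENNReal.mul_lt_top (by norm_num) hu)).ne
  have h2 := ENNReal.summable_toReal h1
  simpa [ENNReal.toReal_ofReal (abs_nonneg _)] using h2

lemma hprod (f : ℝ → ℝ) (Δ : ℝ) (P Q : ℤ) (u : ℝ) (hu : Sfn f Δ u < ∞) :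
    gper f Δ P u * gper f Δ Q u = ∑' jm : ℤ × ℤ, Tfn f Δ P Q jm u := by
  have hxP := hsumx f Δ P u hu
  have hxQ := hsumx f Δ Q u hu
  rw [gper_eq_tsum_xfn, gper_eq_tsum_xfn]
  have h1 : Summable fun j : ℤ => xfn f Δ P j u := hxP.of_abs
  have h2 : Summable fun j : ℤ => xfn f Δ Q j u := hxQ.of_abs
  have h3 : Summable fun z : ℤ × ℤ => xfn f Δ P z.1 u * xfn f Δ Q z.2 u :=
    summable_mul_of_summable_norm (R := ℝ)
      (f := fun j : ℤ => xfn f Δ P j u) (g := fun m : ℤ => xfn f Δ Q m u)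
      (by simpa [Real.norm_eq_abs] using hxP) (by simpa [Real.norm_eq_abs] using hxQ)
  exact Summable.tsum_mul_tsum h1 h2 h3

lemma hFT (f : ℝ → ℝ) (Δ : ℝ) (p q : ℕ) (j k : ℤ) (u : ℝ) :
    Ffn f Δ p q k (u + (j : ℝ) * Δ) = Tfn f Δ (p : ℤ) (q : ℤ) (j, j + k) u := by
  rw [Ffn, Tfn]
  simp only [xfn]
  rw [show u + (j : ℝ) * Δ + (p : ℝ) * Δ = u + ((j + (p : ℤ) : ℤ) : ℝ) * Δ by push_cast; ring,
    show u + (j : ℝ) * Δ + (k : ℝ) * Δ = u + ((j + k : ℤ) : ℝ) * Δ by push_cast; ring,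
    show u + (j : ℝ) * Δ + (((q : ℤ) + k : ℤ) : ℝ) * Δ
        = u + ((j + k + (q : ℤ) : ℤ) : ℝ) * Δ by push_cast; ring]
  ring

lemma hFlint {f : ℝ → ℝ} (hf : Measurable f) {Δ : ℝ} (hΔ : 0 < Δ) (p q : ℕ) (k : ℤ) :
    (∫⁻ u : ℝ, ENNReal.ofReal |Ffn f Δ p q k u|)
      = ∑' j : ℤ, Afn f Δ (p : ℤ) (q : ℤ) (j, j + k) := by
  rw [← setLIntegral_univ, ← cover_univ hΔ,
    lintegral_iUnion (fun _ => measurableSet_Ioc) (cover_disj Δ)]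
  refine tsum_congr fun j => ?_
  rw [lint_shift _ ((Ffn_meas hf Δ p q k).abs.ennreal_ofReal) ((j : ℝ) * Δ) Δ]
  refine lintegral_congr fun u => ?_
  rw [hFT f Δ p q j k u]

lemma hsec {f : ℝ → ℝ} (hf : Measurable f) {Δ : ℝ}
    (hsq : (∫⁻ u in Set.Ioc (0 : ℝ) Δ, Sfn f Δ u ^ 2) < ∞) (P Q k : ℤ) :
    (∑' j : ℤ, Afn f Δ P Q (j, j + k)) ≠ ∞ := by
  refine ne_top_of_le_ne_top (htot hf hsq P Q) ?_
  exact ENNReal.tsum_comp_le_tsum_of_injective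
    (f := fun j : ℤ => (j, j + k)) (fun a b h => by simpa using congrArg Prod.fst h) _

lemma hFint {f : ℝ → ℝ} (hf : Measurable f) {Δ : ℝ} (hΔ : 0 < Δ)
    (hsq : (∫⁻ u in Set.Ioc (0 : ℝ) Δ, Sfn f Δ u ^ 2) < ∞) (p q : ℕ) (k : ℤ) :
    Integrable (Ffn f Δ p q k) volume := by
  refine ⟨(Ffn_meas hf Δ p q k).aestronglyMeasurable, ?_⟩
  rw [hasFiniteIntegral_iff_norm]
  simp_rw [Real.norm_eq_abs]
  rw [hFlint hf hΔ p q k]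
  exact (hsec hf hsq (p : ℤ) (q : ℤ) k).lt_top

lemma hFeq {f : ℝ → ℝ} (hf : Measurable f) {Δ : ℝ} (hΔ : 0 < Δ)
    (hsq : (∫⁻ u in Set.Ioc (0 : ℝ) Δ, Sfn f Δ u ^ 2) < ∞) (p q : ℕ) (k : ℤ) :
    (∫ u : ℝ, Ffn f Δ p q k u) = ∑' j : ℤ, Ifn f Δ (p : ℤ) (q : ℤ) (j, j + k) := by
  rw [← setIntegral_univ, ← cover_univ hΔ,
    integral_iUnion (fun _ => measurableSet_Ioc) (cover_disj Δ)
      ((hFint hf hΔ hsq p q k).integrableOn)]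
  refine tsum_congr fun j => ?_
  rw [int_shift _ (Ffn_meas hf Δ p q k) ((j : ℝ) * Δ) Δ]
  refine setIntegral_congr_fun measurableSet_Ioc fun u _ => ?_
  rw [hFT f Δ p q j k u]

/-- if `f ∈ L²(ℝ) ∩ L⁴(ℝ)` and `u ↦ ∑_{k∈ℤ} f(u+kΔ)²` is in `L²([0,Δ])`,
then for all `p, q ∈ ℕ` the series `∑_{k∈ℤ} ∫ f(u) f(u+pΔ) f(u+kΔ) f(u+(q+k)Δ) du`
converges absolutely and equals `∫₀^Δ g_{p;Δ}(u) g_{q;Δ}(u) du`. -/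
theorem statement6 (f : ℝ → ℝ) (hf_meas : Measurable f)
    (hf2 : MemLp f 2 volume) (hf4 : MemLp f 4 volume) (Δ : ℝ) (hΔ : 0 < Δ)
    (hsq : (∫⁻ u in Set.Ioc (0 : ℝ) Δ,
        (∑' k : ℤ, ENNReal.ofReal (f (u + (k : ℝ) * Δ) ^ 2)) ^ 2) < ∞) :
    ∀ p q : ℕ,
      Summable (fun k : ℤ =>
        |∫ u : ℝ, f u * f (u + (p : ℝ) * Δ) * f (u + (k : ℝ) * Δ)
            * f (u + (((q : ℤ) + k : ℤ) : ℝ) * Δ)|)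
      ∧ (∑' k : ℤ, ∫ u : ℝ, f u * f (u + (p : ℝ) * Δ) * f (u + (k : ℝ) * Δ)
            * f (u + (((q : ℤ) + k : ℤ) : ℝ) * Δ))
          = ∫ u in Set.Ioc (0 : ℝ) Δ, gper f Δ (p : ℤ) u * gper f Δ (q : ℤ) u := by
  intro p q
  have hsq' : (∫⁻ u in Set.Ioc (0 : ℝ) Δ, Sfn f Δ u ^ 2) < ∞ := hsq
  have hgoal_1 : (fun k : ℤ =>
      |∫ u : ℝ, f u * f (u + (p : ℝ) * Δ) * f (u + (k : ℝ) * Δ)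
          * f (u + (((q : ℤ) + k : ℤ) : ℝ) * Δ)|)
      = fun k : ℤ => |∫ u : ℝ, Ffn f Δ p q k u| := rfl
  -- a.e. finiteness of S on the interval
  have hae : ∀ᵐ u ∂(volume.restrict (Set.Ioc (0 : ℝ) Δ)), Sfn f Δ u < ∞ := by
    have h2 := ae_lt_top ((Sfn_meas hf_meas Δ).pow_const 2) hsq'.ne
    filter_upwards [h2] with u hu
    rw [lt_top_iff_ne_top] at hu ⊢
    intro h
    exact hu (by rw [h]; simp)
  have htot' := htot hf_meas hsq' (p : ℤ) (q : ℤ)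
  -- swap sum and integral
  have hswap : (∫ u in Set.Ioc (0 : ℝ) Δ, ∑' jm : ℤ × ℤ, Tfn f Δ (p : ℤ) (q : ℤ) jm u)
      = ∑' jm : ℤ × ℤ, Ifn f Δ (p : ℤ) (q : ℤ) jm := by
    refine integral_tsum (fun jm => (Tfn_meas hf_meas Δ _ _ jm).aestronglyMeasurable) ?_
    have he : ∀ jm : ℤ × ℤ, (∫⁻ u in Set.Ioc (0 : ℝ) Δ,
        ‖Tfn f Δ (p : ℤ) (q : ℤ) jm u‖ₑ) = Afn f Δ (p : ℤ) (q : ℤ) jm := by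
      intro jm
      rw [Afn]
      refine lintegral_congr fun u => ?_
      rw [Real.enorm_eq_ofReal_abs]
    simp_rw [he]
    exact htot'
  have hleft : (∫ u in Set.Ioc (0 : ℝ) Δ, gper f Δ (p : ℤ) u * gper f Δ (q : ℤ) u)
      = ∑' jm : ℤ × ℤ, Ifn f Δ (p : ℤ) (q : ℤ) jm := by
    rw [← hswap]
    exact integral_congr_ae (by filter_upwards [hae] with u hu using hprod f Δ _ _ u hu)
  -- summability of I
  have hIbd : ∀ jm : ℤ × ℤ, |Ifn f Δ (p : ℤ) (q : ℤ) jm| ≤ (Afn f Δ (p : ℤ) (q : ℤ) jm).toReal := by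
    intro jm
    have h := norm_integral_le_lintegral_norm
      (μ := volume.restrict (Set.Ioc (0 : ℝ) Δ)) (Tfn f Δ (p : ℤ) (q : ℤ) jm)
    simpa [Ifn, Afn, Real.norm_eq_abs] using h
  have hAsum : Summable fun jm : ℤ × ℤ => (Afn f Δ (p : ℤ) (q : ℤ) jm).toReal :=
    ENNReal.summable_toReal htot'
  have hIsum : Summable (Ifn f Δ (p : ℤ) (q : ℤ)) :=
    (Summable.of_nonneg_of_le (fun jm => abs_nonneg _) hIbd hAsum).of_abs
  -- summability of the section sums of A
  have hAksum : Summable fun k : ℤ => (∑' j : ℤ, Afn f Δ (p : ℤ) (q : ℤ) (j, j + k)).toReal := by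
    refine ENNReal.summable_toReal ?_
    have h1 : (∑' kj : ℤ × ℤ, Afn f Δ (p : ℤ) (q : ℤ) (eIdx kj))
        = ∑' jm : ℤ × ℤ, Afn f Δ (p : ℤ) (q : ℤ) jm := eIdx.tsum_eq _
    have h2 : (∑' k : ℤ, ∑' j : ℤ, Afn f Δ (p : ℤ) (q : ℤ) (j, j + k))
        = ∑' kj : ℤ × ℤ, Afn f Δ (p : ℤ) (q : ℤ) (eIdx kj) := by
      rw [ENNReal.tsum_prod']; rfl
    rw [h2, h1]; exact htot'
  have hsum1 : Summable (fun k : ℤ => |∫ u : ℝ, Ffn f Δ p q k u|) := by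
    refine Summable.of_nonneg_of_le (fun k => abs_nonneg _) (fun k => ?_) hAksum
    have h := norm_integral_le_lintegral_norm (μ := volume) (Ffn f Δ p q k)
    rw [Real.norm_eq_abs] at h
    calc |∫ u : ℝ, Ffn f Δ p q k u| ≤ (∫⁻ u : ℝ, ENNReal.ofReal ‖Ffn f Δ p q k u‖).toReal := h
      _ = (∑' j : ℤ, Afn f Δ (p : ℤ) (q : ℤ) (j, j + k)).toReal := by
          simp_rw [Real.norm_eq_abs]; rw [hFlint hf_meas hΔ p q k]
  constructor
  · rw [hgoal_1]; exact hsum1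
  -- the equality
  have hIe : Summable fun kj : ℤ × ℤ => Ifn f Δ (p : ℤ) (q : ℤ) (eIdx kj) :=
    (eIdx.summable_iff).mpr hIsum
  have key : (∑' k : ℤ, ∫ u : ℝ, Ffn f Δ p q k u)
      = ∫ u in Set.Ioc (0 : ℝ) Δ, gper f Δ (p : ℤ) u * gper f Δ (q : ℤ) u := by
    calc (∑' k : ℤ, ∫ u : ℝ, Ffn f Δ p q k u)
        = ∑' k : ℤ, ∑' j : ℤ, Ifn f Δ (p : ℤ) (q : ℤ) (j, j + k) := by
          exact tsum_congr fun k => hFeq hf_meas hΔ hsq' p q k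
      _ = ∑' kj : ℤ × ℤ, Ifn f Δ (p : ℤ) (q : ℤ) (eIdx kj) := by
          rw [Summable.tsum_prod' hIe (fun k => hIe.prod_factor k)]; rfl
      _ = ∑' jm : ℤ × ℤ, Ifn f Δ (p : ℤ) (q : ℤ) jm := eIdx.tsum_eq _
      _ = ∫ u in Set.Ioc (0 : ℝ) Δ, gper f Δ (p : ℤ) u * gper f Δ (q : ℤ) u := hleft.symm
  exact key
end

section
/- Let 1/2 < H ≤ 3/4 and define f(s) = Σ_{i≥1} i^{-H} 1_{(i,i+1]}(s). Then the function u ↦ Σ_{k∈ℤ} f(u+k)² belongs to L²([0,1]), but the autocovariances γ(h) = ∫_ℝ f(s) f(s + h) ds, h ∈ ℤ, satisfy Σ_{h∈ℤ} γ(h)² = ∞. -/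
open MeasureTheory
open scoped ENNReal

/-- The kernel `f(s) = ∑_{i≥1} i^{-H} 1_{(i,i+1]}(s)` (indexing `i = k+1`, `k ∈ ℕ`). -/
noncomputable def powKernel (H : ℝ) (s : ℝ) : ℝ :=
  ∑' k : ℕ, Set.indicator (Set.Ioc ((k : ℝ) + 1) ((k : ℝ) + 2))
    (fun _ => ((k : ℝ) + 1) ^ (-H)) s

lemma powKernel_of_mem {H s : ℝ} {j : ℕ} (hs : s ∈ Set.Ioc ((j : ℝ) + 1) ((j : ℝ) + 2)) :
    powKernel H s = ((j : ℝ) + 1) ^ (-H) := by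
  unfold powKernel
  refine (tsum_eq_single j ?_).trans (Set.indicator_of_mem hs _)
  intro k hk
  apply Set.indicator_of_notMem
  intro hks
  apply hk
  have h1 := hs.1; have h2 := hs.2; have h3 := hks.1; have h4 := hks.2
  have hA : (k : ℝ) < (j : ℝ) + 1 := by linarith
  have hkj : k < j + 1 := by exact_mod_cast hA
  have hB : (j : ℝ) < (k : ℝ) + 1 := by linarith
  have hjk : j < k + 1 := by exact_mod_cast hB
  omega

lemma powKernel_of_le {H s : ℝ} (hs : s ≤ 1) : powKernel H s = 0 := by
  unfold powKernel
  convert tsum_zero with k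
  apply Set.indicator_of_notMem
  intro hks
  have h1 := hks.1
  have h2 : (0 : ℝ) ≤ (k : ℝ) := Nat.cast_nonneg k
  linarith

lemma exists_mem_Ioc {s : ℝ} (hs : 1 < s) :
    ∃ j : ℕ, s ∈ Set.Ioc ((j : ℝ) + 1) ((j : ℝ) + 2) := by
  have h2 : 2 ≤ ⌈s⌉ := by
    have : (1 : ℤ) < ⌈s⌉ := by
      rw [Int.lt_ceil]; exact_mod_cast hs
    omega
  refine ⟨(⌈s⌉ - 2).toNat, ?_, ?_⟩
  · have hj : (((⌈s⌉ - 2).toNat : ℕ) : ℝ) = (⌈s⌉ : ℝ) - 2 := by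
      have := Int.toNat_of_nonneg (by omega : (0 : ℤ) ≤ ⌈s⌉ - 2)
      exact_mod_cast congrArg (Int.cast : ℤ → ℝ) this
    rw [hj]
    have := Int.ceil_lt_add_one s
    linarith
  · have hj : (((⌈s⌉ - 2).toNat : ℕ) : ℝ) = (⌈s⌉ : ℝ) - 2 := by
      have := Int.toNat_of_nonneg (by omega : (0 : ℤ) ≤ ⌈s⌉ - 2)
      exact_mod_cast congrArg (Int.cast : ℤ → ℝ) this
    rw [hj]
    have := Int.le_ceil s
    linarith

lemma powKernel_nonneg (H s : ℝ) : 0 ≤ powKernel H s := by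
  rcases le_or_gt s 1 with h | h
  · rw [powKernel_of_le h]
  · obtain ⟨j, hj⟩ := exists_mem_Ioc h
    rw [powKernel_of_mem hj]
    positivity

lemma powKernel_measurable (H : ℝ) : Measurable (powKernel H) := by
  have heq : powKernel H = fun s =>
      Set.indicator (Set.Ioi (1 : ℝ)) (fun s => ((⌈s⌉ : ℝ) - 1) ^ (-H)) s := by
    funext s
    rcases le_or_gt s 1 with h | h
    · rw [powKernel_of_le h, Set.indicator_of_notMem (by simpa using h)]
    · obtain ⟨j, hj⟩ := exists_mem_Ioc h
      have hmem1 : s ∈ Set.Ioi (1 : ℝ) := h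
      rw [powKernel_of_mem hj, Set.indicator_of_mem hmem1]
      have hc : ⌈s⌉ = (j : ℤ) + 2 := by
        rw [Int.ceil_eq_iff]
        constructor
        · push_cast; linarith [hj.1]
        · push_cast; linarith [hj.2]
      rw [hc]
      push_cast
      ring_nf
  rw [heq]
  apply Measurable.indicator ?_ measurableSet_Ioi
  exact (measurable_from_top (f := fun z : ℤ => ((z : ℝ) - 1) ^ (-H))).comp Int.measurable_ceil

lemma integrable_powKernel_mul (H : ℝ) (hH1 : 1 / 2 < H) {t : ℝ} (ht : 0 ≤ t) :
    Integrable (fun s => powKernel H s * powKernel H (s + t)) := by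
  have hg : Integrable
      (Set.indicator (Set.Ioi (1 : ℝ)) fun s => 2 ^ (2 * H) * s ^ (-(2 * H))) := by
    rw [integrable_indicator_iff measurableSet_Ioi]
    exact (integrableOn_Ioi_rpow_of_lt (by linarith) one_pos).const_mul _
  apply Integrable.mono' hg
  · exact ((powKernel_measurable H).mul
      ((powKernel_measurable H).comp (measurable_id.add_const t))).aestronglyMeasurable
  · filter_upwards with s
    rw [Real.norm_of_nonneg (mul_nonneg (powKernel_nonneg _ _) (powKernel_nonneg _ _))]
    rcases le_or_gt s 1 with h | h
    · rw [powKernel_of_le h, zero_mul]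
      refine Set.indicator_nonneg (fun x hx => ?_) s
      have hx1 : (0 : ℝ) ≤ x := by have := Set.mem_Ioi.mp hx; linarith
      exact mul_nonneg (by positivity) (Real.rpow_nonneg hx1 _)
    · obtain ⟨j, hj⟩ := exists_mem_Ioc h
      have hmem1 : s ∈ Set.Ioi (1 : ℝ) := h
      rw [Set.indicator_of_mem hmem1, powKernel_of_mem hj]
      have hj1 : (0 : ℝ) < (j : ℝ) + 1 := by positivity
      have hst : powKernel H (s + t) ≤ ((j : ℝ) + 1) ^ (-H) := by
        rcases le_or_gt (s + t) 1 with h' | h'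
        · rw [powKernel_of_le h']; positivity
        · obtain ⟨j', hj'⟩ := exists_mem_Ioc h'
          rw [powKernel_of_mem hj']
          apply Real.rpow_le_rpow_of_nonpos hj1 ?_ (by linarith)
          have hr : (j : ℝ) + 1 < (j' : ℝ) + 2 :=
            lt_of_lt_of_le hj.1 (le_trans (le_add_of_nonneg_right ht) hj'.2)
          have : (j : ℝ) < (j' : ℝ) + 1 := by linarith
          have hjj : j < j' + 1 := by exact_mod_cast this
          have : (j : ℝ) ≤ (j' : ℝ) := by exact_mod_cast Nat.lt_succ_iff.mp hjj
          linarith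
      calc ((j : ℝ) + 1) ^ (-H) * powKernel H (s + t)
          ≤ ((j : ℝ) + 1) ^ (-H) * ((j : ℝ) + 1) ^ (-H) := by
            exact mul_le_mul_of_nonneg_left hst (by positivity)
        _ = ((j : ℝ) + 1) ^ (-(2 * H)) := by
            rw [← Real.rpow_add hj1, show -H + -H = -(2 * H) by ring]
        _ ≤ (s / 2) ^ (-(2 * H)) := by
            apply Real.rpow_le_rpow_of_nonpos (by linarith) ?_ (by linarith)
            linarith [hj.2]
        _ = 2 ^ (2 * H) * s ^ (-(2 * H)) := by
            rw [Real.div_rpow (by linarith) (by norm_num),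
              Real.rpow_neg (by norm_num : (0:ℝ) ≤ 2), div_eq_mul_inv, inv_inv, mul_comm]

lemma gamma_sq_lb (H : ℝ) (hH1 : 1 / 2 < H) (hH2 : H ≤ 3 / 4) (n : ℕ) :
    2 ^ (-(2 * H)) * ((n : ℝ) + 1)⁻¹ ≤
      (∫ s : ℝ, powKernel H s * powKernel H (s + ((n : ℝ) + 1))) ^ 2 := by
  set t : ℝ := (n : ℝ) + 1 with ht_def
  have ht0 : (0 : ℝ) < t := by positivity
  have ht1 : (1 : ℝ) ≤ t := by simp [ht_def]
  have hF_int := integrable_powKernel_mul H hH1 (t := t) ht0.le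
  set c₁ : ℝ := t ^ (-H) * (2 * t) ^ (-H) with hc₁_def
  have hc₁ : 0 < c₁ := by positivity
  have hset : ∀ x ∈ Set.Ioc (1 : ℝ) (t + 1), c₁ ≤ powKernel H x * powKernel H (x + t) := by
    intro x hx
    obtain ⟨j, hj⟩ := exists_mem_Ioc hx.1
    have hx2 : x ≤ (n : ℝ) + 2 := by
      have := hx.2; rw [ht_def] at this; linarith
    have hjn : (j : ℝ) ≤ (n : ℝ) := by
      have h1 : (j : ℝ) < (n : ℝ) + 1 := by linarith [hj.1]
      have h2 : j < n + 1 := by exact_mod_cast h1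
      exact_mod_cast Nat.lt_succ_iff.mp h2
    have hmem2 : x + t ∈ Set.Ioc (((j + n + 1 : ℕ) : ℝ) + 1) (((j + n + 1 : ℕ) : ℝ) + 2) := by
      constructor
      · push_cast; rw [ht_def]; linarith [hj.1]
      · push_cast; rw [ht_def]; linarith [hj.2]
    rw [powKernel_of_mem hj, powKernel_of_mem hmem2]
    have hb1 : t ^ (-H) ≤ ((j : ℝ) + 1) ^ (-H) := by
      apply Real.rpow_le_rpow_of_nonpos (by positivity) ?_ (by linarith)
      rw [ht_def]; linarith
    have hb2 : (2 * t) ^ (-H) ≤ (((j + n + 1 : ℕ) : ℝ) + 1) ^ (-H) := by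
      apply Real.rpow_le_rpow_of_nonpos (by positivity) ?_ (by linarith)
      push_cast; rw [ht_def]; linarith
    exact mul_le_mul hb1 hb2 (by positivity) (by positivity)
  have hlow := setIntegral_ge_of_const_le measurableSet_Ioc
    (measure_Ioc_lt_top).ne hset (hF_int.integrableOn)
  have hvol : (volume (Set.Ioc (1 : ℝ) (t + 1))).toReal = t := by
    rw [Real.volume_Ioc, ENNReal.toReal_ofReal (by linarith)]
    ring
  rw [Measure.real, hvol, smul_eq_mul, mul_comm t c₁] at hlow
  have hle := setIntegral_le_integral (s := Set.Ioc (1:ℝ) (t+1)) hF_int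
    (Filter.Eventually.of_forall fun s =>
      mul_nonneg (powKernel_nonneg _ _) (powKernel_nonneg _ _))
  have hγ : c₁ * t ≤ ∫ s : ℝ, powKernel H s * powKernel H (s + t) := le_trans hlow hle
  have hγ0 : (0 : ℝ) ≤ c₁ * t := by positivity
  have e1 : c₁ * t = 2 ^ (-H) * t ^ (1 - 2 * H) := by
    rw [hc₁_def, Real.mul_rpow (by norm_num) ht0.le]
    calc t ^ (-H) * (2 ^ (-H) * t ^ (-H)) * t
        = 2 ^ (-H) * (t ^ (-H) * t ^ (-H) * t ^ (1 : ℝ)) := by rw [Real.rpow_one]; ring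
      _ = 2 ^ (-H) * t ^ (1 - 2 * H) := by
          rw [← Real.rpow_add ht0, ← Real.rpow_add ht0,
            show -H + -H + 1 = 1 - 2 * H by ring]
  have e2 : (c₁ * t) ^ 2 = 2 ^ (-(2 * H)) * t ^ (2 - 4 * H) := by
    rw [e1, mul_pow, sq, sq, ← Real.rpow_add (by norm_num : (0:ℝ) < 2),
      ← Real.rpow_add ht0, show -H + -H = -(2 * H) by ring,
      show (1 - 2 * H) + (1 - 2 * H) = 2 - 4 * H by ring]
  have e3 : t⁻¹ ≤ t ^ (2 - 4 * H) := by
    rw [← Real.rpow_neg_one t]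
    exact Real.rpow_le_rpow_of_exponent_le ht1 (by linarith)
  calc 2 ^ (-(2 * H)) * t⁻¹ ≤ 2 ^ (-(2 * H)) * t ^ (2 - 4 * H) := by
        apply mul_le_mul_of_nonneg_left e3 (by positivity)
    _ = (c₁ * t) ^ 2 := e2.symm
    _ ≤ (∫ s : ℝ, powKernel H s * powKernel H (s + t)) ^ 2 := by
        exact pow_le_pow_left₀ hγ0 hγ 2

/-- for `1/2 < H ≤ 3/4` and `f(s) = ∑_{i≥1} i^{-H} 1_{(i,i+1]}(s)`,
the periodized square `u ↦ ∑_{k∈ℤ} f(u+k)²` belongs to `L²([0,1])`, but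
`∑_{h∈ℤ} γ(h)² = ∞`, where `γ(h) = ∫ f(s) f(s+h) ds`. -/
theorem statement7 (H : ℝ) (hH1 : 1 / 2 < H) (hH2 : H ≤ 3 / 4) :
    MemLp (fun u : ℝ => ∑' k : ℤ, powKernel H (u + (k : ℝ)) ^ 2) 2
        (volume.restrict (Set.Icc (0 : ℝ) 1))
    ∧ ¬ Summable (fun h : ℤ =>
        (∫ s : ℝ, powKernel H s * powKernel H (s + (h : ℝ))) ^ 2) := by
  constructor
  · -- Part 1: a.e. equal to the constant `∑' n, ((n+1)^(-H))^2`
    set C : ℝ := ∑' n : ℕ, (((n : ℝ) + 1) ^ (-H)) ^ 2 with hC_def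
    apply MemLp.ae_eq ?_ (memLp_const (p := 2)
      (μ := volume.restrict (Set.Icc (0 : ℝ) 1)) C)
    have h1 : ∀ᵐ u ∂(volume.restrict (Set.Icc (0 : ℝ) 1)), u ∈ Set.Icc (0 : ℝ) 1 :=
      ae_restrict_mem measurableSet_Icc
    have h2 : ∀ᵐ u ∂(volume.restrict (Set.Icc (0 : ℝ) 1)), u ≠ 0 := by
      apply ae_restrict_of_ae
      rw [ae_iff]
      simp only [ne_eq, not_not]
      rw [show {a : ℝ | a = 0} = {0} by ext x; simp]
      exact measure_singleton 0
    filter_upwards [h1, h2] with u hu hne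
    have hu' : u ∈ Set.Ioc (0 : ℝ) 1 := ⟨lt_of_le_of_ne hu.1 (Ne.symm hne), hu.2⟩
    show C = ∑' k : ℤ, powKernel H (u + (k : ℝ)) ^ 2
    symm
    apply tsum_eq_tsum_of_ne_zero_bij
      (g := fun n : ℕ => (((n : ℝ) + 1) ^ (-H)) ^ 2)
      (fun x => ((x : ℕ) : ℤ) + 1)
    · intro a b hab
      have h' : ((a : ℕ) : ℤ) = ((b : ℕ) : ℤ) := by simpa using hab
      exact Subtype.ext (by exact_mod_cast h')
    · intro k hk
      have hk1 : (1 : ℤ) ≤ k := by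
        by_contra hlt
        push_neg at hlt
        apply hk
        have : u + (k : ℝ) ≤ 1 := by
          have : (k : ℝ) ≤ 0 := by exact_mod_cast (by omega : k ≤ 0)
          linarith [hu'.2]
        simp [powKernel_of_le this]
      refine ⟨⟨(k - 1).toNat, ?_⟩, ?_⟩
      · simp only [Function.mem_support]
        positivity
      · simp only
        have : (((k - 1).toNat : ℤ)) = k - 1 := Int.toNat_of_nonneg (by omega)
        omega
    · rintro ⟨n, hn⟩
      simp only
      have hmem : u + (((n : ℤ) + 1 : ℤ) : ℝ) ∈ Set.Ioc ((n : ℝ) + 1) ((n : ℝ) + 2) := by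
        constructor
        · push_cast; linarith [hu'.1]
        · push_cast; linarith [hu'.2]
      rw [powKernel_of_mem hmem]
  · -- Part 2: non-summability of squared autocovariances
    intro hsum
    have h1 : Summable (fun n : ℕ =>
        (∫ s : ℝ, powKernel H s * powKernel H (s + ((((n : ℤ) + 1) : ℤ) : ℝ))) ^ 2) :=
      hsum.comp_injective (fun a b hab => by omega)
    have h2 : Summable (fun n : ℕ =>
        (∫ s : ℝ, powKernel H s * powKernel H (s + ((n : ℝ) + 1))) ^ 2) := by
      refine h1.congr fun n => ?_
      push_cast
      rfl
    have h3 : Summable (fun n : ℕ => 2 ^ (-(2 * H)) * ((n : ℝ) + 1)⁻¹) := by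
      apply Summable.of_nonneg_of_le (fun n => by positivity)
        (fun n => gamma_sq_lb H hH1 hH2 n) h2
    have h4 : Summable (fun n : ℕ => ((n : ℝ) + 1)⁻¹) := by
      have hc : (2 : ℝ) ^ (-(2 * H)) ≠ 0 := by positivity
      exact (summable_mul_left_iff hc).mp h3
    have h5 : Summable (fun n : ℕ => (((n + 1 : ℕ)) : ℝ)⁻¹) := by
      refine h4.congr fun n => ?_
      push_cast
      rfl
    exact Real.not_summable_natCast_inv
      ((summable_nat_add_iff (f := fun n : ℕ => ((n : ℝ))⁻¹) 1).mp h5)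
end

section
/- Let Δ > 0, let (ψ_i)_{i∈ℤ} be a square-summable real sequence that is not identically zero, and let f = Σ_{i∈ℤ} ψ_i 1_{(iΔ,(i+1)Δ]}. Then for every p ∈ ℕ and almost every u ∈ [0,Δ], g_{p;Δ}(u) = Σ_{k∈ℤ} ψ_k ψ_{k+p}, and g_{p;Δ}(u) = ρ(pΔ) g_{0;Δ}(u), where ρ(pΔ) = γ_f(pΔ)/γ_f(0). In particular, ∫_0^Δ ( g_{i;Δ}(u) − ρ(iΔ) g_{0;Δ}(u) ) ( g_{j;Δ}(u) − ρ(jΔ) g_{0;Δ}(u) ) du = 0 for all i, j ∈ ℕ. -/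
open MeasureTheory
open scoped ENNReal

/-- The piecewise constant kernel `f = ∑_{i∈ℤ} ψ_i 1_{(iΔ,(i+1)Δ]}`. -/
noncomputable def stepKernel (ψ : ℤ → ℝ) (Δ : ℝ) (u : ℝ) : ℝ :=
  ∑' i : ℤ, Set.indicator (Set.Ioc ((i : ℝ) * Δ) (((i : ℝ) + 1) * Δ)) (fun _ => ψ i) u

section aux

variable {ψ : ℤ → ℝ} {Δ : ℝ}

lemma ioc_unique (hΔ : 0 < Δ) {i j : ℤ} {u : ℝ}
    (hi : u ∈ Set.Ioc ((i : ℝ) * Δ) (((i : ℝ) + 1) * Δ))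
    (hj : u ∈ Set.Ioc ((j : ℝ) * Δ) (((j : ℝ) + 1) * Δ)) : i = j := by
  by_contra hne
  rcases lt_or_gt_of_ne hne with h | h
  · have h1 : i + 1 ≤ j := h
    have h2 : ((i : ℝ) + 1) ≤ (j : ℝ) := by exact_mod_cast h1
    have := mul_le_mul_of_nonneg_right h2 hΔ.le
    linarith [hi.2, hj.1]
  · have h1 : j + 1 ≤ i := h
    have h2 : ((j : ℝ) + 1) ≤ (i : ℝ) := by exact_mod_cast h1
    have := mul_le_mul_of_nonneg_right h2 hΔ.le
    linarith [hi.1, hj.2]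

lemma ioc_exists (hΔ : 0 < Δ) (u : ℝ) :
    ∃ i : ℤ, u ∈ Set.Ioc ((i : ℝ) * Δ) (((i : ℝ) + 1) * Δ) := by
  refine ⟨⌈u / Δ⌉ - 1, ?_, ?_⟩
  · have h := Int.ceil_lt_add_one (u / Δ)
    have h2 : ((⌈u / Δ⌉ : ℝ) - 1) < u / Δ := by linarith
    have h3 := mul_lt_mul_of_pos_right h2 hΔ
    rw [div_mul_cancel₀ u hΔ.ne'] at h3
    push_cast
    linarith
  · have h := Int.le_ceil (u / Δ)
    have h3 := mul_le_mul_of_nonneg_right h hΔ.le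
    rw [div_mul_cancel₀ u hΔ.ne'] at h3
    push_cast
    linarith

lemma stepKernel_apply (hΔ : 0 < Δ) {i : ℤ} {u : ℝ}
    (h : u ∈ Set.Ioc ((i : ℝ) * Δ) (((i : ℝ) + 1) * Δ)) :
    stepKernel ψ Δ u = ψ i := by
  unfold stepKernel
  rw [tsum_eq_single i, Set.indicator_of_mem h]
  intro j hj
  rw [Set.indicator_of_notMem]
  intro hm
  exact hj (ioc_unique hΔ hm h)

lemma mem_ioc_shift (hΔ : 0 < Δ) {u : ℝ} (hu : u ∈ Set.Ioo (0 : ℝ) Δ) (m : ℤ) :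
    u + (m : ℝ) * Δ ∈ Set.Ioc ((m : ℝ) * Δ) (((m : ℝ) + 1) * Δ) := by
  have e : ((m : ℝ) + 1) * Δ = (m : ℝ) * Δ + Δ := by ring
  exact ⟨by linarith [hu.1], by rw [e]; linarith [hu.2.le]⟩

lemma gper_apply (hΔ : 0 < Δ) (q : ℤ) {u : ℝ} (hu : u ∈ Set.Ioo (0 : ℝ) Δ) :
    gper (stepKernel ψ Δ) Δ q u = ∑' k : ℤ, ψ k * ψ (k + q) := by
  unfold gper
  refine tsum_congr fun k => ?_
  rw [stepKernel_apply hΔ (mem_ioc_shift hΔ hu k),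
      stepKernel_apply hΔ (mem_ioc_shift hΔ hu (k + q))]

lemma summable_shift (hψ : Summable (fun i : ℤ => ψ i ^ 2)) (p : ℤ) :
    Summable (fun i : ℤ => ψ i * ψ (i + p)) := by
  have h2 : Summable (fun i : ℤ => ψ (i + p) ^ 2) :=
    hψ.comp_injective (add_left_injective p)
  have hs : Summable (fun i : ℤ => (ψ i ^ 2 + ψ (i + p) ^ 2) / 2) := (hψ.add h2).div_const 2
  refine Summable.of_abs (Summable.of_nonneg_of_le (fun i => abs_nonneg _) (fun i => ?_) hs)
  rw [abs_mul]
  nlinarith [sq_nonneg (|ψ i| - |ψ (i + p)|), sq_abs (ψ i), sq_abs (ψ (i + p)),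
    abs_nonneg (ψ i), abs_nonneg (ψ (i + p))]

lemma autocov_step (hΔ : 0 < Δ) (hψ : Summable (fun i : ℤ => ψ i ^ 2)) (σ2 : ℝ) (p : ℤ) :
    autocov (stepKernel ψ Δ) σ2 ((p : ℝ) * Δ)
      = σ2 * ((∑' i : ℤ, ψ i * ψ (i + p)) * Δ) := by
  unfold autocov
  congr 1
  set F : ℤ → ℝ → ℝ := fun i =>
    (Set.Ico (-(((i : ℝ) + 1) * Δ)) (-((i : ℝ) * Δ))).indicator (fun _ => ψ i * ψ (i + p))
    with hF
  have hpt : ∀ s : ℝ, stepKernel ψ Δ (-s) * stepKernel ψ Δ ((p : ℝ) * Δ - s)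
      = ∑' i : ℤ, F i s := by
    intro s
    obtain ⟨i₀, hi₀⟩ := ioc_exists hΔ (-s)
    have hmem : s ∈ Set.Ico (-(((i₀ : ℝ) + 1) * Δ)) (-((i₀ : ℝ) * Δ)) :=
      ⟨by linarith [hi₀.2], by linarith [hi₀.1]⟩
    rw [tsum_eq_single i₀]
    · have h2 : (p : ℝ) * Δ - s ∈
          Set.Ioc (((i₀ + p : ℤ) : ℝ) * Δ) ((((i₀ + p : ℤ) : ℝ) + 1) * Δ) := by
        push_cast
        constructor
        · nlinarith [hi₀.1]
        · nlinarith [hi₀.2]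
      rw [hF]
      simp only [Set.indicator_of_mem hmem]
      rw [stepKernel_apply hΔ hi₀, stepKernel_apply hΔ h2]
    · intro j hj
      rw [hF]
      simp only
      rw [Set.indicator_of_notMem]
      intro hm
      have hmem2 : -s ∈ Set.Ioc ((j : ℝ) * Δ) (((j : ℝ) + 1) * Δ) :=
        ⟨by linarith [hm.2], by linarith [hm.1]⟩
      exact hj (ioc_unique hΔ hmem2 hi₀)
  have hmeas : ∀ i : ℤ, AEStronglyMeasurable (F i) volume := fun i =>
    (measurable_const.indicator measurableSet_Ico).aestronglyMeasurable
  have hli : ∀ i : ℤ, (∫⁻ s : ℝ, ‖F i s‖₊)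
      = (‖ψ i * ψ (i + p)‖₊ : ℝ≥0∞) * ENNReal.ofReal Δ := by
    intro i
    have : ∀ s : ℝ, (‖F i s‖₊ : ℝ≥0∞)
        = (Set.Ico (-(((i : ℝ) + 1) * Δ)) (-((i : ℝ) * Δ))).indicator
            (fun _ => ((‖ψ i * ψ (i + p)‖₊ : ℝ≥0∞))) s := by
      intro s
      rw [hF]
      simp only [nnnorm_indicator_eq_indicator_nnnorm]
      by_cases h : s ∈ Set.Ico (-(((i : ℝ) + 1) * Δ)) (-((i : ℝ) * Δ)) <;>
        simp [Set.indicator_of_mem, Set.indicator_of_notMem, h]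
    simp_rw [this]
    rw [lintegral_indicator_const measurableSet_Ico, Real.volume_Ico]
    congr 1
    ring_nf
  have hsum : Summable (fun i : ℤ => ‖ψ i * ψ (i + p)‖₊) := by
    rw [← NNReal.summable_coe]
    have := (summable_shift hψ p).abs
    simpa [coe_nnnorm, abs_mul] using this
  have hfin : (∑' i : ℤ, ∫⁻ s : ℝ, ‖F i s‖₊) ≠ ⊤ := by
    simp_rw [hli]
    rw [ENNReal.tsum_mul_right]
    exact ENNReal.mul_ne_top (ENNReal.tsum_coe_ne_top_iff_summable.mpr hsum)
      ENNReal.ofReal_ne_top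
  calc (∫ s : ℝ, stepKernel ψ Δ (-s) * stepKernel ψ Δ ((p : ℝ) * Δ - s))
      = ∫ s : ℝ, ∑' i : ℤ, F i s := by simp_rw [hpt]
    _ = ∑' i : ℤ, ∫ s : ℝ, F i s := integral_tsum hmeas hfin
    _ = ∑' i : ℤ, ψ i * ψ (i + p) * Δ := by
        refine tsum_congr fun i => ?_
        rw [hF]
        simp only
        rw [integral_indicator_const _ measurableSet_Ico, measureReal_def, Real.volume_Ico]
        rw [show -((i : ℝ) * Δ) - -(((i : ℝ) + 1) * Δ) = Δ by ring,
          ENNReal.toReal_ofReal hΔ.le, smul_eq_mul, mul_comm]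
    _ = (∑' i : ℤ, ψ i * ψ (i + p)) * Δ := tsum_mul_right

end aux

/-- for a square-summable, not identically zero sequence `(ψ_i)` and
`f = ∑_{i∈ℤ} ψ_i 1_{(iΔ,(i+1)Δ]}`, for every `p ∈ ℕ` and almost every `u ∈ [0,Δ]` one has
`g_{p;Δ}(u) = ∑_{k∈ℤ} ψ_k ψ_{k+p}` and `g_{p;Δ}(u) = ρ(pΔ) g_{0;Δ}(u)`; in particular the
correction term `∫₀^Δ (g_{i;Δ} − ρ(iΔ) g_{0;Δ})(g_{j;Δ} − ρ(jΔ) g_{0;Δ}) du` vanishes. -/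
theorem statement9 (Δ : ℝ) (hΔ : 0 < Δ) (σ2 : ℝ) (hσ2 : 0 < σ2)
    (ψ : ℤ → ℝ) (hψ : Summable (fun i : ℤ => ψ i ^ 2)) (hne : ∃ i : ℤ, ψ i ≠ 0) :
    (∀ p : ℕ, ∀ᵐ u ∂(volume.restrict (Set.Icc (0 : ℝ) Δ)),
        gper (stepKernel ψ Δ) Δ (p : ℤ) u = (∑' k : ℤ, ψ k * ψ (k + (p : ℤ)))
        ∧ gper (stepKernel ψ Δ) Δ (p : ℤ) u
            = (autocov (stepKernel ψ Δ) σ2 ((p : ℝ) * Δ)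
                  / autocov (stepKernel ψ Δ) σ2 0)
                * gper (stepKernel ψ Δ) Δ 0 u)
    ∧ ∀ i j : ℕ,
        (∫ u in Set.Ioc (0 : ℝ) Δ,
          (gper (stepKernel ψ Δ) Δ (i : ℤ) u
              - (autocov (stepKernel ψ Δ) σ2 ((i : ℝ) * Δ)
                    / autocov (stepKernel ψ Δ) σ2 0)
                  * gper (stepKernel ψ Δ) Δ 0 u)
          * (gper (stepKernel ψ Δ) Δ (j : ℤ) u
              - (autocov (stepKernel ψ Δ) σ2 ((j : ℝ) * Δ)
                    / autocov (stepKernel ψ Δ) σ2 0)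
                  * gper (stepKernel ψ Δ) Δ 0 u)) = 0 := by
  -- notation
  set S : ℤ → ℝ := fun q => ∑' k : ℤ, ψ k * ψ (k + q) with hS
  have hS0 : S 0 = ∑' k : ℤ, ψ k ^ 2 := tsum_congr fun k => by rw [add_zero, sq]
  have hS0pos : 0 < S 0 := by
    rw [hS0]
    obtain ⟨i0, hi0⟩ := hne
    exact Summable.tsum_pos hψ (fun i => sq_nonneg _) i0 (by positivity)
  -- autocov at 0
  have hauto0 : autocov (stepKernel ψ Δ) σ2 0 = σ2 * (S 0 * Δ) := by
    have h := autocov_step hΔ hψ σ2 0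
    rwa [show (((0 : ℤ) : ℝ) * Δ) = 0 by norm_num] at h
  -- key pointwise fact
  have key : ∀ p : ℤ, ∀ u ∈ Set.Ioo (0 : ℝ) Δ,
      gper (stepKernel ψ Δ) Δ p u = S p
      ∧ gper (stepKernel ψ Δ) Δ p u
          = (autocov (stepKernel ψ Δ) σ2 ((p : ℝ) * Δ) / autocov (stepKernel ψ Δ) σ2 0)
              * gper (stepKernel ψ Δ) Δ 0 u := by
    intro p u hu
    have h1 : gper (stepKernel ψ Δ) Δ p u = S p := gper_apply hΔ p hu
    have h0 : gper (stepKernel ψ Δ) Δ 0 u = S 0 := gper_apply hΔ 0 hu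
    refine ⟨h1, ?_⟩
    rw [h1, h0, autocov_step hΔ hψ σ2 p, hauto0]
    rw [div_mul_eq_mul_div, eq_div_iff (by positivity)]
    ring
  constructor
  · -- a.e. statement
    intro p
    have hnull : (volume.restrict (Set.Icc (0 : ℝ) Δ)) ({0, Δ} : Set ℝ) = 0 :=
      le_antisymm ((Measure.restrict_apply_le _ _).trans_eq
        ((Set.toFinite _).measure_zero volume)) zero_le
    have h1 : ∀ᵐ u ∂(volume.restrict (Set.Icc (0 : ℝ) Δ)), u ∈ Set.Icc (0 : ℝ) Δ :=
      ae_restrict_mem measurableSet_Icc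
    have h2 : ∀ᵐ u ∂(volume.restrict (Set.Icc (0 : ℝ) Δ)), u ∉ ({0, Δ} : Set ℝ) := by
      rw [ae_iff]
      convert hnull using 2
      ext u
      simp only [Set.mem_setOf_eq, Set.mem_insert_iff, Set.mem_singleton_iff, not_not]
    filter_upwards [h1, h2] with u hu1 hu2
    simp only [Set.mem_insert_iff, Set.mem_singleton_iff, not_or] at hu2
    have huo : u ∈ Set.Ioo (0 : ℝ) Δ :=
      ⟨lt_of_le_of_ne hu1.1 (Ne.symm hu2.1), lt_of_le_of_ne hu1.2 hu2.2⟩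
    have hk := key (p : ℤ) u huo
    have hc : (((p : ℤ) : ℝ)) = ((p : ℕ) : ℝ) := by push_cast; ring
    rw [hc] at hk
    exact hk
  · -- integral part
    intro i j
    apply integral_eq_zero_of_ae
    have hnull : (volume.restrict (Set.Ioc (0 : ℝ) Δ)) ({Δ} : Set ℝ) = 0 :=
      le_antisymm ((Measure.restrict_apply_le _ _).trans_eq
        ((Set.toFinite _).measure_zero volume)) zero_le
    have h1 : ∀ᵐ u ∂(volume.restrict (Set.Ioc (0 : ℝ) Δ)), u ∈ Set.Ioc (0 : ℝ) Δ :=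
      ae_restrict_mem measurableSet_Ioc
    have h2 : ∀ᵐ u ∂(volume.restrict (Set.Ioc (0 : ℝ) Δ)), u ∉ ({Δ} : Set ℝ) := by
      rw [ae_iff]
      convert hnull using 2
      ext u
      simp only [Set.mem_setOf_eq, Set.mem_insert_iff, Set.mem_singleton_iff, not_not]
    filter_upwards [h1, h2] with u hu1 hu2
    simp only [Set.mem_singleton_iff] at hu2
    have huo : u ∈ Set.Ioo (0 : ℝ) Δ := ⟨hu1.1, lt_of_le_of_ne hu1.2 hu2⟩
    have hki := key (i : ℤ) u huo
    have hci : (((i : ℤ) : ℝ)) = ((i : ℕ) : ℝ) := by push_cast; ring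
    rw [hci] at hki
    have : gper (stepKernel ψ Δ) Δ (i : ℤ) u
        - (autocov (stepKernel ψ Δ) σ2 ((i : ℝ) * Δ) / autocov (stepKernel ψ Δ) σ2 0)
            * gper (stepKernel ψ Δ) Δ 0 u = 0 := sub_eq_zero_of_eq hki.2
    simp [this]
end

section
/- Let d ∈ (0, 1/2) and define the fractional kernel f_d(s) = (s_+^d − (s−1)_+^d)/Γ(d+1). Then there exists a constant C(d) > 0 such that for every h ∈ ℝ, ∫_ℝ f_d(s) f_d(s + h) ds = (C(d)/2) ( |h+1|^{2d+1} − 2|h|^{2d+1} + |h−1|^{2d+1} ). In particular C(d) = ∫_ℝ f_d(s)² ds. -/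
open MeasureTheory Real
open scoped ENNReal

/-- The kernel `f_d(s) = (s₊^d − (s−1)₊^d)/Γ(d+1)` of fractional Lévy noise with
increment length 1. -/
noncomputable def fracKernel (d : ℝ) (s : ℝ) : ℝ :=
  (max s 0 ^ d - max (s - 1) 0 ^ d) / Real.Gamma (d + 1)

namespace Stmt11

/-- increment kernel `F t s = s₊^d - (s-t)₊^d` (without Gamma normalization) -/
noncomputable def Fk (d t s : ℝ) : ℝ := max s 0 ^ d - max (s - t) 0 ^ d

variable {d : ℝ}

lemma cont_plus (hd : 0 ≤ d) : Continuous fun s : ℝ => max s 0 ^ d :=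
  (Real.continuous_rpow_const hd).comp (continuous_id.max continuous_const)

lemma Fk_cont (hd : 0 ≤ d) (t : ℝ) : Continuous (Fk d t) := by
  unfold Fk
  exact (cont_plus hd).sub ((cont_plus hd).comp (continuous_id.sub continuous_const))

lemma Fk_nonneg (hd : 0 ≤ d) {t : ℝ} (ht : 0 ≤ t) (s : ℝ) : 0 ≤ Fk d t s := by
  unfold Fk
  have h1 : max (s - t) 0 ≤ max s 0 := max_le_max (by linarith) le_rfl
  have := Real.rpow_le_rpow (le_max_right (s - t) 0) h1 hd
  linarith

lemma Fk_zero_of_nonpos (hd : 0 < d) {t s : ℝ} (ht : 0 ≤ t) (hs : s ≤ 0) : Fk d t s = 0 := by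
  unfold Fk
  rw [max_eq_right hs, max_eq_right (by linarith : s - t ≤ 0), Real.zero_rpow hd.ne', sub_zero]

lemma Fk_scale (hd : 0 ≤ d) {t : ℝ} (ht : 0 < t) (x : ℝ) :
    Fk d t (t * x) = t ^ d * Fk d 1 x := by
  unfold Fk
  have h1 : max (t * x) 0 = t * max x 0 := by
    rw [mul_max_of_nonneg _ _ ht.le, mul_zero]
  have h2 : max (t * x - t) 0 = t * max (x - 1) 0 := by
    rw [mul_max_of_nonneg _ _ ht.le, mul_zero, mul_sub, mul_one]
  rw [h1, h2, Real.mul_rpow ht.le (le_max_right _ _), Real.mul_rpow ht.le (le_max_right _ _)]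
  ring

lemma Fk_sub (t u s : ℝ) : Fk d t s - Fk d u s = Fk d (t - u) (s - u) := by
  unfold Fk
  have : s - u - (t - u) = s - t := by ring
  rw [this]
  ring

lemma Fk_neg (t s : ℝ) : Fk d (-t) s = -(Fk d t (s + t)) := by
  unfold Fk
  have h1 : s - -t = s + t := by ring
  have h2 : s + t - t = s := by ring
  rw [h1, h2]
  ring

lemma Fk_shift (h x : ℝ) : Fk d 1 (x - h) = Fk d (1 + h) x - Fk d h x := by
  unfold Fk
  have h1 : x - h - 1 = x - (1 + h) := by ring
  rw [h1]
  ring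

lemma Fk_tail_bound (hd : 0 < d) (hd1 : d ≤ 1) {t s : ℝ} (ht : 0 ≤ t) (hs : t + 1 ≤ s) :
    Fk d t s ≤ d * t * (s - t) ^ (d - 1) := by
  have ha : (0:ℝ) < s - t := by linarith
  have hs0 : (0:ℝ) < s := by linarith
  unfold Fk
  rw [max_eq_left hs0.le, max_eq_left ha.le]
  have key : s ^ d ≤ (s - t) ^ d + d * t * (s - t) ^ (d - 1) := by
    have hrw : s = (s - t) * (1 + t / (s - t)) := by field_simp; ring
    have hbern : (1 + t / (s - t)) ^ d ≤ 1 + d * (t / (s - t)) :=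
      rpow_one_add_le_one_add_mul_self (by nlinarith [div_nonneg ht ha.le]) hd.le hd1
    calc s ^ d = (s - t) ^ d * (1 + t / (s - t)) ^ d := by
          rw [← Real.mul_rpow ha.le (by positivity)]; rw [← hrw]
      _ ≤ (s - t) ^ d * (1 + d * (t / (s - t))) := by
          apply mul_le_mul_of_nonneg_left hbern (Real.rpow_nonneg ha.le d)
      _ = (s - t) ^ d + d * t * ((s - t) ^ d / (s - t)) := by ring
      _ = (s - t) ^ d + d * t * (s - t) ^ (d - 1) := by
          have : (s - t) ^ (d - 1) = (s - t) ^ d / (s - t) := by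
            rw [Real.rpow_sub ha, Real.rpow_one]
          rw [this]
  linarith

end Stmt11

namespace Stmt11

variable {d : ℝ}

lemma sq_rpow {x : ℝ} (hx : 0 ≤ x) (a : ℝ) : (x ^ a) ^ 2 = x ^ (a * 2) := by
  rw [Real.rpow_mul hx, ← Real.rpow_natCast (x ^ a) 2]
  norm_num

lemma integrable_sq_pos (hd : 0 < d) (hd2 : d < 1/2) {t : ℝ} (ht : 0 < t) :
    Integrable (fun s => Fk d t s ^ 2) := by
  have hc : Continuous fun s => Fk d t s ^ 2 := (Fk_cont hd.le t).pow 2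
  rw [← integrableOn_univ, ← Set.Iic_union_Ioi (a := t + 1)]
  apply IntegrableOn.union
  · have h1 : IntegrableOn (fun s => Fk d t s ^ 2) (Set.Iic 0) := by
      refine integrableOn_zero.congr_fun (fun s hs => ?_) measurableSet_Iic
      simp [Fk_zero_of_nonpos hd ht.le (Set.mem_Iic.1 hs)]
    have h2 : IntegrableOn (fun s => Fk d t s ^ 2) (Set.Icc 0 (t + 1)) :=
      hc.integrableOn_Icc
    refine (h1.union h2).mono_set fun s hs => ?_
    rcases le_or_gt s 0 with h | h
    · exact Or.inl h
    · exact Or.inr ⟨h.le, Set.mem_Iic.1 hs⟩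
  · have hlt : 2 * d - 2 < -1 := by linarith
    have hdom : Integrable (fun s : ℝ =>
        (Set.Ioi (1:ℝ)).indicator (fun x => x ^ (2 * d - 2)) (s - t)) :=
      (((integrableOn_Ioi_rpow_of_lt hlt one_pos).integrable_indicator
        measurableSet_Ioi)).comp_sub_right t
    refine Integrable.mono' ((hdom.const_mul ((d * t) ^ 2)).integrableOn)
      hc.aestronglyMeasurable.restrict ?_
    rw [ae_restrict_iff' measurableSet_Ioi]
    refine ae_of_all _ fun s hs => ?_
    have hs' : t + 1 ≤ s := le_of_lt hs
    have hFt := Fk_tail_bound hd (by linarith) ht.le hs'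
    have hFn := Fk_nonneg hd.le ht.le s
    have hs'' := Set.mem_Ioi.1 hs
    have hmem : s - t ∈ Set.Ioi (1:ℝ) := by simp only [Set.mem_Ioi]; linarith
    rw [Set.indicator_of_mem hmem, Real.norm_eq_abs, abs_of_nonneg (sq_nonneg _)]
    have hrp : (s - t) ^ (2 * d - 2) = ((s - t) ^ (d - 1)) ^ 2 := by
      rw [sq_rpow (by linarith : (0:ℝ) ≤ s - t) (d - 1)]
      ring_nf
    rw [hrp]
    nlinarith [Real.rpow_nonneg (show (0:ℝ) ≤ s - t by linarith) (d - 1)]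

lemma integrable_sq (hd : 0 < d) (hd2 : d < 1/2) (t : ℝ) :
    Integrable (fun s => Fk d t s ^ 2) := by
  rcases lt_trichotomy t 0 with h | h | h
  · have hpos := (integrable_sq_pos hd hd2 (neg_pos.2 h)).comp_sub_right t
    refine hpos.congr (ae_of_all _ fun s => ?_)
    have h1 := Fk_neg (d := d) t (s - t)
    rw [sub_add_cancel] at h1
    show Fk d (-t) (s - t) ^ 2 = Fk d t s ^ 2
    rw [h1]; ring
  · subst h
    have : (fun s => Fk d 0 s ^ 2) = fun _ => (0:ℝ) := by
      funext s; simp [Fk]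
    rw [this]
    exact integrable_zero _ _ _
  · exact integrable_sq_pos hd hd2 h

lemma integrable_mul (hd : 0 < d) (hd2 : d < 1/2) (t u : ℝ) :
    Integrable (fun s => Fk d t s * Fk d u s) := by
  have h := (integrable_sq hd hd2 t).add (integrable_sq hd hd2 u)
  refine h.mono' ((Fk_cont hd.le t).mul (Fk_cont hd.le u)).aestronglyMeasurable
    (ae_of_all _ fun s => ?_)
  rw [Real.norm_eq_abs]
  simp only [Pi.add_apply]
  rcases abs_cases (Fk d t s * Fk d u s) with ⟨he, _⟩ | ⟨he, _⟩ <;> rw [he] <;>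
    nlinarith [sq_nonneg (Fk d t s - Fk d u s), sq_nonneg (Fk d t s + Fk d u s)]

end Stmt11

namespace Stmt11

variable {d : ℝ}

/-- `Nf d t = ∫ Fk d t ^ 2`. -/
noncomputable def Nf (d t : ℝ) : ℝ := ∫ s : ℝ, Fk d t s ^ 2

lemma Nf_neg (t : ℝ) : Nf d (-t) = Nf d t := by
  unfold Nf
  have e : ∀ s : ℝ, Fk d (-t) s ^ 2 = Fk d t (s + t) ^ 2 := fun s => by
    rw [Fk_neg]; ring
  simp_rw [e]
  exact integral_add_right_eq_self (fun x => Fk d t x ^ 2) t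

lemma Nf_scale_pos (hd : 0 ≤ d) {t : ℝ} (ht : 0 < t) : Nf d t = t ^ (2 * d + 1) * Nf d 1 := by
  have h := MeasureTheory.Measure.integral_comp_mul_left (fun s => Fk d t s ^ 2) t
  simp_rw [Fk_scale hd ht, mul_pow, sq_rpow ht.le d] at h
  rw [integral_const_mul, smul_eq_mul, abs_of_pos (inv_pos.2 ht)] at h
  have key : Nf d t = t * (t ^ (d * 2) * Nf d 1) := by
    unfold Nf
    rw [h]
    field_simp
  rw [key, show 2 * d + 1 = d * 2 + 1 by ring, Real.rpow_add ht, Real.rpow_one]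
  ring

lemma Nf_eq (hd : 0 < d) (t : ℝ) : Nf d t = |t| ^ (2 * d + 1) * Nf d 1 := by
  rcases lt_trichotomy t 0 with h | h | h
  · rw [← Nf_neg, Nf_scale_pos hd.le (neg_pos.2 h), abs_of_neg h]
  · subst h
    have : Nf d 0 = 0 := by
      unfold Nf
      have : (fun s => Fk d 0 s ^ 2) = fun _ : ℝ => (0:ℝ) := by funext s; simp [Fk]
      rw [this, integral_zero]
    rw [this, abs_zero, Real.zero_rpow (by linarith), zero_mul]
  · rw [Nf_scale_pos hd.le h, abs_of_pos h]

lemma cross (hd : 0 < d) (hd2 : d < 1/2) (t u : ℝ) :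
    (∫ s : ℝ, Fk d t s * Fk d u s) = (Nf d t + Nf d u - Nf d (t - u)) / 2 := by
  have hdiff : (∫ s : ℝ, (Fk d t s - Fk d u s) ^ 2) = Nf d (t - u) := by
    simp_rw [Fk_sub]
    exact integral_sub_right_eq_self (fun x => Fk d (t - u) x ^ 2) u
  have e1 : ∀ s : ℝ, (Fk d t s - Fk d u s) ^ 2
      = (Fk d t s ^ 2 + Fk d u s ^ 2) - 2 * (Fk d t s * Fk d u s) := fun s => by ring
  have h2 : (∫ s : ℝ, (Fk d t s - Fk d u s) ^ 2)
      = Nf d t + Nf d u - 2 * ∫ s : ℝ, Fk d t s * Fk d u s := by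
    simp_rw [e1]
    have hA : Integrable (fun s : ℝ => Fk d t s ^ 2 + Fk d u s ^ 2) :=
      (integrable_sq hd hd2 t).add (integrable_sq hd hd2 u)
    have hB : Integrable (fun s : ℝ => 2 * (Fk d t s * Fk d u s)) :=
      (integrable_mul hd hd2 t u).const_mul 2
    rw [integral_sub hA hB,
      integral_add (integrable_sq hd hd2 t) (integrable_sq hd hd2 u), integral_const_mul]
    rfl
  rw [hdiff] at h2
  linarith

lemma Nf_one_pos (hd : 0 < d) (hd2 : d < 1/2) : 0 < Nf d 1 := by
  unfold Nf
  rw [integral_pos_iff_support_of_nonneg (fun s => sq_nonneg _) (integrable_sq hd hd2 1)]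
  have hsub : Set.Ioo (0:ℝ) 1 ⊆ Function.support fun s => Fk d 1 s ^ 2 := by
    intro s hs
    have hval : Fk d 1 s = s ^ d := by
      unfold Fk
      rw [max_eq_left hs.1.le, max_eq_right (by linarith [hs.2] : s - 1 ≤ 0),
        Real.zero_rpow hd.ne', sub_zero]
    have hpos : 0 < Fk d 1 s := hval ▸ Real.rpow_pos_of_pos hs.1 d
    simp only [Function.mem_support]
    positivity
  calc (0:ℝ≥0∞) < volume (Set.Ioo (0:ℝ) 1) := by simp [Real.volume_Ioo]
    _ ≤ _ := measure_mono hsub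

end Stmt11

open Stmt11 in
/-- for `d ∈ (0,1/2)` there exists `C(d) > 0` such that for all `h ∈ ℝ`,
`∫ f_d(s) f_d(s+h) ds = (C(d)/2)(|h+1|^{2d+1} − 2|h|^{2d+1} + |h−1|^{2d+1})`,
with `C(d) = ∫ f_d(s)² ds`. -/
theorem statement11 (d : ℝ) (hd : d ∈ Set.Ioo (0 : ℝ) (1 / 2)) :
    ∃ C : ℝ, 0 < C
      ∧ (∀ h : ℝ,
          (∫ s : ℝ, fracKernel d s * fracKernel d (s + h))
            = C / 2 * (|h + 1| ^ (2 * d + 1) - 2 * |h| ^ (2 * d + 1)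
                + |h - 1| ^ (2 * d + 1)))
      ∧ C = ∫ s : ℝ, fracKernel d s ^ 2 := by
  obtain ⟨hd0, hd2⟩ := hd
  have hΓ : 0 < Real.Gamma (d + 1) := Real.Gamma_pos_of_pos (by linarith)
  have hN1 : 0 < Nf d 1 := Nf_one_pos hd0 hd2
  refine ⟨Nf d 1 / Real.Gamma (d + 1) ^ 2, by positivity, ?_, ?_⟩
  · intro h
    have key : (∫ s : ℝ, Fk d 1 s * Fk d 1 (s + h))
        = Nf d 1 / 2 * (|h + 1| ^ (2 * d + 1) - 2 * |h| ^ (2 * d + 1)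
            + |h - 1| ^ (2 * d + 1)) := by
      have e1 : ∀ s : ℝ, Fk d 1 s * Fk d 1 (s + h)
          = Fk d (1 + h) (s + h) * Fk d 1 (s + h) - Fk d h (s + h) * Fk d 1 (s + h) := by
        intro s
        have hsh := Fk_shift (d := d) h (s + h)
        rw [add_sub_cancel_right] at hsh
        rw [hsh]; ring
      have hI1 : Integrable (fun s : ℝ => Fk d (1 + h) (s + h) * Fk d 1 (s + h)) :=
        (integrable_mul hd0 hd2 (1 + h) 1).comp_add_right h
      have hI2 : Integrable (fun s : ℝ => Fk d h (s + h) * Fk d 1 (s + h)) :=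
        (integrable_mul hd0 hd2 h 1).comp_add_right h
      calc (∫ s : ℝ, Fk d 1 s * Fk d 1 (s + h))
          = ∫ s : ℝ, Fk d (1 + h) (s + h) * Fk d 1 (s + h)
              - Fk d h (s + h) * Fk d 1 (s + h) := by simp_rw [e1]
        _ = (∫ s : ℝ, Fk d (1 + h) (s + h) * Fk d 1 (s + h))
              - ∫ s : ℝ, Fk d h (s + h) * Fk d 1 (s + h) := integral_sub hI1 hI2
        _ = (∫ x : ℝ, Fk d (1 + h) x * Fk d 1 x) - ∫ x : ℝ, Fk d h x * Fk d 1 x := by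
            rw [integral_add_right_eq_self (fun x => Fk d (1 + h) x * Fk d 1 x) h,
              integral_add_right_eq_self (fun x => Fk d h x * Fk d 1 x) h]
        _ = (Nf d (1 + h) + Nf d 1 - Nf d (1 + h - 1)) / 2
              - (Nf d h + Nf d 1 - Nf d (h - 1)) / 2 := by
            rw [cross hd0 hd2 (1 + h) 1, cross hd0 hd2 h 1]
        _ = (Nf d (1 + h) - 2 * Nf d h + Nf d (h - 1)) / 2 := by
            rw [show (1 : ℝ) + h - 1 = h by ring]; ring
        _ = Nf d 1 / 2 * (|h + 1| ^ (2 * d + 1) - 2 * |h| ^ (2 * d + 1)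
              + |h - 1| ^ (2 * d + 1)) := by
            rw [Nf_eq hd0 (1 + h), Nf_eq hd0 h, Nf_eq hd0 (h - 1),
              show (1 : ℝ) + h = h + 1 by ring]
            ring
    have e2 : ∀ s : ℝ, fracKernel d s * fracKernel d (s + h)
        = (Real.Gamma (d + 1) ^ 2)⁻¹ * (Fk d 1 s * Fk d 1 (s + h)) := by
      intro s
      unfold fracKernel Fk
      rw [div_mul_div_comm, ← sq, div_eq_mul_inv, mul_comm]
    simp_rw [e2]
    rw [integral_const_mul, key]
    field_simp
  · have e3 : ∀ s : ℝ, fracKernel d s ^ 2 = (Real.Gamma (d + 1) ^ 2)⁻¹ * Fk d 1 s ^ 2 := by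
      intro s
      unfold fracKernel Fk
      rw [div_pow, div_eq_mul_inv, mul_comm]
    simp_rw [e3]
    rw [integral_const_mul]
    show _ = _ * Nf d 1
    field_simp
end

section
/- Let d ∈ (0, 1/2) and for m ∈ ℕ, m ≥ 1, define f_m(s) = ((m−s)_+^d − (−s)_+^d)/Γ(d+1). Then ∫_ℝ f_m(s)² ds = m^{2d+1} ∫_ℝ f_1(s)² ds for every m, and there exists a constant C' > 0 such that ∫_ℝ f_m(s)⁴ ds ≤ C' m^{4d+1} for every m ≥ 1. -/
open MeasureTheory Real
open scoped ENNReal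

/-- The kernel `f_m(s) = ((m−s)₊^d − (−s)₊^d)/Γ(d+1)` of the fractional Lévy process
evaluated at time `m`. -/
noncomputable def fracKernelM (d : ℝ) (m : ℕ) (s : ℝ) : ℝ :=
  (max ((m : ℝ) - s) 0 ^ d - max (-s) 0 ^ d) / Real.Gamma (d + 1)

lemma fracKernelM_scale (d : ℝ) (m : ℕ) (hm : 1 ≤ m) (s : ℝ) :
    fracKernelM d m s = (m : ℝ) ^ d * fracKernelM d 1 (s / m) := by
  have hm0 : (0:ℝ) < m := by exact_mod_cast hm
  have hmd : (0:ℝ) < (m:ℝ) ^ d := Real.rpow_pos_of_pos hm0 d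
  unfold fracKernelM
  have h1 : max ((1:ℕ) - s / (m:ℝ)) 0 = max ((m:ℝ) - s) 0 / m := by
    rw [← max_div_div_right hm0.le]
    push_cast
    rw [zero_div]
    congr 1
    field_simp
  have h2 : max (-(s / (m:ℝ))) 0 = max (-s) 0 / m := by
    rw [← max_div_div_right hm0.le, zero_div, neg_div]
  rw [h1, h2, Real.div_rpow (le_max_right _ _) hm0.le,
    Real.div_rpow (le_max_right _ _) hm0.le]
  field_simp

lemma integral_pow_scale (d : ℝ) (p m : ℕ) (hm : 1 ≤ m) :
    (∫ s : ℝ, fracKernelM d m s ^ p)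
      = (m : ℝ) ^ ((p : ℝ) * d + 1) * ∫ s : ℝ, fracKernelM d 1 s ^ p := by
  have hm0 : (0:ℝ) < m := by exact_mod_cast hm
  calc (∫ s : ℝ, fracKernelM d m s ^ p)
      = ∫ s : ℝ, ((m:ℝ) ^ d) ^ p * fracKernelM d 1 (s / m) ^ p := by
        congr 1; funext s; rw [fracKernelM_scale d m hm s, mul_pow]
    _ = ((m:ℝ) ^ d) ^ p * ∫ s : ℝ, fracKernelM d 1 (s / m) ^ p :=
        MeasureTheory.integral_const_mul _ _
    _ = ((m:ℝ) ^ d) ^ p * (|(m:ℝ)| • ∫ s : ℝ, fracKernelM d 1 s ^ p) := by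
        rw [MeasureTheory.Measure.integral_comp_div (fun s => fracKernelM d 1 s ^ p) (m:ℝ)]
    _ = (m : ℝ) ^ ((p : ℝ) * d + 1) * ∫ s : ℝ, fracKernelM d 1 s ^ p := by
        rw [abs_of_pos hm0, smul_eq_mul, ← mul_assoc,
          ← Real.rpow_natCast ((m:ℝ) ^ d) p, ← Real.rpow_mul hm0.le,
          Real.rpow_add hm0, Real.rpow_one, mul_comm d (p:ℝ)]

/-- for `d ∈ (0,1/2)`, one has `∫ f_m(s)² ds = m^{2d+1} ∫ f_1(s)² ds`
for every `m ≥ 1`, and there is a constant `C' > 0` with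
`∫ f_m(s)⁴ ds ≤ C' m^{4d+1}` for every `m ≥ 1`. -/
theorem statement13 (d : ℝ) (hd : d ∈ Set.Ioo (0 : ℝ) (1 / 2)) :
    (∀ m : ℕ, 1 ≤ m →
        (∫ s : ℝ, fracKernelM d m s ^ 2)
          = (m : ℝ) ^ (2 * d + 1) * ∫ s : ℝ, fracKernelM d 1 s ^ 2)
    ∧ ∃ C' : ℝ, 0 < C' ∧ ∀ m : ℕ, 1 ≤ m →
        (∫ s : ℝ, fracKernelM d m s ^ 4) ≤ C' * (m : ℝ) ^ (4 * d + 1) := by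
  constructor
  · intro m hm
    have := integral_pow_scale d 2 m hm
    norm_num at this ⊢
    convert this using 3
  · refine ⟨(∫ s : ℝ, fracKernelM d 1 s ^ 4) + 1, ?_, ?_⟩
    · have h0 : 0 ≤ ∫ s : ℝ, fracKernelM d 1 s ^ 4 :=
        MeasureTheory.integral_nonneg fun s => by positivity
      linarith
    · intro m hm
      have hm0 : (0:ℝ) < m := by exact_mod_cast hm
      have hpow : (0:ℝ) < (m:ℝ) ^ (4 * d + 1) := Real.rpow_pos_of_pos hm0 _
      have h := integral_pow_scale d 4 m hm
      have h4 : ((4:ℕ):ℝ) * d + 1 = 4 * d + 1 := by norm_num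
      rw [h4] at h
      rw [h, mul_comm (_ + 1)]
      have h0 : 0 ≤ ∫ s : ℝ, fracKernelM d 1 s ^ 4 :=
        MeasureTheory.integral_nonneg fun s => by positivity
      nlinarith
end

section
/- Let d ∈ (0, 1/2). Then for every u ∈ (0,1), Σ_{k∈ℤ} ( (u+k)_+^d − (u+k−1)_+^d )² ≤ 1 + Σ_{k≥1} k^{2d} ( (1 + 1/k)^d − (1 − 1/k)^d )², and this bound is finite; in particular the function u ↦ Σ_{k∈ℤ} ( (u+k)_+^d − (u+k−1)_+^d )² is essentially bounded on [0,1]. -/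
open MeasureTheory Real
open scoped ENNReal

section Aux

variable {d : ℝ}

/-- The `k`-th term of the bounding series equals `((k+2)^d - k^d)^2`. -/
lemma aux_g_eq (hd0 : 0 < d) (k : ℕ) :
    ((k : ℝ) + 1) ^ (2 * d) * ((1 + 1 / ((k : ℝ) + 1)) ^ d - (1 - 1 / ((k : ℝ) + 1)) ^ d) ^ 2
      = (((k : ℝ) + 2) ^ d - (k : ℝ) ^ d) ^ 2 := by
  have hn : (0 : ℝ) < (k : ℝ) + 1 := by positivity
  have h1 : ((k : ℝ) + 1) ^ (2 * d) = (((k : ℝ) + 1) ^ d) ^ 2 := by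
    rw [← Real.rpow_natCast (((k : ℝ) + 1) ^ d) 2, ← Real.rpow_mul hn.le]
    norm_num [mul_comm]
  have h2 : ((k : ℝ) + 1) ^ d * (1 + 1 / ((k : ℝ) + 1)) ^ d = ((k : ℝ) + 2) ^ d := by
    rw [← Real.mul_rpow hn.le (by positivity)]
    congr 1; field_simp; ring
  have h3 : ((k : ℝ) + 1) ^ d * (1 - 1 / ((k : ℝ) + 1)) ^ d = (k : ℝ) ^ d := by
    have hnn : (0 : ℝ) ≤ 1 - 1 / ((k : ℝ) + 1) := by
      rw [sub_nonneg, div_le_one hn]; linarith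
    rw [← Real.mul_rpow hn.le hnn]
    congr 1; field_simp; ring
  rw [h1, ← mul_pow, mul_sub, h2, h3]

/-- Bernoulli-type bound: for `x > 0`, `(x+2)^d - x^d ≤ 2d·x^(d-1)`. -/
lemma aux_diff_le (hd0 : 0 < d) (hd1 : d ≤ 1) {x : ℝ} (hx : 0 < x) :
    (x + 2) ^ d - x ^ d ≤ 2 * d * x ^ (d - 1) := by
  have h1 : (x + 2) ^ d = x ^ d * (1 + 2 / x) ^ d := by
    rw [← Real.mul_rpow hx.le (by positivity)]
    congr 1; field_simp
  have h2 : (1 + 2 / x) ^ d ≤ 1 + d * (2 / x) := by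
    have h2x : (0:ℝ) ≤ 2 / x := by positivity
    exact rpow_one_add_le_one_add_mul_self (by linarith) hd0.le hd1
  have h3 : x ^ d * (2 / x) = 2 * x ^ (d - 1) := by
    rw [Real.rpow_sub hx, Real.rpow_one]
    field_simp
  calc (x + 2) ^ d - x ^ d = x ^ d * (1 + 2 / x) ^ d - x ^ d := by rw [h1]
    _ ≤ x ^ d * (1 + d * (2 / x)) - x ^ d := by
        have := mul_le_mul_of_nonneg_left h2 (Real.rpow_nonneg hx.le d)
        linarith
    _ = d * (x ^ d * (2 / x)) := by ring
    _ = 2 * d * x ^ (d - 1) := by rw [h3]; ring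

lemma aux_summable (hd : d ∈ Set.Ioo (0 : ℝ) (1 / 2)) :
    Summable (fun k : ℕ => ((k : ℝ) + 1) ^ (2 * d)
        * ((1 + 1 / ((k : ℝ) + 1)) ^ d - (1 - 1 / ((k : ℝ) + 1)) ^ d) ^ 2) := by
  obtain ⟨hd0, hd2⟩ := hd
  rw [← summable_nat_add_iff 1]
  have hmaj : Summable (fun k : ℕ => (2 * d) ^ 2 * ((k : ℝ) + 1) ^ (2 * d - 2)) := by
    apply Summable.mul_left
    have : Summable (fun n : ℕ => (n : ℝ) ^ (2 * d - 2)) :=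
      Real.summable_nat_rpow.mpr (by linarith)
    have h := (summable_nat_add_iff 1).mpr this
    simpa using h
  apply Summable.of_nonneg_of_le ?_ ?_ hmaj
  · intro k
    have hn : (0 : ℝ) < ((k : ℕ) + 1 : ℕ) := by positivity
    positivity
  · intro k
    have hx : (0 : ℝ) < (k : ℝ) + 1 := by positivity
    have hcast : (((k + 1 : ℕ) : ℝ)) = (k : ℝ) + 1 := by push_cast; ring
    rw [aux_g_eq hd0, hcast]
    have hdiff0 : 0 ≤ ((k : ℝ) + 1 + 2) ^ d - ((k : ℝ) + 1) ^ d := by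
      have := Real.rpow_le_rpow hx.le (by linarith : (k : ℝ) + 1 ≤ (k : ℝ) + 1 + 2) hd0.le
      linarith
    have hdiff : ((k : ℝ) + 1 + 2) ^ d - ((k : ℝ) + 1) ^ d ≤ 2 * d * ((k : ℝ) + 1) ^ (d - 1) :=
      aux_diff_le hd0 (by linarith) hx
    calc (((k : ℝ) + 1 + 2) ^ d - ((k : ℝ) + 1) ^ d) ^ 2
        ≤ (2 * d * ((k : ℝ) + 1) ^ (d - 1)) ^ 2 := by
          apply pow_le_pow_left₀ hdiff0 hdiff
      _ = (2 * d) ^ 2 * ((k : ℝ) + 1) ^ (2 * d - 2) := by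
          rw [mul_pow, ← Real.rpow_natCast (((k : ℝ) + 1) ^ (d - 1)) 2, ← Real.rpow_mul hx.le]
          congr 1
          push_cast; ring

/-- The termwise bound for `u ∈ (0,1)`. -/
lemma aux_main (hd : d ∈ Set.Ioo (0 : ℝ) (1 / 2)) {u : ℝ} (hu : u ∈ Set.Ioo (0 : ℝ) 1) :
    (∑' k : ℤ, (max (u + (k : ℝ)) 0 ^ d - max (u + (k : ℝ) - 1) 0 ^ d) ^ 2)
      ≤ 1 + ∑' k : ℕ, ((k : ℝ) + 1) ^ (2 * d)
          * ((1 + 1 / ((k : ℝ) + 1)) ^ d - (1 - 1 / ((k : ℝ) + 1)) ^ d) ^ 2 := by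
  obtain ⟨hd0, hd2⟩ := hd
  obtain ⟨hu0, hu1⟩ := hu
  set f : ℤ → ℝ := fun k => (max (u + (k : ℝ)) 0 ^ d - max (u + (k : ℝ) - 1) 0 ^ d) ^ 2 with hf
  set g : ℕ → ℝ := fun k => ((k : ℝ) + 1) ^ (2 * d)
      * ((1 + 1 / ((k : ℝ) + 1)) ^ d - (1 - 1 / ((k : ℝ) + 1)) ^ d) ^ 2 with hg
  -- the ℤ-sum equals the ℕ-sum over nonnegative indices
  have hsupp : Function.support f ⊆ Set.range ((↑) : ℕ → ℤ) := by
    intro k hk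
    by_contra hmem
    have hkneg : k < 0 := by
      by_contra hge
      push_neg at hge
      exact hmem ⟨k.toNat, by omega⟩
    apply hk
    have hk1 : (k : ℝ) ≤ -1 := by exact_mod_cast Int.cast_le.mpr (by omega : k ≤ -1)
    have h1 : max (u + (k : ℝ)) 0 = 0 := max_eq_right (by linarith)
    have h2 : max (u + (k : ℝ) - 1) 0 = 0 := max_eq_right (by linarith)
    simp [hf, h1, h2, Real.zero_rpow hd0.ne']
  have hinj : Function.Injective ((↑) : ℕ → ℤ) := fun a b h => by exact_mod_cast h
  have hzsum : ∑' n : ℕ, f n = ∑' k : ℤ, f k := hinj.tsum_eq hsupp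
  -- the shifted ℕ-terms are bounded by g
  have hgeq : ∀ k : ℕ, g k = (((k : ℝ) + 2) ^ d - (k : ℝ) ^ d) ^ 2 := aux_g_eq hd0
  have hshift : ∀ n : ℕ, f ((n : ℤ) + 1) ≤ g n := by
    intro n
    have hx : (0 : ℝ) ≤ (n : ℝ) := n.cast_nonneg
    have h1 : max (u + ((n : ℝ) + 1)) 0 = u + (n : ℝ) + 1 := by
      rw [max_eq_left (by linarith)]; ring
    have h2 : max (u + ((n : ℝ) + 1) - 1) 0 = u + (n : ℝ) := by
      rw [max_eq_left (by linarith)]; ring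
    have hdiff0 : 0 ≤ (u + (n : ℝ) + 1) ^ d - (u + (n : ℝ)) ^ d := by
      have := Real.rpow_le_rpow (by linarith : (0:ℝ) ≤ u + (n:ℝ))
        (by linarith : u + (n : ℝ) ≤ u + (n : ℝ) + 1) hd0.le
      linarith
    have hdiffle : (u + (n : ℝ) + 1) ^ d - (u + (n : ℝ)) ^ d
        ≤ ((n : ℝ) + 2) ^ d - (n : ℝ) ^ d := by
      have ha : (u + (n : ℝ) + 1) ^ d ≤ ((n : ℝ) + 2) ^ d :=
        Real.rpow_le_rpow (by linarith) (by linarith) hd0.le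
      have hb : (n : ℝ) ^ d ≤ (u + (n : ℝ)) ^ d :=
        Real.rpow_le_rpow hx (by linarith) hd0.le
      linarith
    have hRHS0 : 0 ≤ ((n : ℝ) + 2) ^ d - (n : ℝ) ^ d := le_trans hdiff0 hdiffle
    calc f ((n : ℤ) + 1) = ((u + (n : ℝ) + 1) ^ d - (u + (n : ℝ)) ^ d) ^ 2 := by
          simp only [hf]
          push_cast
          rw [h1, h2]
      _ ≤ (((n : ℝ) + 2) ^ d - (n : ℝ) ^ d) ^ 2 := pow_le_pow_left₀ hdiff0 hdiffle 2
      _ = g n := (hgeq n).symm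
  have hgsum : Summable g := aux_summable ⟨hd0, hd2⟩
  have hfnonneg : ∀ n : ℕ, 0 ≤ f n := fun n => sq_nonneg _
  -- summability of the ℕ-sum
  have hFsum : Summable (fun n : ℕ => f n) := by
    rw [← summable_nat_add_iff 1]
    apply Summable.of_nonneg_of_le (fun n => sq_nonneg _) ?_ hgsum
    intro n
    have : ((n + 1 : ℕ) : ℤ) = (n : ℤ) + 1 := by push_cast; ring
    rw [this]
    exact hshift n
  -- compute f 0 bound
  have hf0 : f (0 : ℤ) ≤ 1 := by
    have h1 : max (u + ((0 : ℤ) : ℝ)) 0 = u := by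
      rw [Int.cast_zero, add_zero, max_eq_left hu0.le]
    have h2 : max (u + ((0 : ℤ) : ℝ) - 1) 0 = 0 :=
      max_eq_right (by rw [Int.cast_zero]; linarith)
    have hud : u ^ d ≤ 1 := Real.rpow_le_one hu0.le hu1.le hd0.le
    have hud0 : 0 ≤ u ^ d := Real.rpow_nonneg hu0.le d
    simp only [hf, h1, h2, Real.zero_rpow hd0.ne', sub_zero]
    calc (u ^ d) ^ 2 ≤ 1 ^ 2 := pow_le_pow_left₀ hud0 hud 2
      _ = 1 := one_pow 2
  -- put it together
  rw [← hzsum, Summable.tsum_eq_zero_add hFsum]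
  have hcast0 : ((0 : ℕ) : ℤ) = (0 : ℤ) := rfl
  apply add_le_add
  · rw [hcast0]; exact hf0
  · apply Summable.tsum_le_tsum ?_ ?_ hgsum
    · intro n
      have : ((n + 1 : ℕ) : ℤ) = (n : ℤ) + 1 := by push_cast; ring
      rw [this]
      exact hshift n
    · exact (summable_nat_add_iff 1).mpr hFsum

end Aux

/-- for `d ∈ (0,1/2)` and every `u ∈ (0,1)`,
`∑_{k∈ℤ} ((u+k)₊^d − (u+k−1)₊^d)² ≤ 1 + ∑_{k≥1} k^{2d} ((1+1/k)^d − (1−1/k)^d)²`,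
the bound being finite; in particular `u ↦ ∑_{k∈ℤ} ((u+k)₊^d − (u+k−1)₊^d)²` is
essentially bounded on `[0,1]`. -/
theorem statement15 (d : ℝ) (hd : d ∈ Set.Ioo (0 : ℝ) (1 / 2)) :
    (∀ u ∈ Set.Ioo (0 : ℝ) 1,
        (∑' k : ℤ, (max (u + (k : ℝ)) 0 ^ d - max (u + (k : ℝ) - 1) 0 ^ d) ^ 2)
          ≤ 1 + ∑' k : ℕ, ((k : ℝ) + 1) ^ (2 * d)
              * ((1 + 1 / ((k : ℝ) + 1)) ^ d - (1 - 1 / ((k : ℝ) + 1)) ^ d) ^ 2)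
    ∧ Summable (fun k : ℕ => ((k : ℝ) + 1) ^ (2 * d)
        * ((1 + 1 / ((k : ℝ) + 1)) ^ d - (1 - 1 / ((k : ℝ) + 1)) ^ d) ^ 2)
    ∧ ∃ B : ℝ, ∀ᵐ u ∂(volume.restrict (Set.Icc (0 : ℝ) 1)),
        (∑' k : ℤ, (max (u + (k : ℝ)) 0 ^ d - max (u + (k : ℝ) - 1) 0 ^ d) ^ 2) ≤ B := by
  refine ⟨fun u hu => aux_main hd hu, aux_summable hd, ?_⟩
  refine ⟨1 + ∑' k : ℕ, ((k : ℝ) + 1) ^ (2 * d)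
      * ((1 + 1 / ((k : ℝ) + 1)) ^ d - (1 - 1 / ((k : ℝ) + 1)) ^ d) ^ 2, ?_⟩
  rw [← MeasureTheory.Measure.restrict_congr_set (MeasureTheory.Ioo_ae_eq_Icc)]
  filter_upwards [MeasureTheory.ae_restrict_mem measurableSet_Ioo] with u hu
  exact aux_main hd hu
end

section
/- The function φ : (0, 1/2) → ℝ defined by φ(d) = ( −3^{2d+1} + 4·2^{2d+1} − 7 ) / ( 8 − 2^{2d+2} ) is strictly increasing on (0, 1/2). -/
open Real


noncomputable def hfun (u : ℝ) : ℝ :=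
  (2:ℝ) ^ u * (log 3 - log 2) + 3 * ((2/3:ℝ)) ^ u * log 2 - 2 * log 3

lemma hfun_hasDeriv (u : ℝ) :
    HasDerivAt hfun
      ((2:ℝ) ^ u * log 2 * (log 3 - log 2) + 3 * (((2/3:ℝ)) ^ u * log (2/3)) * log 2) u := by
  have h2 : HasDerivAt (fun x : ℝ => (2:ℝ) ^ x) ((2:ℝ) ^ u * log 2) u :=
    (Real.hasStrictDerivAt_const_rpow (by norm_num) u).hasDerivAt
  have h23 : HasDerivAt (fun x : ℝ => ((2/3:ℝ)) ^ x) (((2/3:ℝ)) ^ u * log (2/3)) u :=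
    (Real.hasStrictDerivAt_const_rpow (by norm_num) u).hasDerivAt
  unfold hfun
  exact ((h2.mul_const _).add ((h23.const_mul 3).mul_const _)).sub_const _

lemma log32_pos : 0 < log 3 - log 2 := by
  have := Real.log_lt_log (by norm_num) (show (2:ℝ) < 3 by norm_num)
  linarith

lemma two_eq (u : ℝ) : (2:ℝ) ^ u = ((2/3:ℝ)) ^ u * (3:ℝ) ^ u := by
  rw [← Real.mul_rpow (by norm_num) (by norm_num)]
  norm_num

lemma hfun_deriv_neg {u : ℝ} (h0 : 0 < u) (h1 : u < 1) :
    (2:ℝ) ^ u * log 2 * (log 3 - log 2) + 3 * (((2/3:ℝ)) ^ u * log (2/3)) * log 2 < 0 := by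
  have hlog23 : log (2/3) = log 2 - log 3 := by
    rw [Real.log_div (by norm_num) (by norm_num)]
  have h3u : (3:ℝ) ^ u < 3 := by
    calc (3:ℝ) ^ u < (3:ℝ) ^ (1:ℝ) :=
      Real.rpow_lt_rpow_left_iff (by norm_num) |>.mpr h1
    _ = 3 := Real.rpow_one 3
  have hp : (0:ℝ) < ((2/3:ℝ)) ^ u := Real.rpow_pos_of_pos (by norm_num) u
  have hl2 : 0 < log 2 := Real.log_pos (by norm_num)
  have h32 := log32_pos
  rw [hlog23, two_eq u]
  nlinarith [mul_pos hp (sub_pos.mpr h3u), mul_pos (mul_pos hp (sub_pos.mpr h3u)) (mul_pos hl2 h32)]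

lemma hfun_pos {u : ℝ} (h0 : 0 < u) (h1 : u < 1) : 0 < hfun u := by
  have hanti : StrictAntiOn hfun (Set.Icc 0 1) := by
    apply strictAntiOn_of_deriv_neg (convex_Icc 0 1)
    · exact fun x _ => (hfun_hasDeriv x).continuousAt.continuousWithinAt
    · intro x hx
      rw [interior_Icc] at hx
      rw [(hfun_hasDeriv x).deriv]
      exact hfun_deriv_neg hx.1 hx.2
  have h10 : hfun 1 = 0 := by
    unfold hfun
    rw [Real.rpow_one, Real.rpow_one]
    ring
  have := hanti (Set.mem_Icc.mpr ⟨le_of_lt h0, le_of_lt h1⟩)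
    (Set.mem_Icc.mpr ⟨by norm_num, le_refl 1⟩) h1
  rw [h10] at this
  linarith

lemma aux_ineq {u : ℝ} (h0 : 0 < u) (h1 : u < 1) :
    2 * (3:ℝ) ^ u * log 3 < (6:ℝ) ^ u * (log 3 - log 2) + 3 * (2:ℝ) ^ u * log 2 := by
  have hp3 : (0:ℝ) < (3:ℝ) ^ u := Real.rpow_pos_of_pos (by norm_num) u
  have h6 : (6:ℝ) ^ u = (3:ℝ) ^ u * (2:ℝ) ^ u := by
    rw [← Real.mul_rpow (by norm_num) (by norm_num)]; norm_num
  have h2 : (3:ℝ) ^ u * ((2/3:ℝ)) ^ u = (2:ℝ) ^ u := by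
    rw [← Real.mul_rpow (by norm_num) (by norm_num)]; norm_num
  have hh := hfun_pos h0 h1
  unfold hfun at hh
  have e : (3:ℝ) ^ u * ((2:ℝ) ^ u * (log 3 - log 2) + 3 * ((2/3:ℝ)) ^ u * log 2 - 2 * log 3)
      = (6:ℝ) ^ u * (log 3 - log 2) + 3 * (2:ℝ) ^ u * log 2 - 2 * (3:ℝ) ^ u * log 3 := by
    rw [h6, ← h2]; ring
  have := mul_pos hp3 hh
  rw [e] at this
  linarith

noncomputable def fder (d : ℝ) : ℝ :=
  ((-((3:ℝ) ^ (2*d+1) * log 3 * 2) + 4 * ((2:ℝ) ^ (2*d+1) * log 2 * 2)) * (8 - (2:ℝ) ^ (2*d+2))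
    - (-(3:ℝ) ^ (2*d+1) + 4 * (2:ℝ) ^ (2*d+1) - 7) * (-((2:ℝ) ^ (2*d+2) * log 2 * 2)))
    / (8 - (2:ℝ) ^ (2*d+2)) ^ 2

lemma Dpos {d : ℝ} (h1 : d < 1/2) : 0 < 8 - (2:ℝ) ^ (2*d+2) := by
  have : (2:ℝ) ^ (2*d+2) < (2:ℝ) ^ (3:ℝ) :=
    Real.rpow_lt_rpow_left_iff (by norm_num) |>.mpr (by linarith)
  have h8 : (2:ℝ) ^ (3:ℝ) = 8 := by
    rw [show (3:ℝ) = ((3:ℕ):ℝ) by norm_num, Real.rpow_natCast]; norm_num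
  linarith [h8 ▸ this]

lemma f_hasDeriv {d : ℝ} (h1 : d < 1/2) :
    HasDerivAt (fun d : ℝ =>
        (-(3 : ℝ) ^ (2 * d + 1) + 4 * (2 : ℝ) ^ (2 * d + 1) - 7)
          / (8 - (2 : ℝ) ^ (2 * d + 2))) (fder d) d := by
  have hlin1 : HasDerivAt (fun x : ℝ => 2*x+1) 2 d := by
    simpa using ((hasDerivAt_id d).const_mul 2).add_const 1
  have hlin2 : HasDerivAt (fun x : ℝ => 2*x+2) 2 d := by
    simpa using ((hasDerivAt_id d).const_mul 2).add_const 2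
  have h3 : HasDerivAt (fun x : ℝ => (3:ℝ) ^ (2*x+1)) ((3:ℝ) ^ (2*d+1) * log 3 * 2) d :=
    ((Real.hasStrictDerivAt_const_rpow (by norm_num : (0:ℝ) < 3) (2*d+1)).hasDerivAt).comp d hlin1
  have h2a : HasDerivAt (fun x : ℝ => (2:ℝ) ^ (2*x+1)) ((2:ℝ) ^ (2*d+1) * log 2 * 2) d :=
    ((Real.hasStrictDerivAt_const_rpow (by norm_num : (0:ℝ) < 2) (2*d+1)).hasDerivAt).comp d hlin1
  have h2b : HasDerivAt (fun x : ℝ => (2:ℝ) ^ (2*x+2)) ((2:ℝ) ^ (2*d+2) * log 2 * 2) d :=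
    ((Real.hasStrictDerivAt_const_rpow (by norm_num : (0:ℝ) < 2) (2*d+2)).hasDerivAt).comp d hlin2
  have hN : HasDerivAt (fun x : ℝ => -(3:ℝ) ^ (2*x+1) + 4 * (2:ℝ) ^ (2*x+1) - 7)
      (-((3:ℝ) ^ (2*d+1) * log 3 * 2) + 4 * ((2:ℝ) ^ (2*d+1) * log 2 * 2)) d :=
    ((h3.neg).add (h2a.const_mul 4)).sub_const 7
  have hD : HasDerivAt (fun x : ℝ => 8 - (2:ℝ) ^ (2*x+2)) (-((2:ℝ) ^ (2*d+2) * log 2 * 2)) d :=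
    h2b.const_sub 8
  have hDne : 8 - (2:ℝ) ^ (2*d+2) ≠ 0 := ne_of_gt (Dpos h1)
  exact hN.div hD hDne

lemma fder_pos {d : ℝ} (h0 : 0 < d) (h1 : d < 1/2) : 0 < fder d := by
  have hDp := Dpos h1
  have e3 : (3:ℝ) ^ (2*d+1) = (3:ℝ) ^ (2*d) * 3 := by
    rw [Real.rpow_add (by norm_num), Real.rpow_one]
  have e2 : (2:ℝ) ^ (2*d+1) = (2:ℝ) ^ (2*d) * 2 := by
    rw [Real.rpow_add (by norm_num), Real.rpow_one]
  have e4 : (2:ℝ) ^ (2*d+2) = (2:ℝ) ^ (2*d) * 4 := by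
    rw [Real.rpow_add (by norm_num)]
    norm_num
  have h6 : (6:ℝ) ^ (2*d) = (3:ℝ) ^ (2*d) * (2:ℝ) ^ (2*d) := by
    rw [← Real.mul_rpow (by norm_num) (by norm_num)]; norm_num
  have key : (-((3:ℝ) ^ (2*d+1) * log 3 * 2) + 4 * ((2:ℝ) ^ (2*d+1) * log 2 * 2)) * (8 - (2:ℝ) ^ (2*d+2))
      - (-(3:ℝ) ^ (2*d+1) + 4 * (2:ℝ) ^ (2*d+1) - 7) * (-((2:ℝ) ^ (2*d+2) * log 2 * 2))
      = 24 * ((6:ℝ) ^ (2*d) * (log 3 - log 2) + 3 * (2:ℝ) ^ (2*d) * log 2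
          - 2 * (3:ℝ) ^ (2*d) * log 3) := by
    rw [e3, e2, e4, h6]; ring
  have haux := aux_ineq (by linarith : (0:ℝ) < 2*d) (by linarith : 2*d < 1)
  unfold fder
  rw [key]
  apply div_pos (by linarith) (by positivity)

/-- the function
`φ(d) = (−3^{2d+1} + 4·2^{2d+1} − 7)/(8 − 2^{2d+2})`, the lag-one autocorrelation of
the differenced fractional noise, is strictly increasing on `(0, 1/2)`. -/
theorem statement17 :
    StrictMonoOn
      (fun d : ℝ =>
        (-(3 : ℝ) ^ (2 * d + 1) + 4 * (2 : ℝ) ^ (2 * d + 1) - 7)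
          / (8 - (2 : ℝ) ^ (2 * d + 2)))
      (Set.Ioo (0 : ℝ) (1 / 2)) := by
  apply strictMonoOn_of_deriv_pos (convex_Ioo 0 (1/2))
  · exact fun x hx => (f_hasDeriv hx.2).continuousAt.continuousWithinAt
  · intro x hx
    rw [interior_Ioo] at hx
    rw [(f_hasDeriv hx.2).deriv]
    exact fder_pos hx.1 hx.2
end

section
/- Let d ∈ (0, 1/2). Then for every u ∈ [0,1], Σ_{k∈ℤ} ( (u+k)_+^d + (u+k−2)_+^d − 2(u+k−1)_+^d )² ≤ 1 + (2^d + 2)² + Σ_{k≥2} ( k^d − (k−1)^d )², and this bound is finite; in particular the function u ↦ Σ_{k∈ℤ} ( (u+k)_+^d + (u+k−2)_+^d − 2(u+k−1)_+^d )² is essentially bounded on [0,1]. -/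
open MeasureTheory Real
open scoped ENNReal

private lemma anti_aux {d : ℝ} (hd0 : 0 < d) (hd1 : d < 1) :
    AntitoneOn (fun x : ℝ => (x + 1) ^ d - x ^ d) (Set.Ici (0:ℝ)) := by
  have hc : Continuous fun x : ℝ => x ^ d :=
    continuous_iff_continuousAt.2 fun x => Real.continuousAt_rpow_const x d (Or.inr hd0.le)
  have hderiv : ∀ x : ℝ, 0 < x →
      HasDerivAt (fun x : ℝ => (x + 1) ^ d - x ^ d)
        (d * (x + 1) ^ (d - 1) - d * x ^ (d - 1)) x := by
    intro x hx
    have h1 : HasDerivAt (fun x : ℝ => (x + 1) ^ d) (d * (x + 1) ^ (d - 1)) x := by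
      simpa using ((hasDerivAt_id x).add_const 1).rpow_const (Or.inl (by positivity : x + 1 ≠ 0))
    have h2 : HasDerivAt (fun x : ℝ => x ^ d) (d * x ^ (d - 1)) x := by
      simpa using (hasDerivAt_id x).rpow_const (Or.inl hx.ne')
    exact h1.sub h2
  apply antitoneOn_of_deriv_nonpos (convex_Ici 0)
  · exact ((hc.comp (continuous_id.add continuous_const)).sub hc).continuousOn
  · intro x hx
    rw [interior_Ici] at hx
    exact (hderiv x hx).differentiableAt.differentiableWithinAt
  · intro x hx
    rw [interior_Ici] at hx
    rw [(hderiv x hx).deriv]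
    have h : (x + 1) ^ (d - 1) ≤ x ^ (d - 1) :=
      Real.rpow_le_rpow_of_nonpos hx (by linarith) (by linarith)
    nlinarith [hd0.le]

private lemma bern_aux {d : ℝ} (hd0 : 0 < d) (hd1 : d < 1) (a : ℝ) (ha : 0 < a) :
    (a + 1) ^ d - a ^ d ≤ d * a ^ (d - 1) := by
  have hc : Continuous fun x : ℝ => x ^ d :=
    continuous_iff_continuousAt.2 fun x => Real.continuousAt_rpow_const x d (Or.inr hd0.le)
  obtain ⟨c, hc', hceq⟩ := exists_hasDerivAt_eq_slope (fun x : ℝ => x ^ d)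
    (fun x : ℝ => d * x ^ (d - 1)) (by linarith : a < a + 1)
    hc.continuousOn
    (fun x hx => by
      simpa using (hasDerivAt_id x).rpow_const (Or.inl (ne_of_gt (lt_trans ha hx.1))))
  have h1 : d * c ^ (d - 1) ≤ d * a ^ (d - 1) := by
    have := Real.rpow_le_rpow_of_nonpos ha hc'.1.le (by linarith : d - 1 ≤ 0)
    exact mul_le_mul_of_nonneg_left this hd0.le
  have h2 : (a + 1) ^ d - a ^ d = d * c ^ (d - 1) := by
    rw [hceq]; ring_nf
  linarith

private lemma summable_aux {d : ℝ} (hd0 : 0 < d) (hd12 : d < 1/2) :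
    Summable (fun k : ℕ => (((k : ℝ) + 2) ^ d - ((k : ℝ) + 1) ^ d) ^ 2) := by
  have hd1 : d < 1 := by linarith
  have hs : Summable (fun n : ℕ => ((n : ℝ)) ^ (2*d - 2)) :=
    Real.summable_nat_rpow.mpr (by linarith)
  have hs1 : Summable (fun n : ℕ => ((n : ℝ) + 1) ^ (2*d - 2)) := by
    have := (summable_nat_add_iff 1).2 hs
    simpa using this
  refine Summable.of_nonneg_of_le (fun m => sq_nonneg _) (fun m => ?_) (hs1.mul_left (d^2))
  have h1 : (0:ℝ) < (m:ℝ) + 1 := by positivity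
  have hb := bern_aux hd0 hd1 ((m:ℝ)+1) h1
  have hle : ((m : ℝ) + 2) ^ d - ((m:ℝ) + 1) ^ d ≤ d * ((m:ℝ)+1) ^ (d-1) := by
    have e : (m:ℝ) + 1 + 1 = (m:ℝ) + 2 := by ring
    rwa [e] at hb
  have hnn : 0 ≤ ((m : ℝ) + 2) ^ d - ((m:ℝ) + 1) ^ d := by
    have := Real.rpow_le_rpow (by positivity : (0:ℝ) ≤ (m:ℝ)+1)
      (by linarith : (m:ℝ)+1 ≤ (m:ℝ)+2) hd0.le
    linarith
  calc (((m : ℝ) + 2) ^ d - ((m : ℝ) + 1) ^ d) ^ 2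
      ≤ (d * ((m:ℝ)+1) ^ (d-1)) ^ 2 := by
        exact pow_le_pow_left₀ hnn hle 2
    _ = d^2 * (((m:ℝ)+1) ^ (d-1))^2 := by ring
    _ = d^2 * ((m:ℝ)+1) ^ (2*d-2) := by
        rw [← Real.rpow_natCast (((m:ℝ)+1) ^ (d-1)) 2, ← Real.rpow_mul h1.le]
        congr 1
        push_cast
        ring

/-- for `d ∈ (0,1/2)` and every `u ∈ [0,1]`,
`∑_{k∈ℤ} ((u+k)₊^d + (u+k−2)₊^d − 2(u+k−1)₊^d)² ≤ 1 + (2^d+2)² + ∑_{k≥2} (k^d − (k−1)^d)²`,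
the bound being finite; in particular
`u ↦ ∑_{k∈ℤ} ((u+k)₊^d + (u+k−2)₊^d − 2(u+k−1)₊^d)²` is essentially bounded on `[0,1]`. -/
theorem statement18 (d : ℝ) (hd : d ∈ Set.Ioo (0 : ℝ) (1 / 2)) :
    (∀ u ∈ Set.Icc (0 : ℝ) 1,
        (∑' k : ℤ, (max (u + (k : ℝ)) 0 ^ d + max (u + (k : ℝ) - 2) 0 ^ d
            - 2 * max (u + (k : ℝ) - 1) 0 ^ d) ^ 2)
          ≤ 1 + ((2 : ℝ) ^ d + 2) ^ 2
            + ∑' k : ℕ, (((k : ℝ) + 2) ^ d - ((k : ℝ) + 1) ^ d) ^ 2)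
    ∧ Summable (fun k : ℕ => (((k : ℝ) + 2) ^ d - ((k : ℝ) + 1) ^ d) ^ 2)
    ∧ ∃ B : ℝ, ∀ᵐ u ∂(volume.restrict (Set.Icc (0 : ℝ) 1)),
        (∑' k : ℤ, (max (u + (k : ℝ)) 0 ^ d + max (u + (k : ℝ) - 2) 0 ^ d
            - 2 * max (u + (k : ℝ) - 1) 0 ^ d) ^ 2) ≤ B := by
  obtain ⟨hd0, hd12⟩ := hd
  have hd1 : d < 1 := by linarith
  have hanti := anti_aux hd0 hd1
  have hsum2 := summable_aux hd0 hd12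
  have h2d : (2:ℝ) ^ d ≤ 2 := by
    calc (2:ℝ) ^ d ≤ (2:ℝ) ^ (1:ℝ) := Real.rpow_le_rpow_of_exponent_le one_le_two hd1.le
    _ = 2 := Real.rpow_one 2
  have h2d1 : (1:ℝ) ≤ (2:ℝ) ^ d := by
    calc (1:ℝ) = (2:ℝ) ^ (0:ℝ) := (Real.rpow_zero 2).symm
    _ ≤ (2:ℝ) ^ d := Real.rpow_le_rpow_of_exponent_le one_le_two hd0.le
  have main : ∀ u ∈ Set.Icc (0 : ℝ) 1,
      (∑' k : ℤ, (max (u + (k : ℝ)) 0 ^ d + max (u + (k : ℝ) - 2) 0 ^ d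
          - 2 * max (u + (k : ℝ) - 1) 0 ^ d) ^ 2)
        ≤ 1 + ((2 : ℝ) ^ d + 2) ^ 2
          + ∑' k : ℕ, (((k : ℝ) + 2) ^ d - ((k : ℝ) + 1) ^ d) ^ 2 := by
    intro u hu
    obtain ⟨hu0, hu1⟩ := hu
    set F : ℤ → ℝ := fun k => (max (u + (k : ℝ)) 0 ^ d + max (u + (k : ℝ) - 2) 0 ^ d
        - 2 * max (u + (k : ℝ) - 1) 0 ^ d) ^ 2 with hF
    set G : ℕ → ℝ := fun n => (max (u + (n : ℝ)) 0 ^ d + max (u + (n : ℝ) - 2) 0 ^ d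
        - 2 * max (u + (n : ℝ) - 1) 0 ^ d) ^ 2 with hG
    -- key termwise bound
    have key : ∀ m : ℕ, G (m + 3) ≤ (((m : ℝ) + 2) ^ d - ((m : ℝ) + 1) ^ d) ^ 2 := by
      intro m
      have hm0 : (0:ℝ) ≤ (m:ℝ) := Nat.cast_nonneg m
      have hGm : G (m + 3) = ((u + (m:ℝ) + 3) ^ d + (u + (m:ℝ) + 1) ^ d
          - 2 * (u + (m:ℝ) + 2) ^ d) ^ 2 := by
        have e1 : u + ((m + 3 : ℕ) : ℝ) = u + (m:ℝ) + 3 := by push_cast; ring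
        have e2 : u + (m:ℝ) + 3 - 2 = u + (m:ℝ) + 1 := by ring
        have e3 : u + (m:ℝ) + 3 - 1 = u + (m:ℝ) + 2 := by ring
        simp only [hG, e1, e2, e3,
          max_eq_left (by linarith : (0:ℝ) ≤ u + (m:ℝ) + 3),
          max_eq_left (by linarith : (0:ℝ) ≤ u + (m:ℝ) + 1),
          max_eq_left (by linarith : (0:ℝ) ≤ u + (m:ℝ) + 2)]
      have hA : (u + (m:ℝ) + 3) ^ d - (u + (m:ℝ) + 2) ^ d
          ≤ (u + (m:ℝ) + 2) ^ d - (u + (m:ℝ) + 1) ^ d := by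
        have h := hanti (Set.mem_Ici.2 (by linarith : (0:ℝ) ≤ u + (m:ℝ) + 1))
          (Set.mem_Ici.2 (by linarith : (0:ℝ) ≤ u + (m:ℝ) + 2)) (by linarith)
        have ea : u + (m:ℝ) + 2 + 1 = u + (m:ℝ) + 3 := by ring
        have eb : u + (m:ℝ) + 1 + 1 = u + (m:ℝ) + 2 := by ring
        simp only [ea, eb] at h
        exact h
      have hB : (u + (m:ℝ) + 2) ^ d - (u + (m:ℝ) + 1) ^ d
          ≤ ((m:ℝ) + 2) ^ d - ((m:ℝ) + 1) ^ d := by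
        have h := hanti (Set.mem_Ici.2 (by linarith : (0:ℝ) ≤ (m:ℝ) + 1))
          (Set.mem_Ici.2 (by linarith : (0:ℝ) ≤ u + (m:ℝ) + 1))
          (by linarith : (m:ℝ) + 1 ≤ u + (m:ℝ) + 1)
        have ea : u + (m:ℝ) + 1 + 1 = u + (m:ℝ) + 2 := by ring
        have eb : (m:ℝ) + 1 + 1 = (m:ℝ) + 2 := by ring
        simp only [ea, eb] at h
        exact h
      have hA0 : (u + (m:ℝ) + 2) ^ d ≤ (u + (m:ℝ) + 3) ^ d :=
        Real.rpow_le_rpow (by linarith) (by linarith) hd0.le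
      have hg0 : 0 ≤ ((m:ℝ) + 2) ^ d - ((m:ℝ) + 1) ^ d := by
        have := Real.rpow_le_rpow (by linarith : (0:ℝ) ≤ (m:ℝ) + 1)
          (by linarith : (m:ℝ) + 1 ≤ (m:ℝ) + 2) hd0.le
        linarith
      rw [hGm]
      exact sq_le_sq' (by linarith) (by linarith)
    have hsub : Summable fun m : ℕ => G (m + 3) :=
      Summable.of_nonneg_of_le (fun m => sq_nonneg _) key hsum2
    have hGsum : Summable G := (summable_nat_add_iff 3).1 hsub
    have hFnat : ∀ n : ℕ, F (n : ℤ) = G n := by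
      intro n; simp only [hF, hG, Int.cast_natCast]
    have hFneg : ∀ n : ℕ, F (-((n : ℤ) + 1)) = 0 := by
      intro n
      have hn : ((-((n : ℤ) + 1) : ℤ) : ℝ) = -((n:ℝ) + 1) := by push_cast; ring
      have hn0 : (0:ℝ) ≤ (n:ℝ) := Nat.cast_nonneg n
      simp only [hF, hn]
      rw [max_eq_right (by linarith : u + -((n:ℝ) + 1) ≤ 0),
        max_eq_right (by linarith : u + -((n:ℝ) + 1) - 2 ≤ 0),
        max_eq_right (by linarith : u + -((n:ℝ) + 1) - 1 ≤ 0),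
        Real.zero_rpow hd0.ne']
      norm_num
    have hFnatsum : Summable fun n : ℕ => F (n : ℤ) :=
      hGsum.congr fun n => (hFnat n).symm
    have hFnegsum : Summable fun n : ℕ => F (-((n : ℤ) + 1)) := by
      have : (fun n : ℕ => F (-((n : ℤ) + 1))) = fun _ => (0:ℝ) := funext hFneg
      rw [this]; exact summable_zero
    have hFtsum : ∑' k : ℤ, F k = ∑' n : ℕ, G n := by
      rw [tsum_of_nat_of_neg_add_one hFnatsum hFnegsum]
      have h1 : (∑' n : ℕ, F (n : ℤ)) = ∑' n : ℕ, G n := tsum_congr hFnat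
      have h2 : (∑' n : ℕ, F (-((n : ℤ) + 1))) = 0 := by
        rw [tsum_congr hFneg]; exact tsum_zero
      rw [h1, h2, add_zero]
    -- bounds on G 0, G 1, G 2
    have hG0 : G 0 ≤ 1 := by
      simp only [hG, Nat.cast_zero, add_zero]
      rw [max_eq_left hu0, max_eq_right (by linarith : u - 2 ≤ 0),
        max_eq_right (by linarith : u - 1 ≤ 0), Real.zero_rpow hd0.ne']
      have h1 : u ^ d ≤ 1 := Real.rpow_le_one hu0 hu1 hd0.le
      have h0 : 0 ≤ u ^ d := Real.rpow_nonneg hu0 d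
      nlinarith
    have hG1 : G 1 ≤ 4 := by
      simp only [hG, Nat.cast_one]
      rw [max_eq_left (by linarith : (0:ℝ) ≤ u + 1),
        max_eq_right (by linarith : u + 1 - 2 ≤ 0),
        max_eq_left (by linarith : (0:ℝ) ≤ u + 1 - 1),
        Real.zero_rpow hd0.ne',
        show u + 1 - 1 = u from by ring]
      have ha : (u + 1) ^ d ≤ (2:ℝ) ^ d :=
        Real.rpow_le_rpow (by linarith) (by linarith) hd0.le
      have ha0 : 0 ≤ (u + 1) ^ d := Real.rpow_nonneg (by linarith) d
      have hb : u ^ d ≤ 1 := Real.rpow_le_one hu0 hu1 hd0.le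
      have hb0 : 0 ≤ u ^ d := Real.rpow_nonneg hu0 d
      have := sq_le_sq' (by linarith : -(2:ℝ) ≤ (u + 1) ^ d + 0 - 2 * u ^ d)
        (by linarith : (u + 1) ^ d + 0 - 2 * u ^ d ≤ 2)
      calc ((u + 1) ^ d + 0 - 2 * u ^ d) ^ 2 ≤ (2:ℝ) ^ 2 := this
      _ = 4 := by norm_num
    have hG2 : G 2 ≤ 4 := by
      simp only [hG, Nat.cast_ofNat]
      rw [max_eq_left (by linarith : (0:ℝ) ≤ u + 2),
        max_eq_left (by linarith : (0:ℝ) ≤ u + 2 - 2),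
        max_eq_left (by linarith : (0:ℝ) ≤ u + 2 - 1),
        show u + 2 - 2 = u from by ring, show u + 2 - 1 = u + 1 from by ring]
      have hA : (u + 2) ^ d - (u + 1) ^ d ≤ (u + 1) ^ d - u ^ d := by
        have h := hanti (Set.mem_Ici.2 hu0) (Set.mem_Ici.2 (by linarith : (0:ℝ) ≤ u + 1))
          (by linarith : u ≤ u + 1)
        have ea : u + 1 + 1 = u + 2 := by ring
        simp only [ea] at h
        exact h
      have hA0 : (u + 1) ^ d ≤ (u + 2) ^ d :=
        Real.rpow_le_rpow (by linarith) (by linarith) hd0.le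
      have ha : (u + 1) ^ d ≤ (2:ℝ) ^ d :=
        Real.rpow_le_rpow (by linarith) (by linarith) hd0.le
      have hb0 : 0 ≤ u ^ d := Real.rpow_nonneg hu0 d
      have := sq_le_sq' (by linarith : -(2:ℝ) ≤ (u + 2) ^ d + u ^ d - 2 * (u + 1) ^ d)
        (by linarith : (u + 2) ^ d + u ^ d - 2 * (u + 1) ^ d ≤ 2)
      calc ((u + 2) ^ d + u ^ d - 2 * (u + 1) ^ d) ^ 2 ≤ (2:ℝ) ^ 2 := this
      _ = 4 := by norm_num
    have hrange : ∑ i ∈ Finset.range 3, G i = G 0 + G 1 + G 2 := by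
      rw [Finset.sum_range_succ, Finset.sum_range_succ, Finset.sum_range_one]
    have hsplit : ∑' n : ℕ, G n = (G 0 + G 1 + G 2) + ∑' m : ℕ, G (m + 3) := by
      rw [← Summable.sum_add_tsum_nat_add 3 hGsum, hrange]
    have htail : ∑' m : ℕ, G (m + 3)
        ≤ ∑' k : ℕ, (((k : ℝ) + 2) ^ d - ((k : ℝ) + 1) ^ d) ^ 2 :=
      Summable.tsum_le_tsum key hsub hsum2
    calc ∑' k : ℤ, F k = ∑' n : ℕ, G n := hFtsum
    _ = (G 0 + G 1 + G 2) + ∑' m : ℕ, G (m + 3) := hsplit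
    _ ≤ 1 + ((2:ℝ) ^ d + 2) ^ 2
        + ∑' k : ℕ, (((k : ℝ) + 2) ^ d - ((k : ℝ) + 1) ^ d) ^ 2 := by
      nlinarith [hG0, hG1, hG2, htail, h2d1]
  refine ⟨main, hsum2, ⟨1 + ((2 : ℝ) ^ d + 2) ^ 2
    + ∑' k : ℕ, (((k : ℝ) + 2) ^ d - ((k : ℝ) + 1) ^ d) ^ 2, ?_⟩⟩
  exact (ae_restrict_mem measurableSet_Icc).mono main
end
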